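/- arXiv:1908.06000 — 3 statements merged into one kernel-verified Lean document; each statement's English description precedes it below -/
import Mathlib

section
/- For every integer n ≥ 2 and every c₀ ∈ (0,1) there exist constants C > 0 and δ₀ ∈ (0, 1/100), depending only on n and c₀, such that for every δ ∈ (0, δ₀) and every integer N with 1 ≤ N ≤ δ^{2−2n}, there exists a finite essentially distinct family of δ-tubes in ℝⁿ of cardinality at least N whose union has Lebesgue measure at most C · √N · δ^{n−1}. -/
open MeasureTheory Set
open scoped ENNReal

noncomputable section

/-- The `δ`-tube in `ℝⁿ` with center `a` and direction `e`. -/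
def euclTube (n : ℕ) (δ : ℝ) (a e : EuclideanSpace ℝ (Fin n)) :
    Set (EuclideanSpace ℝ (Fin n)) :=
  {x | |(inner ℝ (x - a) e : ℝ)| ≤ 1 / 2 ∧
       ‖(x - a) - (inner ℝ (x - a) e : ℝ) • e‖ ≤ δ / 2}

/-- An indexed family of `δ`-tubes (given by centers `a i` and directions `e i`) is
essentially distinct with parameter `c₀`. -/
def EssentiallyDistinct (n : ℕ) (δ c₀ : ℝ) {ι : Type*}
    (a e : ι → EuclideanSpace ℝ (Fin n)) : Prop :=
  ∀ i j, i ≠ j →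
    volume (euclTube n δ (a i) (e i) ∩ euclTube n δ (a j) (e j)) ≤
      ENNReal.ofReal c₀ * volume (euclTube n δ (a i) (e i))





variable {n : ℕ}


def slab (n : ℕ) (δ : ℝ) (a e : EuclideanSpace ℝ (Fin n)) (s : Set ℝ) :
    Set (EuclideanSpace ℝ (Fin n)) :=
  {x | (inner ℝ (x - a) e : ℝ) ∈ s ∧ ‖(x - a) - (inner ℝ (x - a) e : ℝ) • e‖ ≤ δ / 2}

lemma measurableSet_slab (δ : ℝ) (a e : EuclideanSpace ℝ (Fin n)) {s : Set ℝ}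
    (hs : MeasurableSet s) : MeasurableSet (slab n δ a e s) := by
  have h1 : Continuous fun x : EuclideanSpace ℝ (Fin n) => (inner ℝ (x - a) e : ℝ) :=
    (continuous_id.sub continuous_const).inner continuous_const
  have h2 : Continuous fun x : EuclideanSpace ℝ (Fin n) =>
      ‖(x - a) - (inner ℝ (x - a) e : ℝ) • e‖ :=
    ((continuous_id.sub continuous_const).sub (h1.smul continuous_const)).norm
  exact (h1.measurable hs).inter (isClosed_le h2 continuous_const).measurableSet

lemma slab_mono (δ : ℝ) (a e : EuclideanSpace ℝ (Fin n)) {s t : Set ℝ} (h : s ⊆ t) :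
    slab n δ a e s ⊆ slab n δ a e t := fun x hx => ⟨h hx.1, hx.2⟩

lemma slab_union (δ : ℝ) (a e : EuclideanSpace ℝ (Fin n)) (s t : Set ℝ) :
    slab n δ a e (s ∪ t) = slab n δ a e s ∪ slab n δ a e t := by
  ext x
  show (inner ℝ (x-a) e : ℝ) ∈ s ∪ t ∧ _ ↔ _
  rw [Set.mem_union]
  constructor
  · rintro ⟨h | h, hp⟩
    exacts [Or.inl ⟨h, hp⟩, Or.inr ⟨h, hp⟩]
  · rintro (⟨h, hp⟩ | ⟨h, hp⟩)
    exacts [⟨Or.inl h, hp⟩, ⟨Or.inr h, hp⟩]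

lemma slab_disjoint (δ : ℝ) (a e : EuclideanSpace ℝ (Fin n)) {s t : Set ℝ}
    (h : Disjoint s t) : Disjoint (slab n δ a e s) (slab n δ a e t) := by
  rw [Set.disjoint_left] at h ⊢
  exact fun x hx hx' => h hx.1 hx'.1

lemma preimage_slab (he : ‖e‖ = 1) (a : EuclideanSpace ℝ (Fin n)) (δ r : ℝ) (s : Set ℝ) :
    (fun x => x + r • e) ⁻¹' slab n δ a e s = slab n δ a e ((· + r) ⁻¹' s) := by
  have hee : (inner ℝ e e : ℝ) = 1 := by
    rw [real_inner_self_eq_norm_sq, he]; norm_num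
  ext x
  have h1 : (inner ℝ (x + r • e - a) e : ℝ) = (inner ℝ (x - a) e : ℝ) + r := by
    have : x + r • e - a = (x - a) + r • e := by abel
    rw [this, inner_add_left, real_inner_smul_left, hee, mul_one]
  constructor
  · rintro ⟨hs, hp⟩
    refine ⟨by simpa [h1] using hs, ?_⟩
    have : x + r • e - a - (inner ℝ (x + r • e - a) e : ℝ) • e
        = (x - a) - (inner ℝ (x - a) e : ℝ) • e := by
      rw [h1, add_smul]; abel
    rwa [this] at hp
  · rintro ⟨hs, hp⟩
    refine ⟨by simpa [h1] using hs, ?_⟩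
    have : x + r • e - a - (inner ℝ (x + r • e - a) e : ℝ) • e
        = (x - a) - (inner ℝ (x - a) e : ℝ) • e := by
      rw [h1, add_smul]; abel
    rwa [this]

lemma volume_slab_translate (he : ‖e‖ = 1) (a : EuclideanSpace ℝ (Fin n)) (δ r : ℝ)
    (s : Set ℝ) :
    volume (slab n δ a e ((· + r) ⁻¹' s)) = volume (slab n δ a e s) := by
  rw [← preimage_slab he a δ r s]
  exact measure_preimage_add_right volume _ _

lemma volume_hyperplane (he : ‖e‖ = 1) (a : EuclideanSpace ℝ (Fin n)) (c : ℝ) :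
    volume {x : EuclideanSpace ℝ (Fin n) | (inner ℝ (x - a) e : ℝ) = c} = 0 := by
  have hee : (inner ℝ e e : ℝ) = 1 := by
    rw [real_inner_self_eq_norm_sq, he]; norm_num
  have hset : {x : EuclideanSpace ℝ (Fin n) | (inner ℝ (x - a) e : ℝ) = c}
      = (fun y => y + (a + c • e)) '' ((ℝ ∙ e)ᗮ : Set (EuclideanSpace ℝ (Fin n))) := by
    ext x
    simp only [Set.mem_image, SetLike.mem_coe,
      Submodule.mem_orthogonal_singleton_iff_inner_left, Set.mem_setOf_eq]
    constructor
    · intro hx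
      refine ⟨x - a - c • e, ?_, by abel⟩
      rw [inner_sub_left, real_inner_smul_left, hee, hx]; ring
    · rintro ⟨y, hy, rfl⟩
      have : y + (a + c • e) - a = y + c • e := by abel
      rw [this, inner_add_left, real_inner_smul_left, hee, hy]; ring
  rw [hset]
  have : (fun y : EuclideanSpace ℝ (Fin n) => y + (a + c • e)) '' ((ℝ ∙ e)ᗮ : Set _)
      = (fun y => y + -(a + c • e)) ⁻¹' ((ℝ ∙ e)ᗮ : Set _) := by
    ext x
    simp only [Set.mem_image, Set.mem_preimage]
    constructor
    · rintro ⟨y, hy, rfl⟩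
      have : y + (a + c • e) + -(a + c • e) = y := by abel
      rwa [this]
    · intro hx; exact ⟨x + -(a + c • e), hx, by abel⟩
  rw [this, measure_preimage_add_right]
  refine Measure.addHaar_submodule _ _ (fun h => ?_)
  have : e ∈ (ℝ ∙ e)ᗮ := h ▸ Submodule.mem_top
  rw [Submodule.mem_orthogonal_singleton_iff_inner_left, hee] at this
  norm_num at this

variable {δ : ℝ} {a e : EuclideanSpace ℝ (Fin n)}

lemma euclTube_eq_slab (n : ℕ) (δ : ℝ) (a e : EuclideanSpace ℝ (Fin n)) :
    euclTube n δ a e = slab n δ a e (Icc (-(1/2)) (1/2)) := by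
  ext x
  simp only [euclTube, slab, Set.mem_setOf_eq, Set.mem_Icc, abs_le]

lemma mul_volume_slab_le (he : ‖e‖ = 1) {ℓ : ℝ} (hℓ : 0 ≤ ℓ) {K : ℕ}
    (hKl : (K : ℝ) * (2 * ℓ) ≤ 1) (r : ℝ) :
    (K : ℝ≥0∞) * volume (slab n δ a e (Icc (r - ℓ) (r + ℓ))) ≤ volume (euclTube n δ a e) := by
  classical
  set V := volume (slab n δ a e (Icc (r - ℓ) (r + ℓ))) with hV
  -- the `k`-th translated half-open slab
  set S : ℕ → Set (EuclideanSpace ℝ (Fin n)) := fun k =>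
    slab n δ a e (Ico (-(1/2) + 2*ℓ*k) (-(1/2) + 2*ℓ*k + 2*ℓ)) with hS
  have hVle : ∀ k : ℕ, k < K → V ≤ volume (S k) := by
    intro k hk
    set t : ℝ := -(1/2) + 2*ℓ*k + ℓ with ht
    have htrans : V = volume (slab n δ a e (Icc (t - ℓ) (t + ℓ))) := by
      have : (· + (r - t)) ⁻¹' Icc (r - ℓ) (r + ℓ) = Icc (t - ℓ) (t + ℓ) := by
        ext z; simp only [Set.mem_preimage, Set.mem_Icc]; constructor <;> intro h <;>
          constructor <;> linarith [h.1, h.2]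
      rw [hV, ← this, volume_slab_translate he]
    have hsub : slab n δ a e (Icc (t - ℓ) (t + ℓ)) ⊆
        S k ∪ {x | (inner ℝ (x - a) e : ℝ) = t + ℓ} := by
      intro x hx
      rcases hx with ⟨hx1, hx2⟩
      rw [Set.mem_Icc] at hx1
      obtain ⟨h1, h2⟩ := hx1
      rw [ht] at h1 h2
      rcases eq_or_lt_of_le h2 with h | h
      · right
        rw [Set.mem_setOf_eq, h, ht]
      · refine Or.inl ⟨?_, hx2⟩
        rw [Set.mem_Ico]
        exact ⟨by linarith, by linarith⟩
    calc V = volume (slab n δ a e (Icc (t - ℓ) (t + ℓ))) := htrans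
      _ ≤ volume (S k ∪ {x | (inner ℝ (x - a) e : ℝ) = t + ℓ}) := measure_mono hsub
      _ ≤ volume (S k) + volume {x : EuclideanSpace ℝ (Fin n) | (inner ℝ (x - a) e : ℝ) = t + ℓ} :=
          measure_union_le _ _
      _ = volume (S k) := by rw [volume_hyperplane he, add_zero]
  have hdisj : (↑(Finset.range K) : Set ℕ).Pairwise (Function.onFun Disjoint S) := by
    intro i _ j _ hij
    refine slab_disjoint _ _ _ ?_
    rw [Set.disjoint_left]
    intro z hz hz'
    simp only [Set.mem_Ico] at hz hz'
    rcases lt_or_gt_of_ne hij with h | h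
    · have : (i : ℝ) + 1 ≤ (j : ℝ) := by exact_mod_cast h
      nlinarith [hz.1, hz.2, hz'.1, hz'.2]
    · have : (j : ℝ) + 1 ≤ (i : ℝ) := by exact_mod_cast h
      nlinarith [hz.1, hz.2, hz'.1, hz'.2]
  have hsubT : ∀ k ∈ Finset.range K, S k ⊆ euclTube n δ a e := by
    intro k hk
    rw [euclTube_eq_slab]
    apply slab_mono
    intro z hz
    simp only [Set.mem_Ico] at hz
    simp only [Set.mem_Icc]
    have hk' : (k : ℝ) + 1 ≤ (K : ℝ) := by exact_mod_cast Finset.mem_range.1 hk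
    constructor
    · nlinarith [hz.1, hz.2]
    · nlinarith [hz.1, hz.2]
  calc (K : ℝ≥0∞) * V = ∑ k ∈ Finset.range K, V := by
        rw [Finset.sum_const, Finset.card_range, nsmul_eq_mul]
    _ ≤ ∑ k ∈ Finset.range K, volume (S k) :=
        Finset.sum_le_sum fun k hk => hVle k (Finset.mem_range.1 hk)
    _ = volume (⋃ k ∈ Finset.range K, S k) :=
        (measure_biUnion_finset hdisj fun k _ => measurableSet_slab _ _ _ measurableSet_Ico).symm
    _ ≤ volume (euclTube n δ a e) := by
        refine measure_mono ?_
        exact Set.iUnion₂_subset hsubT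

variable {b e' : EuclideanSpace ℝ (Fin n)}

-- projection shrinks norm
lemma norm_proj_le (he : ‖e‖ = 1) (w : EuclideanSpace ℝ (Fin n)) :
    ‖w - (inner ℝ w e : ℝ) • e‖ ≤ ‖w‖ := by
  have h : ‖w - (inner ℝ w e : ℝ) • e‖ ^ 2 ≤ ‖w‖ ^ 2 := by
    rw [norm_sub_sq_real]
    have h1 : ‖(inner ℝ w e : ℝ) • e‖ ^ 2 = (inner ℝ w e : ℝ) ^ 2 := by
      rw [norm_smul, Real.norm_eq_abs, he, mul_one, sq_abs]
    have h2 : (inner ℝ w ((inner ℝ w e : ℝ) • e) : ℝ) = (inner ℝ w e : ℝ) ^ 2 := by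
      rw [real_inner_smul_right]; ring
    rw [h1, h2]; nlinarith [sq_nonneg (inner ℝ w e : ℝ)]
  calc ‖w - (inner ℝ w e : ℝ) • e‖ = Real.sqrt (‖w - (inner ℝ w e : ℝ) • e‖ ^ 2) :=
        (Real.sqrt_sq (norm_nonneg _)).symm
    _ ≤ Real.sqrt (‖w‖ ^ 2) := Real.sqrt_le_sqrt h
    _ = ‖w‖ := Real.sqrt_sq (norm_nonneg _)

lemma key_ineq (hδ : 0 ≤ δ) (he : ‖e‖ = 1) (he' : ‖e'‖ = 1)
    {x y : EuclideanSpace ℝ (Fin n)}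
    (hx : x ∈ euclTube n δ a e ∩ euclTube n δ b e')
    (hy : y ∈ euclTube n δ a e ∩ euclTube n δ b e') :
    |(inner ℝ (x - a) e : ℝ) - (inner ℝ (y - a) e : ℝ)| *
      Real.sqrt (1 - (inner ℝ e e' : ℝ) ^ 2) ≤ 2 * δ := by
  set d : ℝ := inner ℝ e e' with hd
  set α : ℝ := (inner ℝ (x - a) e : ℝ) - (inner ℝ (y - a) e : ℝ) with hα
  set β : ℝ := (inner ℝ (x - b) e' : ℝ) - (inner ℝ (y - b) e' : ℝ) with hβ
  set w : EuclideanSpace ℝ (Fin n) := α • e - β • e' with hw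
  have hwval : w = ((x - b) - (inner ℝ (x - b) e' : ℝ) • e' - ((y - b) - (inner ℝ (y - b) e' : ℝ) • e'))
      - ((x - a) - (inner ℝ (x - a) e : ℝ) • e - ((y - a) - (inner ℝ (y - a) e : ℝ) • e)) := by
    rw [hw, hα, hβ, sub_smul, sub_smul]
    abel
  have hwnorm : ‖w‖ ≤ 2 * δ := by
    rw [hwval]
    have t1 := hx.1.2; have t2 := hy.1.2; have t3 := hx.2.2; have t4 := hy.2.2
    calc ‖_ - _‖ ≤ ‖(x - b) - (inner ℝ (x - b) e' : ℝ) • e' - ((y - b) - (inner ℝ (y - b) e' : ℝ) • e')‖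
          + ‖(x - a) - (inner ℝ (x - a) e : ℝ) • e - ((y - a) - (inner ℝ (y - a) e : ℝ) • e)‖ :=
        norm_sub_le _ _
      _ ≤ (‖(x - b) - (inner ℝ (x - b) e' : ℝ) • e'‖ + ‖(y - b) - (inner ℝ (y - b) e' : ℝ) • e'‖)
          + (‖(x - a) - (inner ℝ (x - a) e : ℝ) • e‖ + ‖(y - a) - (inner ℝ (y - a) e : ℝ) • e‖) :=
        add_le_add (norm_sub_le _ _) (norm_sub_le _ _)
      _ ≤ (δ/2 + δ/2) + (δ/2 + δ/2) := by
        exact add_le_add (add_le_add t3 t4) (add_le_add t1 t2)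
      _ = 2 * δ := by ring
  have hkey : w - (inner ℝ w e' : ℝ) • e' = α • (e - d • e') := by
    have hiw : (inner ℝ w e' : ℝ) = α * d - β := by
      rw [hw, inner_sub_left, real_inner_smul_left, real_inner_smul_left,
        real_inner_self_eq_norm_sq, he', ← hd]
      ring
    rw [hiw, hw, smul_sub, smul_smul, sub_smul, mul_comm α d]
    module
  have hnorm_ed : ‖e - d • e'‖ = Real.sqrt (1 - d ^ 2) := by
    have : ‖e - d • e'‖ ^ 2 = 1 - d ^ 2 := by
      rw [norm_sub_sq_real, norm_smul, real_inner_smul_right, he, Real.norm_eq_abs]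
      rw [he']
      rw [← hd]
      nlinarith [sq_abs d]
    rw [← this, Real.sqrt_sq (norm_nonneg _)]
  calc |α| * Real.sqrt (1 - d ^ 2) = ‖α • (e - d • e')‖ := by
        rw [norm_smul, Real.norm_eq_abs, hnorm_ed]
    _ = ‖w - (inner ℝ w e' : ℝ) • e'‖ := by rw [hkey]
    _ ≤ ‖w‖ := norm_proj_le he' w
    _ ≤ 2 * δ := hwnorm


lemma tube_disjoint_parallel (hab : δ < ‖(a - b) - (inner ℝ (a - b) e : ℝ) • e‖) :
    euclTube n δ a e ∩ euclTube n δ b e = ∅ := by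
  rw [Set.eq_empty_iff_forall_notMem]
  rintro x ⟨⟨-, hx1⟩, -, hx2⟩
  have hid : (a - b) - (inner ℝ (a - b) e : ℝ) • e
      = ((x - b) - (inner ℝ (x - b) e : ℝ) • e) - ((x - a) - (inner ℝ (x - a) e : ℝ) • e) := by
    have h1 : (inner ℝ (a - b) e : ℝ) = (inner ℝ (x - b) e : ℝ) - (inner ℝ (x - a) e : ℝ) := by
      rw [← inner_sub_left]
      congr 1
      abel
    rw [h1, sub_smul]
    abel
  have : ‖(a - b) - (inner ℝ (a - b) e : ℝ) • e‖ ≤ δ := by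
    rw [hid]
    calc ‖_ - _‖ ≤ ‖(x - b) - (inner ℝ (x - b) e : ℝ) • e‖ + ‖(x - a) - (inner ℝ (x - a) e : ℝ) • e‖ :=
          norm_sub_le _ _
      _ ≤ δ/2 + δ/2 := add_le_add hx2 hx1
      _ = δ := by ring
  linarith

lemma vol_inter_le {c₀ : ℝ} (hδ : 0 < δ) (hc₀ : 0 < c₀) (he : ‖e‖ = 1) (he' : ‖e'‖ = 1)
    (hs4 : 4 * δ * (⌈1/c₀⌉₊ : ℝ) ≤ Real.sqrt (1 - (inner ℝ e e' : ℝ) ^ 2)) :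
    volume (euclTube n δ a e ∩ euclTube n δ b e') ≤
      ENNReal.ofReal c₀ * volume (euclTube n δ a e) := by
  set K : ℕ := ⌈1/c₀⌉₊ with hK
  have hK1 : 1 ≤ K := Nat.one_le_iff_ne_zero.2 (by
    intro h
    rw [hK] at h
    have := Nat.ceil_eq_zero.1 h
    have : (0:ℝ) < 1/c₀ := by positivity
    linarith)
  have hKpos : (0:ℝ) < K := by exact_mod_cast hK1
  set s : ℝ := Real.sqrt (1 - (inner ℝ e e' : ℝ) ^ 2) with hs
  have hspos : 0 < s := lt_of_lt_of_le (by positivity) hs4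
  rcases Set.eq_empty_or_nonempty (euclTube n δ a e ∩ euclTube n δ b e') with hemp | ⟨y, hy⟩
  · rw [hemp]; simp
  set ℓ : ℝ := 2 * δ / s with hℓdef
  have hℓ : 0 ≤ ℓ := by positivity
  set r : ℝ := (inner ℝ (y - a) e : ℝ) with hr
  have hsub : euclTube n δ a e ∩ euclTube n δ b e' ⊆ slab n δ a e (Icc (r - ℓ) (r + ℓ)) := by
    intro x hx
    have hkey := key_ineq (le_of_lt hδ) he he' hx hy
    rw [← hs, ← hr] at hkey
    have habs : |(inner ℝ (x - a) e : ℝ) - r| ≤ ℓ := by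
      rw [hℓdef, le_div_iff₀ hspos]
      exact hkey
    rw [abs_le] at habs
    exact ⟨Set.mem_Icc.2 ⟨by linarith [habs.1], by linarith [habs.2]⟩, hx.1.2⟩
  have hKl : (K : ℝ) * (2 * ℓ) ≤ 1 := by
    have h4 : (K:ℝ) * (2 * ℓ) = (4 * δ * (K:ℝ)) / s := by
      rw [hℓdef]; field_simp; ring
    rw [h4, div_le_one hspos]
    exact hs4
  have hmain := mul_volume_slab_le (a := a) (δ := δ) he hℓ hKl r
  have h1 : volume (euclTube n δ a e ∩ euclTube n δ b e') ≤
      volume (slab n δ a e (Icc (r - ℓ) (r + ℓ))) := measure_mono hsub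
  have h2 : volume (slab n δ a e (Icc (r - ℓ) (r + ℓ))) ≤
      (K : ℝ≥0∞)⁻¹ * volume (euclTube n δ a e) := by
    have hK0 : (K : ℝ≥0∞) ≠ 0 := by
      simp only [ne_eq, Nat.cast_eq_zero]
      omega
    have hKtop : (K : ℝ≥0∞) ≠ ⊤ := ENNReal.natCast_ne_top K
    calc volume (slab n δ a e (Icc (r - ℓ) (r + ℓ)))
        = (K : ℝ≥0∞)⁻¹ * ((K : ℝ≥0∞) * volume (slab n δ a e (Icc (r - ℓ) (r + ℓ)))) := by
          rw [← mul_assoc, ENNReal.inv_mul_cancel hK0 hKtop, one_mul]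
      _ ≤ (K : ℝ≥0∞)⁻¹ * volume (euclTube n δ a e) := mul_le_mul_right hmain _
  have h3 : (K : ℝ≥0∞)⁻¹ ≤ ENNReal.ofReal c₀ := by
    have : ((K : ℝ≥0∞))⁻¹ = ENNReal.ofReal ((K : ℝ)⁻¹) := by
      rw [ENNReal.ofReal_inv_of_pos hKpos, ENNReal.ofReal_natCast]
    rw [this]
    apply ENNReal.ofReal_le_ofReal
    have hK' : 1/c₀ ≤ (K : ℝ) := Nat.le_ceil _
    have h := inv_anti₀ (by positivity : (0:ℝ) < 1/c₀) hK'
    rwa [one_div, inv_inv] at h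
  calc volume (euclTube n δ a e ∩ euclTube n δ b e')
      ≤ (K : ℝ≥0∞)⁻¹ * volume (euclTube n δ a e) := le_trans h1 h2
    _ ≤ ENNReal.ofReal c₀ * volume (euclTube n δ a e) := mul_le_mul_left h3 _

lemma abs_coord_le (x : EuclideanSpace ℝ (Fin n)) (k : Fin n) : |x k| ≤ ‖x‖ := by
  rw [EuclideanSpace.norm_eq]
  calc |x k| = Real.sqrt (|x k| ^ 2) := (Real.sqrt_sq (abs_nonneg _)).symm
    _ ≤ Real.sqrt (∑ i, ‖x i‖ ^ 2) := by
        apply Real.sqrt_le_sqrt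
        rw [sq_abs]
        have : (x k) ^ 2 = ‖x k‖ ^ 2 := by rw [Real.norm_eq_abs, sq_abs]
        rw [this]
        exact Finset.single_le_sum (fun i _ => sq_nonneg ‖x i‖) (Finset.mem_univ k)

lemma volume_box (c d : Fin n → ℝ) :
    volume {x : EuclideanSpace ℝ (Fin n) | ∀ k, x k ∈ Icc (c k) (d k)} =
      ∏ k, ENNReal.ofReal (d k - c k) := by
  have hmp := EuclideanSpace.volume_preserving_symm_measurableEquiv_toLp (Fin n)
  have hset : {x : EuclideanSpace ℝ (Fin n) | ∀ k, x k ∈ Icc (c k) (d k)} =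
      (MeasurableEquiv.toLp 2 (Fin n → ℝ)).symm ⁻¹' (Set.Icc c d) := by
    ext x
    simp only [Set.mem_setOf_eq, Set.mem_preimage, Set.mem_Icc,
      MeasurableEquiv.coe_mk, Pi.le_def]
    constructor
    · intro h
      exact ⟨fun k => (h k).1, fun k => (h k).2⟩
    · intro h k
      exact ⟨h.1 k, h.2 k⟩
  rw [hset, hmp.measure_preimage measurableSet_Icc.nullMeasurableSet]
  rw [Real.volume_Icc_pi]

/-- Direction vector obtained from a transverse perturbation `u`. -/
def edir (i₀ : Fin n) (u : EuclideanSpace ℝ (Fin n)) : EuclideanSpace ℝ (Fin n) :=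
  Real.sqrt (1 - ‖u‖ ^ 2) • EuclideanSpace.single i₀ 1 + u

lemma inner_single_eq {i₀ : Fin n} {u : EuclideanSpace ℝ (Fin n)} (hu0 : u i₀ = 0) :
    (inner ℝ (EuclideanSpace.single i₀ (1:ℝ)) u : ℝ) = 0 := by
  rw [EuclideanSpace.inner_single_left]
  simp [hu0]

lemma edir_norm_one {i₀ : Fin n} {u : EuclideanSpace ℝ (Fin n)} (hu0 : u i₀ = 0)
    (hu : ‖u‖ ≤ 1) : ‖edir i₀ u‖ = 1 := by
  have h1 : (0:ℝ) ≤ 1 - ‖u‖ ^ 2 := by nlinarith [norm_nonneg u]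
  have h2 : ‖edir i₀ u‖ ^ 2 = 1 := by
    rw [edir, norm_add_sq_real, norm_smul, real_inner_smul_left, inner_single_eq hu0,
      EuclideanSpace.norm_single]
    rw [Real.norm_eq_abs, abs_of_nonneg (Real.sqrt_nonneg _)]
    rw [mul_pow, Real.sq_sqrt h1]
    norm_num
  nlinarith [norm_nonneg (edir i₀ u)]

lemma edir_inner {i₀ : Fin n} {u u' : EuclideanSpace ℝ (Fin n)} (hu0 : u i₀ = 0)
    (hu0' : u' i₀ = 0) :
    (inner ℝ (edir i₀ u) (edir i₀ u') : ℝ)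
      = Real.sqrt (1 - ‖u‖ ^ 2) * Real.sqrt (1 - ‖u'‖ ^ 2) + (inner ℝ u u' : ℝ) := by
  rw [edir, edir, inner_add_left, inner_add_right, inner_add_right, real_inner_smul_left,
    real_inner_smul_left, real_inner_smul_right, real_inner_smul_right,
    inner_single_eq hu0', real_inner_self_eq_norm_sq, EuclideanSpace.norm_single]
  have : (inner ℝ u (EuclideanSpace.single i₀ (1:ℝ)) : ℝ) = 0 := by
    rw [real_inner_comm]; exact inner_single_eq hu0
  rw [this]
  norm_num

lemma edir_sub_sq {i₀ : Fin n} {u u' : EuclideanSpace ℝ (Fin n)} (hu0 : u i₀ = 0)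
    (hu0' : u' i₀ = 0) (hu : ‖u‖ ≤ 1) (hu' : ‖u'‖ ≤ 1) :
    ‖u - u'‖ ^ 2 ≤ 2 - 2 * (inner ℝ (edir i₀ u) (edir i₀ u') : ℝ) := by
  have hne : ‖edir i₀ u - edir i₀ u'‖ ^ 2 = 2 - 2 * (inner ℝ (edir i₀ u) (edir i₀ u') : ℝ) := by
    rw [norm_sub_sq_real, edir_norm_one hu0 hu, edir_norm_one hu0' hu']
    ring
  rw [← hne]
  have hdecomp : edir i₀ u - edir i₀ u'
      = (Real.sqrt (1 - ‖u‖ ^ 2) - Real.sqrt (1 - ‖u'‖ ^ 2)) • EuclideanSpace.single i₀ 1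
        + (u - u') := by
    rw [edir, edir, sub_smul]; abel
  rw [hdecomp, norm_add_sq_real, real_inner_smul_left]
  have : (inner ℝ (EuclideanSpace.single i₀ (1:ℝ)) (u - u') : ℝ) = 0 := by
    apply inner_single_eq
    have : (u - u') i₀ = u i₀ - u' i₀ := rfl
    rw [this, hu0, hu0', sub_zero]
  rw [this]
  nlinarith [sq_nonneg (‖(Real.sqrt (1 - ‖u‖ ^ 2) - Real.sqrt (1 - ‖u'‖ ^ 2)) • (EuclideanSpace.single i₀ (1:ℝ))‖)]

lemma dir_sep {i₀ : Fin n} {u u' : EuclideanSpace ℝ (Fin n)} (hu0 : u i₀ = 0)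
    (hu0' : u' i₀ = 0) (hu : ‖u‖ ≤ 1/2) (hu' : ‖u'‖ ≤ 1/2) {c : ℝ} (hc : 0 ≤ c)
    (hsep : c ≤ ‖u - u'‖) :
    c / 2 ≤ Real.sqrt (1 - (inner ℝ (edir i₀ u) (edir i₀ u') : ℝ) ^ 2) := by
  set d : ℝ := (inner ℝ (edir i₀ u) (edir i₀ u') : ℝ) with hd
  have hd0 : 0 ≤ d := by
    rw [hd, edir_inner hu0 hu0']
    have h1 : Real.sqrt (3/4) ≤ Real.sqrt (1 - ‖u‖ ^ 2) := by
      apply Real.sqrt_le_sqrt; nlinarith [norm_nonneg u]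
    have h1' : Real.sqrt (3/4) ≤ Real.sqrt (1 - ‖u'‖ ^ 2) := by
      apply Real.sqrt_le_sqrt; nlinarith [norm_nonneg u']
    have h2 : (3:ℝ)/4 ≤ Real.sqrt (1 - ‖u‖ ^ 2) * Real.sqrt (1 - ‖u'‖ ^ 2) := by
      calc (3:ℝ)/4 = Real.sqrt (3/4) * Real.sqrt (3/4) :=
            (Real.mul_self_sqrt (by norm_num)).symm
        _ ≤ _ := by
            apply mul_le_mul h1 h1' (Real.sqrt_nonneg _) (le_trans (Real.sqrt_nonneg _) h1)
    have h3 : |(inner ℝ u u' : ℝ)| ≤ 1/4 := by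
      calc |(inner ℝ u u' : ℝ)| ≤ ‖u‖ * ‖u'‖ := abs_real_inner_le_norm u u'
        _ ≤ 1/4 := by nlinarith [norm_nonneg u, norm_nonneg u']
    have := abs_le.1 h3
    linarith [this.1]
  have hd1 : d ≤ 1 := by
    calc d ≤ ‖edir i₀ u‖ * ‖edir i₀ u'‖ := real_inner_le_norm _ _
      _ = 1 := by rw [edir_norm_one hu0 (by linarith), edir_norm_one hu0' (by linarith)]; norm_num
  have hsub := edir_sub_sq hu0 hu0' (by linarith) (by linarith)
  rw [← hd] at hsub
  have hc2 : c ^ 2 ≤ 2 - 2 * d := by nlinarith [norm_nonneg (u - u')]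
  rw [Real.le_sqrt (by positivity)]
  · nlinarith
  · nlinarith

lemma parallel_perp {i₀ : Fin n} {u : EuclideanSpace ℝ (Fin n)} (hu0 : u i₀ = 0)
    (hu : ‖u‖ ≤ 1/2) {A : EuclideanSpace ℝ (Fin n)} (hA0 : A i₀ = 0) :
    ‖A‖ / 2 ≤ ‖A - (inner ℝ A (edir i₀ u) : ℝ) • edir i₀ u‖ := by
  have he1 : ‖edir i₀ u‖ = 1 := edir_norm_one hu0 (by linarith)
  have hiA : (inner ℝ A (edir i₀ u) : ℝ) = (inner ℝ A u : ℝ) := by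
    rw [edir, inner_add_right, real_inner_smul_right]
    have : (inner ℝ A (EuclideanSpace.single i₀ (1:ℝ)) : ℝ) = 0 := by
      rw [real_inner_comm]
      rw [EuclideanSpace.inner_single_left]
      simp [hA0]
    rw [this, mul_zero, zero_add]
  have h2 : |(inner ℝ A (edir i₀ u) : ℝ)| ≤ ‖A‖ / 2 := by
    rw [hiA]
    calc |(inner ℝ A u : ℝ)| ≤ ‖A‖ * ‖u‖ := abs_real_inner_le_norm A u
      _ ≤ ‖A‖ / 2 := by nlinarith [norm_nonneg A]
  calc ‖A‖ / 2 = ‖A‖ - ‖A‖ / 2 := by ring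
    _ ≤ ‖A‖ - ‖(inner ℝ A (edir i₀ u) : ℝ) • edir i₀ u‖ := by
        rw [norm_smul, he1, mul_one, Real.norm_eq_abs]
        linarith
    _ ≤ ‖A - (inner ℝ A (edir i₀ u) : ℝ) • edir i₀ u‖ := by
        have := norm_sub_norm_le A ((inner ℝ A (edir i₀ u) : ℝ) • edir i₀ u)
        linarith

/-- The grid vector with transverse coordinates `c * v`. -/
def cvec (n K : ℕ) (c : ℝ) (v : Fin (n-1) → Fin K) : EuclideanSpace ℝ (Fin n) :=
  WithLp.toLp 2 (fun k : Fin n => if h : (k : ℕ) = 0 then 0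
    else c * ((v ⟨(k : ℕ) - 1, by have := k.isLt; omega⟩ : Fin K) : ℕ))

lemma cvec_zero (K : ℕ) (c : ℝ) (v : Fin (n-1) → Fin K) {k : Fin n} (hk : (k : ℕ) = 0) :
    cvec n K c v k = 0 := by
  simp only [cvec, PiLp.toLp_apply, hk, dite_true]

lemma cvec_coord_abs {K : ℕ} {c : ℝ} (hc : 0 ≤ c) (v : Fin (n-1) → Fin K) (k : Fin n) :
    |cvec n K c v k| ≤ c * K := by
  by_cases hk : (k : ℕ) = 0
  · rw [cvec_zero K c v hk, abs_zero]
    positivity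
  · have : cvec n K c v k
        = c * ((v ⟨(k : ℕ) - 1, by have := k.isLt; omega⟩ : Fin K) : ℕ) := by
      simp only [cvec, PiLp.toLp_apply, hk, dite_false]
    rw [this, abs_of_nonneg (by positivity)]
    have hlt : ((v ⟨(k : ℕ) - 1, by have := k.isLt; omega⟩ : Fin K) : ℕ) ≤ K := by
      exact le_of_lt (Fin.is_lt _)
    have : ((v ⟨(k : ℕ) - 1, by have := k.isLt; omega⟩ : Fin K) : ℝ) ≤ (K : ℝ) := by
      exact_mod_cast hlt
    nlinarith

lemma cvec_norm_le {K : ℕ} {c : ℝ} (hc : 0 ≤ c) (v : Fin (n-1) → Fin K) :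
    ‖cvec n K c v‖ ≤ n * (c * K) := by
  rw [EuclideanSpace.norm_eq]
  have hsum : ∑ i, ‖cvec n K c v i‖ ^ 2 ≤ (n : ℝ) * (c * K) ^ 2 := by
    calc ∑ i, ‖cvec n K c v i‖ ^ 2 ≤ ∑ _i : Fin n, (c * K) ^ 2 := by
          apply Finset.sum_le_sum
          intro i _
          rw [Real.norm_eq_abs]
          have := cvec_coord_abs hc v i
          nlinarith [abs_nonneg (cvec n K c v i)]
      _ = (n : ℝ) * (c * K) ^ 2 := by
          rw [Finset.sum_const, Finset.card_univ, Fintype.card_fin, nsmul_eq_mul]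
  calc Real.sqrt (∑ i, ‖cvec n K c v i‖ ^ 2) ≤ Real.sqrt ((n : ℝ) * (c * K) ^ 2) :=
        Real.sqrt_le_sqrt hsum
    _ ≤ Real.sqrt ((n * (c * K)) ^ 2) := by
        apply Real.sqrt_le_sqrt
        have h1 : (1:ℝ) ≤ n ∨ (n:ℝ) = 0 := by
          rcases Nat.eq_zero_or_pos n with h | h
          · right; exact_mod_cast h
          · left; exact_mod_cast h
        rcases h1 with h | h
        · nlinarith [sq_nonneg (c * K)]
        · rw [h]; nlinarith [sq_nonneg (c * K)]
    _ = n * (c * K) := Real.sqrt_sq (by positivity)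

lemma cvec_sep {K : ℕ} {c : ℝ} (hc : 0 ≤ c) {v v' : Fin (n-1) → Fin K} (hvv : v ≠ v') :
    c ≤ ‖cvec n K c v - cvec n K c v'‖ := by
  obtain ⟨k₀, hk₀⟩ := Function.ne_iff.1 hvv
  have hk₀lt := k₀.isLt
  set k : Fin n := ⟨(k₀ : ℕ) + 1, by omega⟩ with hkdef
  have hknz : (k : ℕ) ≠ 0 := by simp [hkdef]
  have hidx : (⟨(k : ℕ) - 1, by have := k.isLt; omega⟩ : Fin (n-1)) = k₀ := by
    ext; simp [hkdef]
  have hco : (cvec n K c v - cvec n K c v') k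
      = c * ((v k₀ : ℕ) : ℝ) - c * ((v' k₀ : ℕ) : ℝ) := by
    have hsub : (cvec n K c v - cvec n K c v') k = cvec n K c v k - cvec n K c v' k := rfl
    rw [hsub]
    simp only [cvec, PiLp.toLp_apply, hknz, dite_false, hidx]
  have hne : (v k₀ : ℕ) ≠ (v' k₀ : ℕ) := fun h => hk₀ (Fin.ext h)
  have hone : (1:ℝ) ≤ |((v k₀ : ℕ) : ℝ) - ((v' k₀ : ℕ) : ℝ)| := by
    have hz : ((v k₀ : ℕ) : ℤ) - ((v' k₀ : ℕ) : ℤ) ≠ 0 :=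
      sub_ne_zero.2 (by exact_mod_cast hne)
    have h1 := Int.one_le_abs hz
    have : ((|((v k₀ : ℕ) : ℤ) - ((v' k₀ : ℕ) : ℤ)| : ℤ) : ℝ)
        = |((v k₀ : ℕ) : ℝ) - ((v' k₀ : ℕ) : ℝ)| := by
      push_cast
      ring_nf
    calc (1:ℝ) ≤ ((|((v k₀ : ℕ) : ℤ) - ((v' k₀ : ℕ) : ℤ)| : ℤ) : ℝ) := by exact_mod_cast h1
      _ = _ := this
  calc c = c * 1 := (mul_one c).symm
    _ ≤ c * |((v k₀ : ℕ) : ℝ) - ((v' k₀ : ℕ) : ℝ)| := by nlinarith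
    _ = |(cvec n K c v - cvec n K c v') k| := by
        rw [hco, ← mul_sub, abs_mul, abs_of_nonneg hc]
    _ ≤ ‖cvec n K c v - cvec n K c v'‖ := abs_coord_le _ _

lemma tube_coord_bound {aE eE x : EuclideanSpace ℝ (Fin n)} (hx : x ∈ euclTube n δ aE eE)
    (k : Fin n) : |x k - aE k| ≤ |eE k| / 2 + δ / 2 := by
  set t : ℝ := (inner ℝ (x - aE) eE : ℝ) with htdef
  set p : EuclideanSpace ℝ (Fin n) := (x - aE) - t • eE with hpdef
  have hpk : |p k| ≤ δ / 2 := by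
    calc |p k| ≤ ‖p‖ := abs_coord_le p k
      _ ≤ δ / 2 := hx.2
  have hco : x k - aE k = t * eE k + p k := by
    have h1 : p k = (x - aE) k - t * eE k := rfl
    have h2 : (x - aE) k = x k - aE k := rfl
    rw [h1, h2]; ring
  rw [hco]
  calc |t * eE k + p k| ≤ |t * eE k| + |p k| := abs_add_le _ _
    _ ≤ |t| * |eE k| + δ / 2 := by rw [abs_mul]; linarith
    _ ≤ (1/2) * |eE k| + δ / 2 := by
        have := hx.1
        nlinarith [abs_nonneg (eE k)]
    _ = |eE k| / 2 + δ / 2 := by ring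

lemma edir_coord_ne {i₀ : Fin n} {u : EuclideanSpace ℝ (Fin n)} {k : Fin n} (hk : k ≠ i₀) :
    edir i₀ u k = u k := by
  have h1 : edir i₀ u k
      = Real.sqrt (1 - ‖u‖ ^ 2) * (EuclideanSpace.single i₀ (1:ℝ)) k + u k := rfl
  rw [h1, EuclideanSpace.single_apply, if_neg hk, mul_zero, zero_add]

lemma edir_coord_self {i₀ : Fin n} {u : EuclideanSpace ℝ (Fin n)} (hu0 : u i₀ = 0) :
    |edir i₀ u i₀| ≤ 1 := by
  have h1 : edir i₀ u i₀
      = Real.sqrt (1 - ‖u‖ ^ 2) * (EuclideanSpace.single i₀ (1:ℝ)) i₀ + u i₀ := rfl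
  rw [h1, EuclideanSpace.single_apply, if_pos rfl, mul_one, hu0, add_zero]
  rw [abs_of_nonneg (Real.sqrt_nonneg _)]
  calc Real.sqrt (1 - ‖u‖ ^ 2) ≤ Real.sqrt 1 := by
        apply Real.sqrt_le_sqrt; nlinarith [sq_nonneg ‖u‖]
    _ = 1 := Real.sqrt_one


set_option maxHeartbeats 2000000 in
/-- sharpness of the bound `√N·δ^{n-1}` for `1 ≤ N ≤ δ^{2-2n}`. -/
theorem statement2 (n : ℕ) (hn : 2 ≤ n) (c₀ : ℝ) (hc₀ : c₀ ∈ Set.Ioo (0 : ℝ) 1) :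
    ∃ C δ₀ : ℝ, 0 < C ∧ δ₀ ∈ Set.Ioo (0 : ℝ) (1 / 100) ∧
      ∀ δ : ℝ, δ ∈ Set.Ioo (0 : ℝ) δ₀ →
      ∀ N : ℕ, 1 ≤ N → (N : ℝ) ≤ (δ ^ (2 * n - 2))⁻¹ →
        ∃ (M : ℕ) (a e : Fin M → EuclideanSpace ℝ (Fin n)),
          N ≤ M ∧ (∀ i, ‖e i‖ = 1) ∧ EssentiallyDistinct n δ c₀ a e ∧
          volume (⋃ i, euclTube n δ (a i) (e i)) ≤
            ENNReal.ofReal (C * Real.sqrt N * δ ^ (n - 1)) := by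
  classical
  obtain ⟨hc0, hc1⟩ := hc₀
  have hn0 : (0:ℝ) < n := by
    have : 0 < n := by omega
    exact_mod_cast this
  have hn2 : (2:ℝ) ≤ n := by exact_mod_cast hn
  have hn1 : (1:ℝ) ≤ (n:ℝ) - 1 := by linarith
  set Cw : ℝ := 3 * (256 * n / c₀) + 3 + 1/8 + 32 * n / c₀ + 1 with hCw
  have hCw0 : 0 < Cw := by
    have h1 : 0 < 256 * (n:ℝ) / c₀ := by positivity
    have h2 : 0 < 32 * (n:ℝ) / c₀ := by positivity
    rw [hCw]; linarith
  refine ⟨2 * (2 * Cw) ^ (n - 1), c₀ / (256 * n), by positivity, ⟨by positivity, ?_⟩, ?_⟩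
  · rw [div_lt_div_iff₀ (by positivity) (by norm_num)]
    nlinarith
  intro δ hδmem N hN1 hNδ
  obtain ⟨hδ0, hδε⟩ := hδmem
  have hδ1 : δ < 1 := by
    apply lt_of_lt_of_le hδε
    rw [div_le_one (by positivity)]
    nlinarith
  set i₀ : Fin n := ⟨0, by omega⟩ with hi₀
  have hN0 : (0:ℝ) < N := by exact_mod_cast Nat.lt_of_lt_of_le Nat.zero_lt_one hN1
  have hN1' : (1:ℝ) ≤ N := by exact_mod_cast hN1
  set P : ℝ := (N:ℝ) ^ ((1:ℝ)/(2*((n:ℝ)-1))) with hP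
  set Q : ℝ := (N:ℝ) ^ ((1:ℝ)/((n:ℝ)-1)) with hQ
  have hP1 : 1 ≤ P := Real.one_le_rpow hN1' (by positivity)
  have hQ1 : 1 ≤ Q := Real.one_le_rpow hN1' (by positivity)
  have hQP : P ^ (2:ℕ) = Q := by
    rw [hP, hQ, ← Real.rpow_natCast ((N:ℝ) ^ ((1:ℝ)/(2*((n:ℝ)-1)))) 2,
      ← Real.rpow_mul hN0.le]
    congr 1
    have : ((n:ℝ) - 1) ≠ 0 := by linarith
    field_simp
    norm_num
  have hPδ : P * δ ≤ 1 := by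
    have hcast : ((2*n-2 : ℕ) : ℝ) = 2*((n:ℝ)-1) := by
      rw [Nat.cast_sub (by omega : 2 ≤ 2*n)]
      push_cast; ring
    have hNδ' : (N:ℝ) ≤ (δ⁻¹) ^ ((2*((n:ℝ)-1)) : ℝ) := by
      have h1 : (δ ^ (2*n-2 : ℕ))⁻¹ = (δ⁻¹) ^ (2*n-2 : ℕ) := by rw [inv_pow]
      have h2 : (δ⁻¹) ^ (2*n-2 : ℕ) = (δ⁻¹) ^ (((2*n-2 : ℕ) : ℝ)) := by
        rw [Real.rpow_natCast]
      calc (N:ℝ) ≤ (δ ^ (2*n-2 : ℕ))⁻¹ := hNδ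
        _ = (δ⁻¹) ^ (((2*n-2 : ℕ) : ℝ)) := by rw [h1, h2]
        _ = (δ⁻¹) ^ ((2*((n:ℝ)-1)) : ℝ) := by rw [hcast]
    have hPle : P ≤ δ⁻¹ := by
      have h3 : P ≤ ((δ⁻¹) ^ ((2*((n:ℝ)-1)) : ℝ)) ^ ((1:ℝ)/(2*((n:ℝ)-1))) := by
        rw [hP]
        exact Real.rpow_le_rpow hN0.le hNδ' (by positivity)
      have h4 : ((δ⁻¹) ^ ((2*((n:ℝ)-1)) : ℝ)) ^ ((1:ℝ)/(2*((n:ℝ)-1))) = δ⁻¹ := by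
        rw [← Real.rpow_mul (by positivity)]
        have : (2*((n:ℝ)-1)) * ((1:ℝ)/(2*((n:ℝ)-1))) = 1 := by
          have : ((n:ℝ) - 1) ≠ 0 := by linarith
          field_simp
        rw [this, Real.rpow_one]
      rw [h4] at h3; exact h3
    calc P * δ ≤ δ⁻¹ * δ := by nlinarith
      _ = 1 := by field_simp
  set A : ℝ := c₀ * P / (256 * n) with hA
  have hA0 : 0 < A := by positivity
  set K₁ : ℕ := ⌈A⌉₊ with hK₁def
  have hK₁ge : A ≤ (K₁:ℝ) := Nat.le_ceil A
  have hK₁1 : 1 ≤ K₁ := Nat.one_le_ceil_iff.2 hA0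
  have hK₁pos : (0:ℝ) < K₁ := lt_of_lt_of_le hA0 hK₁ge
  have hK₁le : (K₁:ℝ) ≤ A + 1 := (Nat.ceil_lt_add_one hA0.le).le
  have hQ0 : (0:ℝ) < Q := lt_of_lt_of_le one_pos hQ1
  set K₂ : ℕ := ⌈Q / (K₁:ℝ)⌉₊ with hK₂def
  have hK₂ge : Q / (K₁:ℝ) ≤ (K₂:ℝ) := Nat.le_ceil _
  have hK₂1 : 1 ≤ K₂ := Nat.one_le_ceil_iff.2 (by positivity)
  have hK₂le : (K₂:ℝ) ≤ Q/(K₁:ℝ) + 1 := (Nat.ceil_lt_add_one (by positivity)).le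
  have hQle : Q ≤ (K₁:ℝ) * K₂ := by
    rw [div_le_iff₀ hK₁pos] at hK₂ge
    linarith [hK₂ge]
  set δ' : ℝ := 32 * δ / c₀ with hδ'
  have hδ'0 : 0 < δ' := by positivity
  -- bound on the norm of direction perturbations
  have hfield : (n:ℝ) * δ' * A = P * δ / 8 := by
    rw [hδ', hA]; field_simp; ring
  have hKK : (n:ℝ) * δ' * (K₁:ℝ) ≤ P * δ / 8 + 32 * n * δ / c₀ := by
    have h5 : (n:ℝ) * δ' * (K₁:ℝ) ≤ (n:ℝ) * δ' * (A + 1) := by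
      apply mul_le_mul_of_nonneg_left hK₁le
      positivity
    have h8 : (n:ℝ) * δ' * (A + 1) = P * δ / 8 + 32 * n * δ / c₀ := by
      have h9 : (n:ℝ) * δ' * (A + 1) = (n:ℝ) * δ' * A + 32 * n * δ / c₀ := by
        rw [hδ']; ring
      rw [h9, hfield]
    linarith [h5, h8]
  have h32 : 32 * (n:ℝ) * δ / c₀ ≤ 1/8 := by
    have h := (lt_div_iff₀ (by positivity : (0:ℝ) < 256*n)).1 hδε
    rw [div_le_iff₀ hc0]
    nlinarith
  have hunorm : ∀ v : Fin (n-1) → Fin K₁, ‖cvec n K₁ δ' v‖ ≤ 1/4 := by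
    intro v
    calc ‖cvec n K₁ δ' v‖ ≤ n * (δ' * K₁) := cvec_norm_le hδ'0.le v
      _ = (n:ℝ) * δ' * K₁ := by ring
      _ ≤ P * δ / 8 + 32 * n * δ / c₀ := hKK
      _ ≤ 1/8 + 1/8 := by linarith [hPδ, h32]
      _ = 1/4 := by norm_num
  have hu0 : ∀ v : Fin (n-1) → Fin K₁, cvec n K₁ δ' v i₀ = 0 :=
    fun v => cvec_zero K₁ δ' v rfl
  have ha0 : ∀ w : Fin (n-1) → Fin K₂, cvec n K₂ (3*δ) w i₀ = 0 :=
    fun w => cvec_zero K₂ (3*δ) w rfl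
  have hE1 : ∀ v : Fin (n-1) → Fin K₁, ‖edir i₀ (cvec n K₁ δ' v)‖ = 1 := by
    intro v
    exact edir_norm_one (hu0 v) (le_trans (hunorm v) (by norm_num))
  set σ := (Fintype.equivFin ((Fin (n-1) → Fin K₁) × (Fin (n-1) → Fin K₂))).symm with hσ
  refine ⟨Fintype.card ((Fin (n-1) → Fin K₁) × (Fin (n-1) → Fin K₂)),
    fun i => cvec n K₂ (3*δ) (σ i).2, fun i => edir i₀ (cvec n K₁ δ' (σ i).1),
    ?_, fun i => hE1 _, ?_, ?_⟩
  · -- cardinality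
    have hcard : Fintype.card ((Fin (n-1) → Fin K₁) × (Fin (n-1) → Fin K₂))
        = K₁ ^ (n-1) * K₂ ^ (n-1) := by
      rw [Fintype.card_prod, Fintype.card_fun, Fintype.card_fun, Fintype.card_fin,
        Fintype.card_fin, Fintype.card_fin]
    rw [hcard]
    have hQN : Q ^ ((n-1 : ℕ)) = (N:ℝ) := by
      rw [hQ, ← Real.rpow_natCast ((N:ℝ) ^ ((1:ℝ)/((n:ℝ)-1))) (n-1),
        ← Real.rpow_mul hN0.le]
      have hc : ((n-1 : ℕ) : ℝ) = (n:ℝ) - 1 := by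
        rw [Nat.cast_sub (by omega : 1 ≤ n)]; norm_num
      rw [hc]
      have : (1:ℝ)/((n:ℝ)-1) * ((n:ℝ)-1) = 1 := by
        have : ((n:ℝ) - 1) ≠ 0 := by linarith
        field_simp
      rw [this, Real.rpow_one]
    have hreal : (N:ℝ) ≤ ((K₁:ℝ) * (K₂:ℝ)) ^ (n-1 : ℕ) := by
      rw [← hQN]
      exact pow_le_pow_left₀ hQ0.le hQle _
    have : (N:ℝ) ≤ ((K₁ ^ (n-1) * K₂ ^ (n-1) : ℕ) : ℝ) := by
      push_cast
      rw [← mul_pow]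
      exact hreal
    exact_mod_cast this
  · -- essentially distinct
    intro i j hij
    by_cases hdir : (σ i).1 = (σ j).1
    · -- same direction: tubes are disjoint
      have hw : (σ i).2 ≠ (σ j).2 := by
        intro h
        exact hij (σ.injective (Prod.ext hdir h))
      have hAi0 : (cvec n K₂ (3*δ) (σ i).2 - cvec n K₂ (3*δ) (σ j).2) i₀ = 0 := by
        have : (cvec n K₂ (3*δ) (σ i).2 - cvec n K₂ (3*δ) (σ j).2) i₀
            = cvec n K₂ (3*δ) (σ i).2 i₀ - cvec n K₂ (3*δ) (σ j).2 i₀ := rfl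
        rw [this, ha0, ha0, sub_zero]
      have hAnorm : 3*δ ≤ ‖cvec n K₂ (3*δ) (σ i).2 - cvec n K₂ (3*δ) (σ j).2‖ :=
        cvec_sep (by positivity) hw
      have hperp := parallel_perp (hu0 (σ i).1) (le_trans (hunorm (σ i).1) (by norm_num)) hAi0
      have hdisj : euclTube n δ (cvec n K₂ (3*δ) (σ i).2) (edir i₀ (cvec n K₁ δ' (σ i).1))
          ∩ euclTube n δ (cvec n K₂ (3*δ) (σ j).2) (edir i₀ (cvec n K₁ δ' (σ j).1)) = ∅ := by
        rw [← hdir]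
        apply tube_disjoint_parallel
        calc δ < (3*δ)/2 := by linarith
          _ ≤ ‖cvec n K₂ (3*δ) (σ i).2 - cvec n K₂ (3*δ) (σ j).2‖ / 2 := by linarith
          _ ≤ _ := hperp
      rw [hdisj, measure_empty]
      exact zero_le
    · -- different directions
      apply vol_inter_le hδ0 hc0 (hE1 _) (hE1 _)
      have hsep : δ' ≤ ‖cvec n K₁ δ' (σ i).1 - cvec n K₁ δ' (σ j).1‖ :=
        cvec_sep hδ'0.le hdir
      have hds := dir_sep (hu0 (σ i).1) (hu0 (σ j).1)
        (le_trans (hunorm (σ i).1) (by norm_num)) (le_trans (hunorm (σ j).1) (by norm_num))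
        hδ'0.le hsep
      have hceil : (⌈1/c₀⌉₊ : ℝ) ≤ 2/c₀ := by
        have h1 : (⌈1/c₀⌉₊ : ℝ) < 1/c₀ + 1 := Nat.ceil_lt_add_one (by positivity)
        have h2 : (1:ℝ) ≤ 1/c₀ := by
          rw [le_div_iff₀ hc0]; linarith
        have h3 : 2/c₀ = 1/c₀ + 1/c₀ := by ring
        linarith
      calc 4 * δ * (⌈1/c₀⌉₊ : ℝ) ≤ 4 * δ * (2/c₀) := by
            apply mul_le_mul_of_nonneg_left hceil (by positivity)
        _ ≤ δ' / 2 := by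
            rw [hδ', show 4*δ*(2/c₀) = 8*δ/c₀ by ring, show (32*δ/c₀)/2 = 16*δ/c₀ by ring,
              div_le_div_iff_of_pos_right hc0]
            linarith
        _ ≤ _ := hds
  · -- volume of the union
    set W : ℝ := 3*δ*K₂ + (n:ℝ)*δ'*K₁ + δ with hWdef
    have hW0 : 0 < W := by positivity
    have hsubbox : (⋃ i, euclTube n δ (cvec n K₂ (3*δ) (σ i).2)
          (edir i₀ (cvec n K₁ δ' (σ i).1)))
        ⊆ {x : EuclideanSpace ℝ (Fin n) | ∀ k, x k ∈
            Icc (if k = i₀ then -1 else -W) (if k = i₀ then 1 else W)} := by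
      intro x hx
      rw [Set.mem_iUnion] at hx
      obtain ⟨i, hxi⟩ := hx
      intro k
      have hb := tube_coord_bound hxi k
      by_cases hk : k = i₀
      · subst hk
        have e1 : (if i₀ = i₀ then (-1:ℝ) else -W) = -1 := if_pos rfl
        have e2 : (if i₀ = i₀ then (1:ℝ) else W) = 1 := if_pos rfl
        rw [Set.mem_Icc, e1, e2, ← abs_le]
        rw [ha0] at hb
        have he := edir_coord_self (hu0 (σ i).1)
        rw [sub_zero] at hb
        calc |x i₀| ≤ |edir i₀ (cvec n K₁ δ' (σ i).1) i₀| / 2 + δ/2 := hb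
          _ ≤ 1/2 + δ/2 := by linarith
          _ ≤ 1 := by linarith
      · simp only [if_neg hk]
        rw [Set.mem_Icc, ← abs_le]
        have heco : edir i₀ (cvec n K₁ δ' (σ i).1) k = cvec n K₁ δ' (σ i).1 k :=
          edir_coord_ne hk
        have huk : |cvec n K₁ δ' (σ i).1 k| ≤ (n:ℝ)*δ'*K₁ := by
          calc |cvec n K₁ δ' (σ i).1 k| ≤ ‖cvec n K₁ δ' (σ i).1‖ := abs_coord_le _ _
            _ ≤ n * (δ' * K₁) := cvec_norm_le hδ'0.le _
            _ = (n:ℝ)*δ'*K₁ := by ring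
        have hak : |cvec n K₂ (3*δ) (σ i).2 k| ≤ 3*δ*K₂ := by
          have := cvec_coord_abs (by positivity : (0:ℝ) ≤ 3*δ) (σ i).2 k
          calc |cvec n K₂ (3*δ) (σ i).2 k| ≤ (3*δ) * K₂ := this
            _ = 3*δ*K₂ := by ring
        calc |x k| ≤ |x k - cvec n K₂ (3*δ) (σ i).2 k| + |cvec n K₂ (3*δ) (σ i).2 k| := by
              have := abs_sub_abs_le_abs_sub (x k) (cvec n K₂ (3*δ) (σ i).2 k)
              have h := abs_add_le (x k - cvec n K₂ (3*δ) (σ i).2 k) (cvec n K₂ (3*δ) (σ i).2 k)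
              calc |x k| = |(x k - cvec n K₂ (3*δ) (σ i).2 k) + cvec n K₂ (3*δ) (σ i).2 k| := by
                    congr 1; ring
                _ ≤ _ := h
          _ ≤ (|edir i₀ (cvec n K₁ δ' (σ i).1) k| / 2 + δ/2) + 3*δ*K₂ := by linarith
          _ ≤ ((n:ℝ)*δ'*K₁ / 2 + δ/2) + 3*δ*K₂ := by
              rw [heco] at hb ⊢
              have h := huk
              linarith [abs_nonneg (cvec n K₁ δ' (σ i).1 k)]
          _ ≤ W := by
              rw [hWdef]
              have h1 : (0:ℝ) ≤ (n:ℝ)*δ'*K₁ := by positivity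
              linarith
    have hbox := volume_box (n := n) (fun k => if k = i₀ then -1 else -W)
      (fun k => if k = i₀ then 1 else W)
    have hprod : (∏ k : Fin n, ENNReal.ofReal ((if k = i₀ then (1:ℝ) else W)
          - (if k = i₀ then -1 else -W)))
        = ENNReal.ofReal 2 * ENNReal.ofReal (2*W) ^ (n-1) := by
      rw [← Finset.mul_prod_erase Finset.univ _ (Finset.mem_univ i₀)]
      have h1 : ((if i₀ = i₀ then (1:ℝ) else W) - if i₀ = i₀ then -1 else -W) = 2 := by
        norm_num
      rw [h1]
      congr 1
      calc ∏ x ∈ Finset.univ.erase i₀,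
            ENNReal.ofReal ((if x = i₀ then (1:ℝ) else W) - if x = i₀ then -1 else -W)
          = ∏ _x ∈ Finset.univ.erase i₀, ENNReal.ofReal (2*W) := by
            refine Finset.prod_congr rfl (fun k hk => ?_)
            have hk' : k ≠ i₀ := (Finset.mem_erase.1 hk).1
            rw [if_neg hk', if_neg hk']
            congr 1; ring
        _ = ENNReal.ofReal (2*W) ^ (n-1) := by
            rw [Finset.prod_const, Finset.card_erase_of_mem (Finset.mem_univ i₀),
              Finset.card_univ, Fintype.card_fin]
    -- the real-number estimate
    have hδPδ : δ ≤ P * δ := by nlinarith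
    have hAK : 256*(n:ℝ)/c₀ * A = P := by rw [hA]; field_simp
    have hQKb : Q ≤ 256*(n:ℝ)/c₀*P*(K₁:ℝ) := by
      rw [← hQP]
      have h := mul_le_mul_of_nonneg_left hK₁ge (by positivity : (0:ℝ) ≤ 256*(n:ℝ)/c₀*P)
      nlinarith [hAK, hP1]
    have hK₂b : (K₂:ℝ) ≤ 256*(n:ℝ)/c₀*P + 1 := by
      have h1 : Q/(K₁:ℝ) ≤ 256*(n:ℝ)/c₀*P := by
        rw [div_le_iff₀ hK₁pos]
        exact hQKb
      linarith
    have h1 : 3*δ*(K₂:ℝ) ≤ 3*(256*(n:ℝ)/c₀)*(P*δ) + 3*(P*δ) := by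
      have := mul_le_mul_of_nonneg_left hK₂b (by positivity : (0:ℝ) ≤ 3*δ)
      nlinarith
    have h2 : (n:ℝ)*δ'*(K₁:ℝ) ≤ (1/8)*(P*δ) + (32*(n:ℝ)/c₀)*(P*δ) := by
      have h3 : 32 * (n:ℝ) * δ / c₀ ≤ (32*(n:ℝ)/c₀)*(P*δ) := by
        have : 32 * (n:ℝ) * δ / c₀ = (32*(n:ℝ)/c₀)*δ := by ring
        rw [this]
        apply mul_le_mul_of_nonneg_left hδPδ (by positivity)
      calc (n:ℝ)*δ'*(K₁:ℝ) ≤ P * δ / 8 + 32 * n * δ / c₀ := hKK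
        _ ≤ (1/8)*(P*δ) + (32*(n:ℝ)/c₀)*(P*δ) := by linarith
    have hWle : W ≤ Cw * (P*δ) := by
      rw [hWdef, hCw]
      have := hδPδ
      nlinarith [h1, h2]
    have hsqrtP : P ^ (n-1 : ℕ) = Real.sqrt N := by
      rw [Real.sqrt_eq_rpow, hP, ← Real.rpow_natCast ((N:ℝ) ^ ((1:ℝ)/(2*((n:ℝ)-1)))) (n-1),
        ← Real.rpow_mul hN0.le]
      congr 1
      rw [Nat.cast_sub (by omega : 1 ≤ n)]
      have : ((n:ℝ) - 1) ≠ 0 := by linarith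
      field_simp
      ring
    have hreal2 : 2*(2*W)^(n-1 : ℕ) ≤ 2 * (2 * Cw) ^ (n - 1) * Real.sqrt N * δ ^ (n - 1) := by
      have hstep : (2*W)^(n-1 : ℕ) ≤ (2*(Cw*(P*δ)))^(n-1 : ℕ) := by
        apply pow_le_pow_left₀ (by positivity)
        linarith
      have hexp : (2*(Cw*(P*δ)))^(n-1 : ℕ) = (2*Cw)^(n-1:ℕ) * P^(n-1:ℕ) * δ^(n-1:ℕ) := by
        rw [show 2*(Cw*(P*δ)) = (2*Cw)*P*δ by ring, mul_pow, mul_pow]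
      rw [hexp, hsqrtP] at hstep
      linarith
    refine le_trans (measure_mono hsubbox) ?_
    rw [hbox, hprod]
    have hcomb : ENNReal.ofReal 2 * ENNReal.ofReal (2*W) ^ (n-1)
        = ENNReal.ofReal (2 * (2*W)^(n-1)) := by
      rw [← ENNReal.ofReal_pow (by positivity), ← ENNReal.ofReal_mul (by norm_num)]
    rw [hcomb]
    exact ENNReal.ofReal_le_ofReal hreal2
end
end

section
/- For every integer n ≥ 2 and all constants c₀, c₁ ∈ (0,1) there exists c₂ > 0, depending only on n, c₀ and c₁, with the following property: for every δ ∈ (0, 1/100), every real N ≥ 1, and every convex 9δ-discretized set E ⊆ ℝ^{n−1} with diam(E) ≤ 1 and c₁·√N·δ^{n−1} ≤ vol_{n−1}(E) ≤ c₁^{−1}·√N·δ^{n−1}, there exists a finite essentially distinct family of δ-tubes in ℝⁿ of cardinality at least c₂·N, all of whose members are contained in E × [0, 2] ⊆ ℝ^{n−1} × ℝ = ℝⁿ. -/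
open MeasureTheory

noncomputable section

/-- A set in `ℝ^m` is `r`-discretized if it is a union of closed balls of radius `r`. -/
def IsDiscretized (m : ℕ) (r : ℝ) (E : Set (EuclideanSpace ℝ (Fin m))) : Prop :=
  ∃ S : Set (EuclideanSpace ℝ (Fin m)), E = ⋃ x ∈ S, Metric.closedBall x r

/-- The cylinder `E × I ⊆ ℝⁿ = ℝ^{n-1} × ℝ`, under the canonical isometric
identification (first `n-1` coordinates, last coordinate). -/
def cylSet (n : ℕ) (hn : 0 < n) (E : Set (EuclideanSpace ℝ (Fin (n - 1)))) (I : Set ℝ) :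
    Set (EuclideanSpace ℝ (Fin n)) :=
  {y | WithLp.toLp 2 (fun i : Fin (n - 1) => y ⟨i.1, lt_of_lt_of_le i.2 (Nat.sub_le n 1)⟩) ∈ E ∧
       y ⟨n - 1, Nat.sub_lt hn one_pos⟩ ∈ I}

set_option maxHeartbeats 1000000

open scoped ENNReal

namespace KakeyaAux

abbrev Eu (k : ℕ) : Type := EuclideanSpace ℝ (Fin k)

def slab (k : ℕ) (a e : Eu k) (δ l u : ℝ) : Set (Eu k) :=
  {x | (inner ℝ (x - a) e : ℝ) ∈ Set.Icc l u ∧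
    ‖(x - a) - (inner ℝ (x - a) e : ℝ) • e‖ ≤ δ / 2}

lemma euclTube_eq_slab (k : ℕ) (δ : ℝ) (a e : Eu k) :
    euclTube k δ a e = slab k a e δ (-(1/2)) (1/2) := by
  ext x
  simp [euclTube, slab, abs_le, Set.mem_Icc, and_assoc]

lemma slab_volume (k : ℕ) (hk : 0 < k) (a e : Eu k) (he : ‖e‖ = 1) (δ : ℝ) :
    ∃ V : ℝ≥0∞, ∀ l u : ℝ, volume (slab k a e δ l u) = ENNReal.ofReal (u - l) * V := by
  classical
  set i₀ : Fin k := ⟨0, hk⟩ with hi₀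
  -- orthonormal basis extending e
  have hortho : Orthonormal ℝ (({i₀} : Set (Fin k)).restrict (fun _ : Fin k => e)) := by
    constructor
    · intro i; exact he
    · intro i j hij
      exact absurd (Subtype.ext ((i.2 : i.1 = i₀).trans (j.2 : j.1 = i₀).symm)) hij
  have hcard : Module.finrank ℝ (Eu k) = Fintype.card (Fin k) := by
    simp [finrank_euclideanSpace]
  obtain ⟨b, hb⟩ := hortho.exists_orthonormalBasis_extension_of_card_eq hcard
  have hbe : b i₀ = e := hb i₀ rfl
  -- the cross-section in the pi space over the complement coordinates
  set B : Set ({j : Fin k // ¬ j = i₀} → ℝ) :=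
    {w | Real.sqrt (∑ j : {j : Fin k // ¬ j = i₀}, (w j)^2) ≤ δ / 2} with hB
  have hBmeas : MeasurableSet B := by
    apply measurableSet_le _ measurable_const
    apply Measurable.sqrt
    exact Finset.measurable_sum _ (fun j _ => (measurable_pi_apply j).pow_const 2)
  refine ⟨volume B, fun l u => ?_⟩
  -- reduce to a = 0
  have hmem : slab k a e δ l u = (fun x : Eu k => x + (-a)) ⁻¹' (slab k 0 e δ l u) := by
    ext x
    simp [slab, sub_eq_add_neg]
  rw [hmem, measure_preimage_add_right]
  -- identify slab with repr-preimage
  set Q' : Set (Fin k → ℝ) :=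
    {y | y i₀ ∈ Set.Icc l u ∧
      Real.sqrt (∑ j ∈ Finset.univ.filter (fun j => ¬ j = i₀), (y j)^2) ≤ δ / 2} with hQ'
  have hrepr : ∀ x : Eu k, (inner ℝ (x - 0) e : ℝ) = b.repr x i₀ ∧
      ‖(x - 0) - (inner ℝ (x - 0) e : ℝ) • e‖
        = Real.sqrt (∑ j ∈ Finset.univ.filter (fun j => ¬ j = i₀), (b.repr x j)^2) := by
    intro x
    have h1 : (inner ℝ (x - 0) e : ℝ) = b.repr x i₀ := by
      rw [b.repr_apply_apply, hbe, sub_zero, real_inner_comm]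
    constructor
    · exact h1
    · set t : ℝ := b.repr x i₀ with ht
      have h2 : b.repr ((x - 0) - (inner ℝ (x - 0) e : ℝ) • e)
          = b.repr x - t • EuclideanSpace.single i₀ (1:ℝ) := by
        rw [h1, sub_zero, map_sub, LinearIsometryEquiv.map_smul, ← hbe, b.repr_self]
      have h3 : ‖(x - 0) - (inner ℝ (x - 0) e : ℝ) • e‖
          = ‖b.repr x - t • EuclideanSpace.single i₀ (1:ℝ)‖ := by
        rw [← h2, b.repr.norm_map]
      rw [h3, EuclideanSpace.norm_eq]
      congr 1
      rw [← Finset.sum_filter_add_sum_filter_not Finset.univ (fun j => j = i₀)]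
      have hfe : Finset.univ.filter (fun j => j = i₀) = {i₀} := by
        ext j; simp
      rw [hfe, Finset.sum_singleton]
      have hz : (b.repr x - t • EuclideanSpace.single i₀ (1:ℝ)) i₀ = 0 := by
        simp [EuclideanSpace.single_apply, ht]
      rw [hz]
      simp only [norm_zero]
      rw [zero_pow (by norm_num), zero_add]
      apply Finset.sum_congr rfl
      intro j hj
      have hji : ¬ j = i₀ := by simpa using hj
      have : (b.repr x - t • EuclideanSpace.single i₀ (1:ℝ)) j = b.repr x j := by
        simp [EuclideanSpace.single_apply, hji]
      rw [this, Real.norm_eq_abs, sq_abs]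
  have hslab0 : slab k 0 e δ l u = ⇑b.repr ⁻¹' ((MeasurableEquiv.toLp 2 (Fin k → ℝ)).symm ⁻¹' Q') := by
    ext x
    obtain ⟨h1, h2⟩ := hrepr x
    simp only [slab, Set.mem_setOf_eq, Set.mem_preimage]
    rw [h2, h1]
    rfl
  rw [hslab0]
  have hQ'meas : MeasurableSet Q' := by
    have hrw : Q' = (fun y : Fin k → ℝ => y i₀) ⁻¹' (Set.Icc l u) ∩
        (fun y : Fin k → ℝ =>
          Real.sqrt (∑ j ∈ Finset.univ.filter (fun j => ¬ j = i₀), (y j)^2)) ⁻¹'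
            (Set.Iic (δ / 2)) := rfl
    rw [hrw]
    exact ((measurable_pi_apply i₀) measurableSet_Icc).inter
      ((Measurable.sqrt <| Finset.measurable_sum _
        (fun j _ => (measurable_pi_apply j).pow_const 2)) measurableSet_Iic)
  rw [b.measurePreserving_repr.measure_preimage
    (((MeasurableEquiv.toLp 2 (Fin k → ℝ)).symm.measurable hQ'meas).nullMeasurableSet)]
  rw [(EuclideanSpace.volume_preserving_symm_measurableEquiv_toLp (Fin k)).measure_preimage
    hQ'meas.nullMeasurableSet]
  -- split into product
  set A : Set ({j : Fin k // j = i₀} → ℝ) := {z | z ⟨i₀, rfl⟩ ∈ Set.Icc l u} with hA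
  have hAmeas : MeasurableSet A := (measurable_pi_apply _) measurableSet_Icc
  have hQ'prod : Q' = (MeasurableEquiv.piEquivPiSubtypeProd (fun _ : Fin k => ℝ)
      (fun j => j = i₀)) ⁻¹' (A ×ˢ B) := by
    ext y
    have hsum : ∑ j ∈ Finset.univ.filter (fun j => ¬ j = i₀), (y j)^2
        = ∑ j : {j : Fin k // ¬ j = i₀}, (y j.1)^2 := by
      exact Finset.sum_subtype _ (by simp) (fun j => (y j)^2)
    simp only [hQ', Set.mem_setOf_eq, Set.mem_preimage, MeasurableEquiv.piEquivPiSubtypeProd,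
      Equiv.piEquivPiSubtypeProd, Set.mem_prod, hA, hB, hsum]
    exact Iff.rfl
  rw [hQ'prod,
    (volume_preserving_piEquivPiSubtypeProd (fun _ : Fin k => ℝ) (fun j => j = i₀)).measure_preimage
      ((hAmeas.prod hBmeas).nullMeasurableSet)]
  rw [Measure.volume_eq_prod, Measure.prod_prod]
  congr 1
  have hApre : A = (MeasurableEquiv.funUnique {j : Fin k // j = i₀} ℝ) ⁻¹' (Set.Icc l u) := by
    ext z
    simp only [Set.mem_preimage, MeasurableEquiv.funUnique, MeasurableEquiv.piUnique_apply, hA,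
      Set.mem_setOf_eq]
    rw [Subsingleton.elim (⟨i₀, rfl⟩ : {j : Fin k // j = i₀}) default]
  have hAvol := (volume_preserving_funUnique {j : Fin k // j = i₀} ℝ).measure_preimage
    (measurableSet_Icc (a := l) (b := u)).nullMeasurableSet
  rw [Real.volume_Icc] at hAvol
  rw [hApre]
  have hfin : (Subtype.fintype fun j : Fin k => j = i₀) = Unique.fintype :=
    Subsingleton.elim _ _
  rw [hfin]
  exact hAvol

lemma arith1 {t t' c g d : ℝ} (hexp : t^2 - 2*t*t'*c + t'^2 ≤ d^2) (hg : g^2 = 1 - c^2) :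
    t^2 * g^2 ≤ d^2 := by nlinarith [sq_nonneg (t' - t*c)]

lemma arith2 {t g d : ℝ} (h : t^2 * g^2 ≤ d^2) (hg : 0 ≤ g) (hd : 0 ≤ d) : |t| * g ≤ d := by
  nlinarith [sq_abs t, abs_nonneg t, mul_nonneg (abs_nonneg t) hg]

lemma arith3 {r δ H I X ρ : ℝ} (hδ : 0 < δ) (hr : 20*δ ≤ r) (hH : 3/4*r ≤ H) (hHn : 0 ≤ H)
    (hI : |I| ≤ H * (1/2)) (hX2 : X^2 ≤ 2*((r/2)^2)) (hXn : 0 ≤ X) (hρn : 0 ≤ ρ)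
    (hlow : H^2 - I^2 ≤ ρ^2) (hup : ρ ≤ 2⁻¹*X + δ) : False := by
  have h1 := abs_le.mp hI
  have hr0 : 0 < r := by linarith
  have hsq : ρ^2 ≤ (2⁻¹*X + δ)^2 := by nlinarith
  nlinarith [sq_nonneg (X - 2*δ), sq_nonneg (X - δ),
    mul_nonneg (by linarith : (0:ℝ) ≤ r - 20*δ) (by linarith : (0:ℝ) ≤ r + 20*δ)]

lemma tube_inter_le (k : ℕ) (hk : 0 < k) {δ c₀ : ℝ} (hδ : 0 < δ) (hc₀ : 0 < c₀)
    (a a' e e' : Eu k) (he : ‖e‖ = 1) (he' : ‖e'‖ = 1)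
    (hang : 4 * δ ≤ c₀ * Real.sqrt (1 - (inner ℝ e e' : ℝ)^2)) :
    volume (euclTube k δ a e ∩ euclTube k δ a' e') ≤
      ENNReal.ofReal c₀ * volume (euclTube k δ a e) := by
  obtain ⟨V, hV⟩ := slab_volume k hk a e he δ
  set γ := Real.sqrt (1 - (inner ℝ e e' : ℝ)^2) with hγdef
  have hγnn : 0 ≤ γ := Real.sqrt_nonneg _
  have hγ0 : 0 < γ := by
    rcases lt_or_ge 0 γ with h | h
    · exact h
    · nlinarith
  have h1c : 0 ≤ 1 - (inner ℝ e e' : ℝ)^2 := by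
    by_contra hcon
    push_neg at hcon
    rw [hγdef] at hγ0
    rw [Real.sqrt_eq_zero_of_nonpos hcon.le] at hγ0
    exact lt_irrefl _ hγ0
  have hγsq : γ^2 = 1 - (inner ℝ e e' : ℝ)^2 := Real.sq_sqrt h1c
  have key : ∀ x ∈ euclTube k δ a e ∩ euclTube k δ a' e',
      ∀ y ∈ euclTube k δ a e ∩ euclTube k δ a' e',
      |(inner ℝ (x - a) e : ℝ) - (inner ℝ (y - a) e : ℝ)| ≤ 2 * δ / γ := by
    rintro x ⟨⟨hx1, hx2⟩, ⟨hx1', hx2'⟩⟩ y ⟨⟨hy1, hy2⟩, ⟨hy1', hy2'⟩⟩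
    have hid : ((inner ℝ (x - a) e : ℝ) - (inner ℝ (y - a) e : ℝ)) • e
        - ((inner ℝ (x - a') e' : ℝ) - (inner ℝ (y - a') e' : ℝ)) • e' =
        ((x - a' - (inner ℝ (x - a') e' : ℝ) • e') - (y - a' - (inner ℝ (y - a') e' : ℝ) • e'))
        - ((x - a - (inner ℝ (x - a) e : ℝ) • e) - (y - a - (inner ℝ (y - a) e : ℝ) • e)) := by
      module
    have hn1 : ‖(x - a' - (inner ℝ (x - a') e' : ℝ) • e') - (y - a' - (inner ℝ (y - a') e' : ℝ) • e')‖
        ≤ δ / 2 + δ / 2 := le_trans (norm_sub_le _ _) (add_le_add hx2' hy2')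
    have hn2 : ‖(x - a - (inner ℝ (x - a) e : ℝ) • e) - (y - a - (inner ℝ (y - a) e : ℝ) • e)‖
        ≤ δ / 2 + δ / 2 := le_trans (norm_sub_le _ _) (add_le_add hx2 hy2)
    set τ : ℝ := (inner ℝ (x - a) e : ℝ) - (inner ℝ (y - a) e : ℝ) with hτ
    set τ' : ℝ := (inner ℝ (x - a') e' : ℝ) - (inner ℝ (y - a') e' : ℝ) with hτ'
    have hnorm : ‖τ • e - τ' • e'‖ ≤ 2 * δ := by
      rw [hid]
      refine le_trans (norm_sub_le _ _) ?_
      linarith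
    have hexp : ‖τ • e - τ' • e'‖^2 = τ^2 - 2*τ*τ'*(inner ℝ e e' : ℝ) + τ'^2 := by
      rw [norm_sub_sq_real, real_inner_smul_left, real_inner_smul_right, norm_smul, norm_smul,
        he, he', Real.norm_eq_abs, Real.norm_eq_abs, mul_one, mul_one, sq_abs, sq_abs]
      ring
    have hsq2 : τ^2 - 2*τ*τ'*(inner ℝ e e' : ℝ) + τ'^2 ≤ (2*δ)^2 := by
      rw [← hexp]
      exact pow_le_pow_left₀ (norm_nonneg _) hnorm 2
    have habs : |τ| * γ ≤ 2*δ := arith2 (arith1 hsq2 hγsq) hγnn (by linarith)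
    calc |τ| = |τ| * γ / γ := by field_simp
      _ ≤ 2*δ/γ := by exact div_le_div_of_nonneg_right habs hγnn
  rcases Set.eq_empty_or_nonempty (euclTube k δ a e ∩ euclTube k δ a' e') with hne | ⟨x₀, hx₀⟩
  · rw [hne]
    simp
  · set t₀ : ℝ := (inner ℝ (x₀ - a) e : ℝ) with ht₀
    have hsub : euclTube k δ a e ∩ euclTube k δ a' e'
        ⊆ slab k a e δ (t₀ - 2*δ/γ) (t₀ + 2*δ/γ) := by
      intro x hx
      have hk2 := key x hx x₀ hx₀
      have h1 := abs_le.mp hk2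
      refine ⟨Set.mem_Icc.mpr ⟨by linarith [h1.1], by linarith [h1.2]⟩, hx.1.2⟩
    calc volume (euclTube k δ a e ∩ euclTube k δ a' e')
        ≤ volume (slab k a e δ (t₀ - 2*δ/γ) (t₀ + 2*δ/γ)) := measure_mono hsub
      _ = ENNReal.ofReal ((t₀ + 2*δ/γ) - (t₀ - 2*δ/γ)) * V := hV _ _
      _ ≤ ENNReal.ofReal c₀ * V := by
          refine mul_le_mul_left (ENNReal.ofReal_le_ofReal ?_) V
          have hrw : (t₀ + 2*δ/γ) - (t₀ - 2*δ/γ) = 4*δ/γ := by ring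
          rw [hrw, div_le_iff₀ hγ0]
          nlinarith
      _ = ENNReal.ofReal c₀ * volume (euclTube k δ a e) := by
          rw [euclTube_eq_slab, hV]
          norm_num

def snocE (m : ℕ) (v : Eu m) (t : ℝ) : Eu (m+1) :=
  WithLp.toLp 2 (Fin.snoc (fun i => v i) t : Fin (m+1) → ℝ)

lemma snocE_sub (m : ℕ) (v w : Eu m) (s t : ℝ) :
    snocE m v s - snocE m w t = snocE m (v - w) (s - t) := by
  ext i
  show (Fin.snoc (fun i => v i) s : Fin (m+1) → ℝ) i - (Fin.snoc (fun i => w i) t : Fin (m+1) → ℝ) i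
    = (Fin.snoc (fun i => (v - w) i) (s - t) : Fin (m+1) → ℝ) i
  refine Fin.lastCases ?_ (fun j => ?_) i
  · simp [Fin.snoc_last]
  · simp [Fin.snoc_castSucc]

lemma inner_snocE (m : ℕ) (v w : Eu m) (s t : ℝ) :
    (inner ℝ (snocE m v s) (snocE m w t) : ℝ) = (inner ℝ v w : ℝ) + s * t := by
  rw [PiLp.inner_apply, PiLp.inner_apply, Fin.sum_univ_castSucc]
  simp [RCLike.inner_apply, snocE, Fin.snoc_castSucc, Fin.snoc_last]
  ring

lemma norm_sq_snocE (m : ℕ) (v : Eu m) (t : ℝ) : ‖snocE m v t‖^2 = ‖v‖^2 + t^2 := by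
  rw [← real_inner_self_eq_norm_sq, ← real_inner_self_eq_norm_sq, inner_snocE]
  ring

lemma norm_snocE_one (m : ℕ) (v : Eu m) (hv : ‖v‖ ≤ 1) :
    ‖snocE m v (Real.sqrt (1 - ‖v‖^2))‖ = 1 := by
  have h0 : (0:ℝ) ≤ 1 - ‖v‖^2 := by nlinarith [norm_nonneg v]
  have h1 : ‖snocE m v (Real.sqrt (1 - ‖v‖^2))‖^2 = 1 := by
    rw [norm_sq_snocE, Real.sq_sqrt h0]
    ring
  nlinarith [norm_nonneg (snocE m v (Real.sqrt (1 - ‖v‖^2)))]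

lemma arith5 (d σ P X : ℝ) (h1 : d * σ = P) (h2 : P^2 ≤ X^2 * 1) (h3 : 1 ≤ σ) :
    d^2 ≤ X^2 := by
  have h4 : d^2*σ^2 = P^2 := by rw [← h1]; ring
  nlinarith [h4, mul_nonneg (sq_nonneg d) (mul_nonneg (by linarith : (0:ℝ) ≤ σ - 1)
    (by linarith : (0:ℝ) ≤ σ + 1))]

lemma arith4 (A I T : ℝ) : A - I^2 ≤ A - 2*(T*I) + (|T| * 1)^2 := by
  nlinarith [sq_nonneg (T - I), sq_abs T]

lemma tube_disjoint (m : ℕ) {δ r : ℝ} (hδ : 0 < δ) (hr : 20 * δ ≤ r)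
    (p q p' q' : Eu m)
    (hv : ‖q - p‖ ≤ 1/2) (hv' : ‖q' - p'‖ ≤ 1/2)
    (hpp' : r ≤ ‖p - p'‖) (hvv' : ‖(q - p) - (q' - p')‖ ≤ r / 2) :
    euclTube (m+1) δ (snocE m ((2⁻¹ : ℝ) • (p + q)) 1)
        (snocE m (q - p) (Real.sqrt (1 - ‖q - p‖^2)))
      ∩ euclTube (m+1) δ (snocE m ((2⁻¹ : ℝ) • (p' + q')) 1)
        (snocE m (q' - p') (Real.sqrt (1 - ‖q' - p'‖^2))) = ∅ := by
  set v := q - p with hvdef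
  set v' := q' - p' with hv'def
  set s := Real.sqrt (1 - ‖v‖^2) with hsdef
  set s' := Real.sqrt (1 - ‖v'‖^2) with hs'def
  set a := snocE m ((2⁻¹ : ℝ) • (p + q)) 1 with hadef
  set a' := snocE m ((2⁻¹ : ℝ) • (p' + q')) 1 with ha'def
  set e := snocE m v s with hedef
  set e' := snocE m v' s' with he'def
  have hs0 : 0 ≤ s := Real.sqrt_nonneg _
  have hs'0 : 0 ≤ s' := Real.sqrt_nonneg _
  have hssq : s^2 = 1 - ‖v‖^2 := Real.sq_sqrt (by nlinarith [norm_nonneg v])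
  have hs'sq : s'^2 = 1 - ‖v'‖^2 := Real.sq_sqrt (by nlinarith [norm_nonneg v'])
  have hshalf : 1/2 ≤ s := by
    nlinarith [mul_self_le_mul_self (norm_nonneg v) hv, norm_nonneg v]
  have hs'half : 1/2 ≤ s' := by
    nlinarith [mul_self_le_mul_self (norm_nonneg v') hv', norm_nonneg v']
  -- |s - s'| ≤ ‖v - v'‖
  have hnn := abs_le.mp (abs_norm_sub_norm_le v v')
  have hBA : (‖v'‖ - ‖v‖)^2 ≤ ‖v - v'‖^2 := by nlinarith [hnn.1, hnn.2]
  have hsum1 : (‖v‖ + ‖v'‖)^2 ≤ 1 := by nlinarith [norm_nonneg v, norm_nonneg v']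
  have he1 : (s - s') * (s + s') = ‖v'‖^2 - ‖v‖^2 := by linear_combination hssq - hs'sq
  have hss' : (s - s')^2 ≤ ‖v - v'‖^2 := by
    have he2 : (‖v'‖^2 - ‖v‖^2)^2 ≤ ‖v - v'‖^2 * 1 := by
      calc (‖v'‖^2 - ‖v‖^2)^2 = (‖v'‖ - ‖v‖)^2 * (‖v‖ + ‖v'‖)^2 := by ring
        _ ≤ ‖v - v'‖^2 * 1 := mul_le_mul hBA hsum1 (sq_nonneg _) (sq_nonneg _)
    exact arith5 _ _ _ _ he1 he2 (by linarith)
  have hee' : ‖e - e'‖^2 ≤ 2 * ‖v - v'‖^2 := by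
    rw [hedef, he'def, snocE_sub, norm_sq_snocE]
    linarith [hss']
  set h := (2⁻¹ : ℝ) • (p + q) - (2⁻¹ : ℝ) • (p' + q') with hhdef
  have hda : a - a' = snocE m h 0 := by
    rw [hadef, ha'def, snocE_sub, sub_self]
  have hdnsq : ‖a - a'‖^2 = ‖h‖^2 := by
    rw [hda, norm_sq_snocE]
    ring
  have hhp : p - p' = h - (2⁻¹ : ℝ) • (v - v') := by
    rw [hhdef, hvdef, hv'def]
    module
  have hH : 3/4 * r ≤ ‖h‖ := by
    have h1 : ‖p - p'‖ ≤ ‖h‖ + ‖(2⁻¹ : ℝ) • (v - v')‖ := by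
      rw [hhp]
      exact norm_sub_le _ _
    have h2 : ‖(2⁻¹ : ℝ) • (v - v')‖ = 2⁻¹ * ‖v - v'‖ := by
      rw [norm_smul]
      norm_num
    rw [h2] at h1
    linarith
  have henorm : ‖e‖ = 1 := by
    rw [hedef, hsdef]
    exact norm_snocE_one m v (by linarith)
  -- assume nonempty
  rw [Set.eq_empty_iff_forall_notMem]
  rintro x ⟨⟨hx1, hx2⟩, ⟨hx1', hx2'⟩⟩
  set t : ℝ := (inner ℝ (x - a) e : ℝ) with htdef
  set t' : ℝ := (inner ℝ (x - a') e' : ℝ) with ht'def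
  have hid : (a - a') - (t' - t) • e = t' • (e' - e)
      + ((x - a' - t' • e') - (x - a - t • e)) := by
    module
  have ht'half := abs_le.mp hx1'
  have hrho : ‖(a - a') - (t' - t) • e‖ ≤ 2⁻¹ * ‖e' - e‖ + δ := by
    rw [hid]
    refine le_trans (norm_add_le _ _) ?_
    have h3 : ‖t' • (e' - e)‖ ≤ 2⁻¹ * ‖e' - e‖ := by
      rw [norm_smul, Real.norm_eq_abs]
      have habs : |t'| ≤ 2⁻¹ := abs_le.mpr ⟨by linarith [ht'half.1], by linarith [ht'half.2]⟩
      exact mul_le_mul_of_nonneg_right habs (norm_nonneg _)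
    have h4 : ‖(x - a' - t' • e') - (x - a - t • e)‖ ≤ δ/2 + δ/2 :=
      le_trans (norm_sub_le _ _) (add_le_add hx2' hx2)
    linarith
  have hlow : ‖a - a'‖^2 - (inner ℝ (a - a') e : ℝ)^2 ≤ ‖(a - a') - (t' - t) • e‖^2 := by
    rw [norm_sub_sq_real (a - a') ((t' - t) • e), real_inner_smul_right, norm_smul,
      Real.norm_eq_abs, henorm]
    exact arith4 _ _ _
  have hde : (inner ℝ (a - a') e : ℝ) = (inner ℝ h v : ℝ) := by
    rw [hda, hedef, inner_snocE]
    ring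
  have hIv : |(inner ℝ h v : ℝ)| ≤ ‖h‖ * (1/2) := by
    refine le_trans (abs_real_inner_le_norm h v) ?_
    have := mul_le_mul_of_nonneg_left hv (norm_nonneg h)
    linarith
  have hX2 : ‖e' - e‖^2 ≤ 2*((r/2)^2) := by
    have hrev : ‖e' - e‖ = ‖e - e'‖ := norm_sub_rev _ _
    have hv2 : ‖v - v'‖^2 ≤ (r/2)^2 := pow_le_pow_left₀ (norm_nonneg _) hvv' 2
    rw [hrev]
    linarith [hee', hv2]
  rw [hde, hdnsq] at hlow
  exact arith3 hδ hr hH (le_trans (by linarith) hH) hIv hX2 (norm_nonneg _) (norm_nonneg _)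
    hlow hrho

lemma dir_angle (m : ℕ) {δ c₀ rr : ℝ} (hδ : 0 < δ) (hc₀ : 0 < c₀)
    (hrr : 20 * δ ≤ c₀ * rr) (v v' : Eu m)
    (hv : ‖v‖ ≤ 1/2) (hv' : ‖v'‖ ≤ 1/2) (hsep : rr / 2 ≤ ‖v - v'‖) :
    4 * δ ≤ c₀ * Real.sqrt (1 - (inner ℝ (snocE m v (Real.sqrt (1 - ‖v‖^2)))
      (snocE m v' (Real.sqrt (1 - ‖v'‖^2))) : ℝ)^2) := by
  set s := Real.sqrt (1 - ‖v‖^2) with hsdef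
  set s' := Real.sqrt (1 - ‖v'‖^2) with hs'def
  have hs0 : 0 ≤ s := Real.sqrt_nonneg _
  have hs'0 : 0 ≤ s' := Real.sqrt_nonneg _
  have hssq : s^2 = 1 - ‖v‖^2 := Real.sq_sqrt (by nlinarith [norm_nonneg v])
  have hs'sq : s'^2 = 1 - ‖v'‖^2 := Real.sq_sqrt (by nlinarith [norm_nonneg v'])
  have hrr0 : 0 < rr := by nlinarith
  have hinner : (inner ℝ (snocE m v s) (snocE m v' s') : ℝ) = (inner ℝ v v' : ℝ) + s * s' := by
    rw [inner_snocE]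
  have hvv : |(inner ℝ v v' : ℝ)| ≤ 1/4 := by
    refine le_trans (abs_real_inner_le_norm v v') ?_
    nlinarith [norm_nonneg v, norm_nonneg v']
  have hvvle := abs_le.mp hvv
  have hss1 : 3/4 ≤ s * s' := by
    nlinarith [mul_nonneg hs0 hs'0, norm_nonneg v, norm_nonneg v',
      mul_self_le_mul_self (norm_nonneg v) hv, mul_self_le_mul_self (norm_nonneg v') hv',
      sq_nonneg (s*s' - 3/4), sq_nonneg (s - s')]
  set c : ℝ := (inner ℝ v v' : ℝ) + s * s' with hcdef
  have hc12 : 1/2 ≤ c := by rw [hcdef]; linarith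
  have hAB : ‖v‖ * ‖v'‖ ≤ 1/4 := by nlinarith [norm_nonneg v, norm_nonneg v']
  have hss2 : (s*s')^2 = (1 - ‖v‖^2)*(1 - ‖v'‖^2) := by rw [mul_pow, hssq, hs'sq]
  have hssle : s*s' ≤ 1 - ‖v‖*‖v'‖ := by
    nlinarith [mul_nonneg hs0 hs'0, sq_nonneg (‖v‖ - ‖v'‖), hAB, hss2, hss1]
  have hc1 : c ≤ 1 := by
    rw [hcdef]
    nlinarith [real_inner_le_norm v v']
  have hX : ‖v - v'‖^2 = ‖v‖^2 - 2*(inner ℝ v v' : ℝ) + ‖v'‖^2 := norm_sub_sq_real v v'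
  have h1c : ‖v - v'‖^2 / 2 ≤ 1 - c := by
    rw [hcdef]
    nlinarith [sq_nonneg (s - s')]
  have h1c2 : (rr/3)^2 ≤ 1 - c^2 := by
    have hXr : (rr/2)^2 ≤ ‖v - v'‖^2 := by
      nlinarith [hsep, hrr0, norm_nonneg (v - v')]
    nlinarith [sq_nonneg (rr/2)]
  have hsqrt : rr/3 ≤ Real.sqrt (1 - c^2) := by
    have := Real.sqrt_le_sqrt h1c2
    rwa [Real.sqrt_sq (by positivity : (0:ℝ) ≤ rr/3)] at this
  rw [hinner]
  calc (4:ℝ) * δ ≤ c₀ * rr / 3 := by linarith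
    _ ≤ c₀ * Real.sqrt (1 - c^2) := by
        rw [mul_div_assoc]
        exact mul_le_mul_of_nonneg_left hsqrt hc₀.le

lemma abs_coord_le (k : ℕ) (x : Eu k) (i : Fin k) : |x i| ≤ ‖x‖ := by
  rw [EuclideanSpace.norm_eq]
  have h1 : |x i| = Real.sqrt (|x i|^2) := (Real.sqrt_sq (abs_nonneg _)).symm
  rw [h1]
  apply Real.sqrt_le_sqrt
  rw [sq_abs]
  have : ∀ j ∈ Finset.univ, (0:ℝ) ≤ ‖x j‖^2 := fun j _ => sq_nonneg _
  calc (x i)^2 = ‖x i‖^2 := by rw [Real.norm_eq_abs, sq_abs]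
    _ ≤ ∑ j, ‖x j‖^2 := Finset.single_le_sum this (Finset.mem_univ i)

def horiz (m : ℕ) (x : Eu (m+1)) : Eu m := WithLp.toLp 2 (fun j => x (Fin.castSucc j))

lemma horiz_add (m : ℕ) (x y : Eu (m+1)) : horiz m (x + y) = horiz m x + horiz m y := rfl

lemma horiz_smul (m : ℕ) (c : ℝ) (x : Eu (m+1)) : horiz m (c • x) = c • horiz m x := rfl

lemma horiz_snocE (m : ℕ) (v : Eu m) (t : ℝ) : horiz m (snocE m v t) = v := by
  ext j
  simp [horiz, snocE]

lemma norm_horiz_le (m : ℕ) (x : Eu (m+1)) : ‖horiz m x‖ ≤ ‖x‖ := by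
  rw [EuclideanSpace.norm_eq, EuclideanSpace.norm_eq]
  apply Real.sqrt_le_sqrt
  rw [Fin.sum_univ_castSucc]
  have h2 : (0:ℝ) ≤ ‖x (Fin.last m)‖^2 := sq_nonneg _
  have h3 : ∑ i : Fin m, ‖(horiz m x) i‖^2 = ∑ i : Fin m, ‖x (Fin.castSucc i)‖^2 := rfl
  linarith

end KakeyaAux

open KakeyaAux

/-- a convex discretized set of the right volume supports `∼N` essentially
distinct δ-tubes in the cylinder over it. -/
theorem statement6 (n : ℕ) (hn : 2 ≤ n) (c₀ c₁ : ℝ)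
    (hc₀ : c₀ ∈ Set.Ioo (0 : ℝ) 1) (hc₁ : c₁ ∈ Set.Ioo (0 : ℝ) 1) :
    ∃ c₂ : ℝ, 0 < c₂ ∧
      ∀ δ : ℝ, δ ∈ Set.Ioo (0 : ℝ) (1 / 100) →
      ∀ N : ℝ, 1 ≤ N →
      ∀ E : Set (EuclideanSpace ℝ (Fin (n - 1))),
        Convex ℝ E →
        IsDiscretized (n - 1) (9 * δ) E →
        Metric.diam E ≤ 1 →
        ENNReal.ofReal (c₁ * Real.sqrt N * δ ^ (n - 1)) ≤ volume E →
        volume E ≤ ENNReal.ofReal (c₁⁻¹ * Real.sqrt N * δ ^ (n - 1)) →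
        ∃ (M : ℕ) (a e : Fin M → EuclideanSpace ℝ (Fin n)),
          c₂ * N ≤ (M : ℝ) ∧ (∀ i, ‖e i‖ = 1) ∧ EssentiallyDistinct n δ c₀ a e ∧
          ∀ i, euclTube n δ (a i) (e i) ⊆
            cylSet n (by omega) E (Set.Icc (0 : ℝ) 2) := by
  classical
  obtain ⟨hc₀0, hc₀1⟩ := hc₀
  obtain ⟨hc₁0, hc₁1⟩ := hc₁
  obtain ⟨m, rfl⟩ : ∃ m, n = m + 1 := ⟨n - 1, by omega⟩
  have hm : 1 ≤ m := by omega
  have hm0 : (0:ℝ) < (m:ℝ) := by exact_mod_cast hm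
  have hm' : (1:ℝ) ≤ Real.sqrt m := by
    rw [show (1:ℝ) = Real.sqrt 1 from (Real.sqrt_one).symm]
    exact Real.sqrt_le_sqrt (by exact_mod_cast hm)
  set g : ℝ := 2 * Real.sqrt m with hg
  have hg0 : 0 < g := by rw [hg]; linarith
  set Λ : ℝ := 20 / c₀ with hΛdef
  have hΛ20 : 20 ≤ Λ := by
    rw [hΛdef, le_div_iff₀ hc₀0]
    nlinarith
  set Bv := volume (Metric.ball (0 : Eu m) 1) with hBvdef
  have hBv0 : 0 < Bv := Metric.measure_ball_pos _ _ one_pos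
  have hBvfin : Bv ≠ ⊤ := measure_ball_lt_top.ne
  set Br : ℝ := Bv.toReal with hBrdef
  have hBr0 : 0 < Br := ENNReal.toReal_pos hBv0.ne' hBvfin
  have h9Λ : (0:ℝ) < 9 + Λ := by linarith
  set A : ℝ := c₁ / ((9 + Λ)^m * Br) with hAdef
  have hA0 : 0 < A := div_pos hc₁0 (mul_pos (pow_pos h9Λ m) hBr0)
  set K₀ : ℕ := ⌈(2:ℝ)*g⌉₊ + 2 with hK₀def
  set C : ℝ := (K₀:ℝ)^m with hCdef
  have hC0 : 0 < C := pow_pos (by exact_mod_cast Nat.succ_le_succ (Nat.zero_le _) : (0:ℝ) < (K₀:ℝ)) m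
  refine ⟨(A / C)^2, by positivity, ?_⟩
  rintro δ ⟨hδ0, hδ1⟩ N hN E hconv hdisc hdiam hvol1 hvol2
  simp only [Nat.add_sub_cancel] at hvol1 hvol2
  change Set (Eu m) at E
  have hN0 : (0:ℝ) ≤ N := by linarith
  have hN1 : (1:ℝ) ≤ Real.sqrt N := by
    rw [show (1:ℝ) = Real.sqrt 1 from (Real.sqrt_one).symm]
    exact Real.sqrt_le_sqrt hN
  set r : ℝ := Λ * δ with hrdef
  have hr0 : 0 < r := mul_pos (by linarith) hδ0
  have hr20 : 20 * δ ≤ r := by rw [hrdef]; nlinarith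
  have hrc₀ : 20 * δ ≤ c₀ * r := by
    rw [hrdef, hΛdef]
    rw [show c₀ * (20 / c₀ * δ) = 20 * δ * (c₀ / c₀) by ring, div_self (ne_of_gt hc₀0)]
    linarith
  have hδm : (0:ℝ) < δ^m := pow_pos hδ0 m
  obtain ⟨S, hSE⟩ := hdisc
  change Set (Eu m) at S
  have hball : ∀ s ∈ S, Metric.closedBall s (9*δ) ⊆ E := by
    intro s hs
    rw [hSE]
    exact Set.subset_biUnion_of_mem (u := fun x => Metric.closedBall x (9*δ)) hs
  have hSsubE : S ⊆ E := fun s hs => hball s hs (Metric.mem_closedBall_self (by linarith))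
  have hvolpos : (0:ℝ≥0∞) < volume E :=
    lt_of_lt_of_le (ENNReal.ofReal_pos.mpr (by positivity)) hvol1
  have hvolfin : volume E ≠ ⊤ := (lt_of_le_of_lt hvol2 ENNReal.ofReal_lt_top).ne
  have hEne : E.Nonempty := by
    rcases Set.eq_empty_or_nonempty E with h | h
    · rw [h] at hvolpos; simp at hvolpos
    · exact h
  obtain ⟨x₀, hx₀E⟩ := hEne
  obtain ⟨s₀, hs₀S, -⟩ : ∃ i, ∃ _ : i ∈ S, x₀ ∈ Metric.closedBall i (9*δ) := by
    rw [hSE] at hx₀E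
    exact Set.mem_iUnion₂.mp hx₀E
  -- E is bounded
  have hEbd : Bornology.IsBounded E := by
    by_contra hnb
    have hfar : ∀ R : ℝ, ∃ y ∈ E, R < dist y s₀ := by
      intro R
      by_contra hcon
      push_neg at hcon
      exact hnb ((Metric.isBounded_iff_subset_closedBall s₀).mpr
        ⟨R, fun y hy => Metric.mem_closedBall.mpr (hcon y hy)⟩)
    set v9 : ℝ≥0∞ := volume (Metric.closedBall (0 : Eu m) (9*δ/2)) with hv9
    have hv90 : 0 < v9 := Metric.measure_closedBall_pos _ _ (by linarith)
    have hv9fin : v9 ≠ ⊤ := measure_closedBall_lt_top.ne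
    have hstep : ∀ KK : ℕ, ∃ R : ℝ, 0 ≤ R ∧
        (KK : ℝ≥0∞) * v9 ≤ volume (E ∩ Metric.closedBall s₀ R) := by
      intro KK
      induction KK with
      | zero => exact ⟨0, le_refl _, by simp⟩
      | succ k ih =>
        obtain ⟨R, hR0, hRle⟩ := ih
        obtain ⟨y, hyE, hyfar⟩ := hfar (2*R + 18*δ + 1)
        set mid := (2⁻¹ : ℝ) • (s₀ + y) with hmiddef
        have hmidball : Metric.closedBall mid (9*δ/2) ⊆ E := by
          intro z hz
          have hz' : ‖z - mid‖ ≤ 9*δ/2 := by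
            rw [← dist_eq_norm]
            exact Metric.mem_closedBall.mp hz
          have hdecomp : z = (2⁻¹ : ℝ) • (s₀ + (2:ℝ) • (z - mid)) + (2⁻¹ : ℝ) • y := by
            rw [hmiddef]; module
          rw [hdecomp]
          have h1 : s₀ + (2:ℝ) • (z - mid) ∈ E := by
            apply hball s₀ hs₀S
            rw [Metric.mem_closedBall, dist_eq_norm]
            have h2 : s₀ + (2:ℝ)•(z-mid) - s₀ = (2:ℝ)•(z-mid) := by module
            rw [h2, norm_smul, Real.norm_eq_abs]
            rw [show |(2:ℝ)| = 2 by norm_num]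
            linarith
          exact hconv h1 hyE (by norm_num) (by norm_num) (by norm_num)
        have hdmid : dist mid s₀ = dist y s₀ / 2 := by
          rw [dist_eq_norm, dist_eq_norm]
          have h2 : mid - s₀ = (2⁻¹:ℝ) • (y - s₀) := by rw [hmiddef]; module
          rw [h2, norm_smul, Real.norm_eq_abs]
          rw [show |(2⁻¹:ℝ)| = 2⁻¹ by norm_num]
          ring
        have hdistmid : R + 9*δ < dist mid s₀ := by
          rw [hdmid]; linarith
        set R' := dist mid s₀ + 9*δ/2 with hR'def
        have hR'0 : 0 ≤ R' := by positivity
        refine ⟨R', hR'0, ?_⟩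
        set T := Metric.closedBall mid (9*δ/2) with hT
        have hTX : T ⊆ E ∩ Metric.closedBall s₀ R' := by
          intro z hz
          refine ⟨hmidball hz, Metric.mem_closedBall.mpr ?_⟩
          calc dist z s₀ ≤ dist z mid + dist mid s₀ := dist_triangle _ _ _
            _ ≤ 9*δ/2 + dist mid s₀ := by linarith [Metric.mem_closedBall.mp hz]
            _ = R' := by rw [hR'def]; ring
        have hEsub : E ∩ Metric.closedBall s₀ R ⊆ (E ∩ Metric.closedBall s₀ R') \ T := by
          rintro z ⟨hzE, hzB⟩
          have hzR : dist z s₀ ≤ R := Metric.mem_closedBall.mp hzB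
          refine ⟨⟨hzE, Metric.mem_closedBall.mpr (by rw [hR'def]; linarith)⟩, ?_⟩
          intro hzT
          have h3 : dist z mid ≤ 9*δ/2 := Metric.mem_closedBall.mp hzT
          have h4 : dist mid s₀ ≤ dist mid z + dist z s₀ := dist_triangle _ _ _
          rw [dist_comm mid z] at h4
          linarith
        have hkey := measure_inter_add_diff (μ := volume)
          (E ∩ Metric.closedBall s₀ R') (measurableSet_closedBall (x := mid) (ε := 9*δ/2))
        have hT1 : v9 ≤ volume ((E ∩ Metric.closedBall s₀ R') ∩ T) := by
          rw [hv9]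
          rw [show volume (Metric.closedBall (0:Eu m) (9*δ/2))
            = volume (Metric.closedBall mid (9*δ/2)) from
              (Measure.addHaar_closedBall_center volume mid (9*δ/2)).symm]
          exact measure_mono (Set.subset_inter hTX (le_refl T))
        have hT2 : (k : ℝ≥0∞) * v9 ≤ volume ((E ∩ Metric.closedBall s₀ R') \ T) :=
          le_trans hRle (measure_mono hEsub)
        calc ((k+1 : ℕ) : ℝ≥0∞) * v9 = (k : ℝ≥0∞) * v9 + v9 := by
              push_cast
              ring
          _ ≤ volume ((E ∩ Metric.closedBall s₀ R') \ T)
              + volume ((E ∩ Metric.closedBall s₀ R') ∩ T) := add_le_add hT2 hT1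
          _ = volume (E ∩ Metric.closedBall s₀ R') := by
              rw [add_comm]
              exact hkey
    obtain ⟨KK, hKK⟩ := ENNReal.exists_nat_gt (ENNReal.div_lt_top hvolfin hv90.ne').ne
    obtain ⟨R, _, hle⟩ := hstep KK
    have h5 : (KK : ℝ≥0∞) * v9 ≤ volume E :=
      le_trans hle (measure_mono Set.inter_subset_left)
    have h6 : (KK : ℝ≥0∞) ≤ volume E / v9 :=
      (ENNReal.le_div_iff_mul_le (Or.inl hv90.ne') (Or.inl hv9fin)).mpr h5
    exact absurd hKK (not_lt.mpr h6)
  have hdistE : ∀ x ∈ E, ∀ y ∈ E, dist x y ≤ 1 := fun x hx y hy =>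
    le_trans (Metric.dist_le_diam_of_mem hEbd hx hy) hdiam
  set K := convexHull ℝ S with hKdef
  have hSK : S ⊆ K := subset_convexHull ℝ S
  have hKball : K ⊆ Metric.closedBall s₀ 1 :=
    convexHull_min (fun s hs => Metric.mem_closedBall.mpr
      (hdistE s (hSsubE hs) s₀ (hSsubE hs₀S))) (convex_closedBall _ _)
  have hKE : ∀ kk ∈ K, ∀ u : Eu m, ‖u‖ ≤ 9*δ → kk + u ∈ E := by
    have hDconv : Convex ℝ {z : Eu m | ∀ u : Eu m, ‖u‖ ≤ 9*δ → z + u ∈ E} := by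
      intro z1 h1 z2 h2 aa bb ha hb hab u hu
      have heq : aa • z1 + bb • z2 + u = aa • (z1 + u) + bb • (z2 + u) := by
        have h3 : aa • (z1+u) + bb • (z2+u) = aa•z1 + bb•z2 + (aa+bb)•u := by module
        rw [h3, hab, one_smul]
      rw [heq]
      exact hconv (h1 u hu) (h2 u hu) ha hb hab
    have hSD : S ⊆ {z : Eu m | ∀ u : Eu m, ‖u‖ ≤ 9*δ → z + u ∈ E} := by
      intro s hs u hu
      apply hball s hs
      rw [Metric.mem_closedBall, dist_eq_norm, add_sub_cancel_left]
      exact hu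
    exact fun kk hkk => convexHull_min hSD hDconv hkk
  -- maximal separated set
  set Sep : Set (Set (Eu m)) := {P | P ⊆ K ∧ P.Pairwise fun x y => r ≤ dist x y} with hSepdef
  have hsingleton : ({s₀} : Set (Eu m)) ∈ Sep :=
    ⟨Set.singleton_subset_iff.mpr (hSK hs₀S), Set.pairwise_singleton _ _⟩
  have hchain : ∀ c ⊆ Sep, IsChain (· ⊆ ·) c → c.Nonempty →
      ∃ ub ∈ Sep, ∀ s ∈ c, s ⊆ ub := by
    intro c hc hch _
    refine ⟨⋃₀ c, ⟨Set.sUnion_subset fun s hs => (hc hs).1, ?_⟩,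
      fun s hs => Set.subset_sUnion_of_mem hs⟩
    intro x hx y hy hxy
    obtain ⟨sx, hsx, hxsx⟩ := hx
    obtain ⟨sy, hsy, hysy⟩ := hy
    obtain ⟨sz, hsz, hx2, hy2⟩ := hch.directedOn sx hsx sy hsy
    exact (hc hsz).2 (hx2 hxsx) (hy2 hysy) hxy
  obtain ⟨P, hs₀P, hPmax⟩ := zorn_subset_nonempty Sep hchain {s₀} hsingleton
  have hPK : P ⊆ K := hPmax.prop.1
  have hPsep : P.Pairwise fun x y => r ≤ dist x y := hPmax.prop.2
  have hs₀inP : s₀ ∈ P := hs₀P rfl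
  -- P is finite
  have hPfin : P.Finite := by
    by_contra hinf
    set ρ := r/3 with hρdef
    have hρ0 : 0 < ρ := by rw [hρdef]; linarith
    set vt := volume (Metric.closedBall (0 : Eu m) ρ) with hvt
    have hvt0 : 0 < vt := Metric.measure_closedBall_pos _ _ hρ0
    have hvtfin : vt ≠ ⊤ := measure_closedBall_lt_top.ne
    set W := volume (Metric.closedBall s₀ (1 + ρ)) with hW
    have hWfin : W ≠ ⊤ := measure_closedBall_lt_top.ne
    set KK : ℕ := ⌈W.toReal / vt.toReal⌉₊ + 1 with hKKdef
    obtain ⟨T, hTP, hTcard⟩ := Set.Infinite.exists_subset_card_eq hinf KK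
    have hdisj : (↑T : Set (Eu m)).PairwiseDisjoint
        (fun p => Metric.closedBall p ρ) := by
      intro p hp q hq hpq
      have hrpq : r ≤ dist p q := hPsep (hTP hp) (hTP hq) hpq
      refine Set.disjoint_left.mpr fun z hzp hzq => ?_
      have h1 : dist z p ≤ ρ := Metric.mem_closedBall.mp hzp
      have h2 : dist z q ≤ ρ := Metric.mem_closedBall.mp hzq
      have h3 : dist p q ≤ dist p z + dist z q := dist_triangle _ _ _
      rw [dist_comm p z] at h3
      rw [hρdef] at h1 h2
      linarith
    have hsum : ∑ p ∈ T, volume (Metric.closedBall p ρ) ≤ W := by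
      rw [← measure_biUnion_finset hdisj (fun p _ => measurableSet_closedBall)]
      apply measure_mono
      intro z hz
      obtain ⟨p, hpT, hzp⟩ := Set.mem_iUnion₂.mp hz
      have hp1 : dist p s₀ ≤ 1 := Metric.mem_closedBall.mp (hKball (hPK (hTP hpT)))
      exact Metric.mem_closedBall.mpr
        (le_trans (dist_triangle z p s₀) (by linarith [Metric.mem_closedBall.mp hzp]))
    have hconst : ∀ p ∈ T, volume (Metric.closedBall p ρ) = vt := fun p _ =>
      Measure.addHaar_closedBall_center _ _ _
    rw [Finset.sum_congr rfl hconst, Finset.sum_const, hTcard, nsmul_eq_mul] at hsum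
    have hreal : (KK : ℝ) * vt.toReal ≤ W.toReal := by
      have h7 := ENNReal.toReal_mono hWfin hsum
      rwa [ENNReal.toReal_mul, ENNReal.toReal_natCast] at h7
    have hvt0' : 0 < vt.toReal := ENNReal.toReal_pos hvt0.ne' hvtfin
    have hlt : W.toReal / vt.toReal < KK := by
      rw [hKKdef]
      push_cast
      linarith [Nat.le_ceil (W.toReal / vt.toReal)]
    rw [div_lt_iff₀ hvt0'] at hlt
    linarith
  set Pf : Finset (Eu m) := hPfin.toFinset with hPfdef
  have hPfmem : ∀ p, p ∈ Pf ↔ p ∈ P := fun p => Set.Finite.mem_toFinset _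
  -- covering bound
  have hcover : E ⊆ ⋃ p ∈ Pf, Metric.closedBall p ((9+Λ)*δ) := by
    intro y hy
    rw [hSE] at hy
    obtain ⟨s, hsS, hys⟩ := Set.mem_iUnion₂.mp hy
    have hex : ∃ p ∈ P, dist s p < r := by
      by_contra hno
      push_neg at hno
      have hsnotP : s ∉ P := by
        intro hsP
        have h8 := hno s hsP
        rw [dist_self] at h8
        linarith
      have hins : insert s P ∈ Sep := by
        constructor
        · exact Set.insert_subset (hSK hsS) hPK
        · rw [Set.pairwise_insert]
          exact ⟨hPsep, fun p hp _ => ⟨hno p hp, by rw [dist_comm]; exact hno p hp⟩⟩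
      have h9 := hPmax.2 hins (Set.subset_insert s P)
      exact hsnotP (h9 (Set.mem_insert s P))
    obtain ⟨p, hpP, hsp⟩ := hex
    refine Set.mem_iUnion₂.mpr ⟨p, (hPfmem p).mpr hpP, Metric.mem_closedBall.mpr ?_⟩
    have h1 : dist y s ≤ 9*δ := Metric.mem_closedBall.mp hys
    rw [hrdef] at hsp
    calc dist y p ≤ dist y s + dist s p := dist_triangle _ _ _
      _ ≤ 9*δ + Λ*δ := by linarith
      _ = (9+Λ)*δ := by ring
  have h9Λδ : (0:ℝ) ≤ (9+Λ)*δ := le_of_lt (mul_pos h9Λ hδ0)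
  have hfr : Module.finrank ℝ (Eu m) = m := finrank_euclideanSpace_fin
  have hvle : volume E ≤ (Pf.card : ℝ≥0∞) * (ENNReal.ofReal (((9+Λ)*δ)^m) * Bv) := by
    calc volume E ≤ volume (⋃ p ∈ Pf, Metric.closedBall p ((9+Λ)*δ)) := measure_mono hcover
      _ ≤ ∑ p ∈ Pf, volume (Metric.closedBall p ((9+Λ)*δ)) := measure_biUnion_finset_le _ _
      _ = ∑ _p ∈ Pf, ENNReal.ofReal (((9+Λ)*δ)^m) * Bv := by
          refine Finset.sum_congr rfl fun p _ => ?_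
          rw [Measure.addHaar_closedBall volume p h9Λδ, hfr]
      _ = (Pf.card : ℝ≥0∞) * (ENNReal.ofReal (((9+Λ)*δ)^m) * Bv) := by
          rw [Finset.sum_const, nsmul_eq_mul]
  have hcard1 : A * Real.sqrt N ≤ (Pf.card : ℝ) := by
    have h1 := le_trans hvol1 hvle
    have hfin2 : (Pf.card : ℝ≥0∞) * (ENNReal.ofReal (((9+Λ)*δ)^m) * Bv) ≠ ⊤ :=
      ENNReal.mul_ne_top (ENNReal.natCast_ne_top _)
        (ENNReal.mul_ne_top ENNReal.ofReal_ne_top hBvfin)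
    have h2 := ENNReal.toReal_mono hfin2 h1
    rw [ENNReal.toReal_ofReal (by positivity), ENNReal.toReal_mul, ENNReal.toReal_mul,
      ENNReal.toReal_natCast, ENNReal.toReal_ofReal (by positivity)] at h2
    rw [hAdef, div_mul_eq_mul_div, div_le_iff₀ (mul_pos (pow_pos h9Λ m) hBr0)]
    rw [mul_pow] at h2
    have h3 : (c₁ * Real.sqrt N) * δ^m
        ≤ ((Pf.card : ℝ) * ((9+Λ)^m * Br)) * δ^m := by
      rw [← hBrdef] at h2
      nlinarith [h2]
    exact le_of_mul_le_mul_right h3 hδm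
  -- pigeonhole by cells
  set ψ : Eu m → (Fin m → ℤ) := fun x i => ⌊x i * g⌋ with hψdef
  have hPfne : Pf.Nonempty := ⟨s₀, (hPfmem s₀).mpr hs₀inP⟩
  obtain ⟨b₀, hb₀img, hb₀max⟩ := Finset.exists_max_image (Pf.image ψ)
    (fun b => (Pf.filter (fun p => ψ p = b)).card) (hPfne.image ψ)
  set P' : Finset (Eu m) := Pf.filter (fun p => ψ p = b₀) with hP'def
  have hP'sub : ∀ p ∈ P', p ∈ P := fun p hp => (hPfmem p).mp (Finset.mem_filter.mp hp).1
  have hcoordb : ∀ p ∈ Pf, ∀ i, ⌊(s₀ i - 1)*g⌋ ≤ ψ p i ∧ ψ p i ≤ ⌊(s₀ i + 1)*g⌋ := by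
    intro p hp i
    have hpK : p ∈ K := hPK ((hPfmem p).mp hp)
    have hdist : dist p s₀ ≤ 1 := Metric.mem_closedBall.mp (hKball hpK)
    have hco : |p i - s₀ i| ≤ 1 := by
      have h1 : p i - s₀ i = (p - s₀) i := rfl
      rw [h1]
      refine le_trans (abs_coord_le m (p - s₀) i) ?_
      rw [dist_eq_norm] at hdist
      exact hdist
    have hle2 := abs_le.mp hco
    constructor
    · exact Int.floor_le_floor (by nlinarith [hle2.1])
    · exact Int.floor_le_floor (by nlinarith [hle2.2])
  have himgcard : (Pf.image ψ).card ≤ K₀^m := by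
    have himgsub : Pf.image ψ ⊆ Fintype.piFinset
        (fun i : Fin m => Finset.Icc (⌊(s₀ i - 1)*g⌋) (⌊(s₀ i + 1)*g⌋)) := by
      intro b hb
      obtain ⟨p, hp, rfl⟩ := Finset.mem_image.mp hb
      rw [Fintype.mem_piFinset]
      intro i
      rw [Finset.mem_Icc]
      exact hcoordb p hp i
    refine le_trans (Finset.card_le_card himgsub) ?_
    rw [Fintype.card_piFinset]
    have hIcc : ∀ i : Fin m,
        (Finset.Icc (⌊(s₀ i - 1)*g⌋) (⌊(s₀ i + 1)*g⌋)).card ≤ K₀ := by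
      intro i
      rw [Int.card_Icc]
      refine Int.toNat_le.mpr ?_
      have hfl1 : (⌊(s₀ i + 1)*g⌋ : ℝ) ≤ (s₀ i + 1)*g := Int.floor_le _
      have hfl2 : (s₀ i - 1)*g - 1 < (⌊(s₀ i - 1)*g⌋ : ℝ) := Int.sub_one_lt_floor _
      have h2g : (2:ℝ)*g ≤ ((⌈(2:ℝ)*g⌉₊ : ℕ) : ℝ) := Nat.le_ceil _
      have hcast : ((⌊(s₀ i + 1)*g⌋ + 1 - ⌊(s₀ i - 1)*g⌋ : ℤ) : ℝ) ≤ ((K₀ : ℕ) : ℝ) := by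
        rw [hK₀def]
        push_cast
        nlinarith
      exact_mod_cast hcast
    calc ∏ i : Fin m, (Finset.Icc (⌊(s₀ i - 1)*g⌋) (⌊(s₀ i + 1)*g⌋)).card
        ≤ ∏ _i : Fin m, K₀ := Finset.prod_le_prod' (fun i _ => hIcc i)
      _ = K₀^m := by rw [Finset.prod_const, Finset.card_univ, Fintype.card_fin]
  have hfibsum : Pf.card ≤ (Pf.image ψ).card * P'.card := by
    rw [Finset.card_eq_sum_card_fiberwise (fun p hp => Finset.mem_image_of_mem ψ hp)]
    calc ∑ b ∈ Pf.image ψ, (Pf.filter (fun p => ψ p = b)).card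
        ≤ ∑ _b ∈ Pf.image ψ, P'.card := Finset.sum_le_sum (fun b hb => hb₀max b hb)
      _ = (Pf.image ψ).card * P'.card := by rw [Finset.sum_const, smul_eq_mul]
  have hP'card : A * Real.sqrt N / C ≤ (P'.card : ℝ) := by
    rw [div_le_iff₀ hC0]
    refine le_trans hcard1 ?_
    have h1 : (Pf.card : ℝ) ≤ ((Pf.image ψ).card : ℝ) * (P'.card : ℝ) := by
      exact_mod_cast hfibsum
    have h2 : ((Pf.image ψ).card : ℝ) ≤ C := by
      rw [hCdef]
      exact_mod_cast himgcard
    calc (Pf.card : ℝ) ≤ ((Pf.image ψ).card : ℝ) * (P'.card : ℝ) := h1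
      _ ≤ C * (P'.card : ℝ) := mul_le_mul_of_nonneg_right h2 (Nat.cast_nonneg _)
      _ = (P'.card : ℝ) * C := by ring
  have hP'half : ∀ p ∈ P', ∀ q ∈ P', dist p q ≤ 1/2 := by
    intro p hp q hq
    have hψp : ψ p = b₀ := (Finset.mem_filter.mp hp).2
    have hψq : ψ q = b₀ := (Finset.mem_filter.mp hq).2
    have hgsq : g^2 = 4*(m:ℝ) := by
      rw [hg, mul_pow, Real.sq_sqrt (le_of_lt hm0)]
      ring
    have hco : ∀ i, (p i - q i)^2 ≤ 1/(4*(m:ℝ)) := by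
      intro i
      have he : ⌊p i * g⌋ = ⌊q i * g⌋ := by
        have e1 : ⌊p i * g⌋ = ψ p i := rfl
        have e2 : ⌊q i * g⌋ = ψ q i := rfl
        rw [e1, e2, hψp, hψq]
      have h1 : |p i * g - q i * g| < 1 := Int.abs_sub_lt_one_of_floor_eq_floor he
      have h2 : |p i - q i| * g < 1 := by
        rw [← sub_mul, abs_mul, abs_of_pos hg0] at h1
        exact h1
      rw [le_div_iff₀ (by positivity)]
      nlinarith [sq_abs (p i - q i), abs_nonneg (p i - q i), h2, hg0, hgsq,
        mul_nonneg (abs_nonneg (p i - q i)) hg0.le]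
    rw [EuclideanSpace.dist_eq]
    have hsum2 : ∑ i, dist (p i) (q i)^2 ≤ (m:ℝ) * (1/(4*(m:ℝ))) := by
      have h3 : ∀ i ∈ Finset.univ, dist (p i) (q i)^2 ≤ 1/(4*(m:ℝ)) := by
        intro i _
        rw [Real.dist_eq, sq_abs]
        exact hco i
      calc ∑ i, dist (p i) (q i)^2 ≤ ∑ _i : Fin m, 1/(4*(m:ℝ)) := Finset.sum_le_sum h3
        _ = (m:ℝ) * (1/(4*(m:ℝ))) := by
            rw [Finset.sum_const, Finset.card_univ, Fintype.card_fin, nsmul_eq_mul]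
    have h4 : (m:ℝ) * (1/(4*(m:ℝ))) = 1/4 := by field_simp
    rw [h4] at hsum2
    calc Real.sqrt (∑ i, dist (p i) (q i)^2) ≤ Real.sqrt (1/4) := Real.sqrt_le_sqrt hsum2
      _ = 1/2 := by
          rw [show (1:ℝ)/4 = (1/2)^2 by norm_num, Real.sqrt_sq (by norm_num)]
  -- the family of tubes
  set κ := ({x // x ∈ P'} × {x // x ∈ P'}) with hκdef
  set eqv := (Fintype.equivFin κ).symm with heqvdef
  set pa : κ → Eu m := fun z => (z.1 : Eu m) with hpadef
  set qa : κ → Eu m := fun z => (z.2 : Eu m) with hqadef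
  have hmemP' : ∀ z : κ, pa z ∈ P' ∧ qa z ∈ P' := fun z => ⟨z.1.2, z.2.2⟩
  have hvhalf : ∀ z : κ, ‖qa z - pa z‖ ≤ 1/2 := by
    intro z
    rw [← dist_eq_norm]
    exact hP'half (qa z) (hmemP' z).2 (pa z) (hmemP' z).1
  set afun : Fin (Fintype.card κ) → Eu (m+1) :=
    fun i => snocE m ((2⁻¹:ℝ) • (pa (eqv i) + qa (eqv i))) 1 with hafundef
  set efun : Fin (Fintype.card κ) → Eu (m+1) :=
    fun i => snocE m (qa (eqv i) - pa (eqv i))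
      (Real.sqrt (1 - ‖qa (eqv i) - pa (eqv i)‖^2)) with hefundef
  refine ⟨Fintype.card κ, afun, efun, ?_, ?_, ?_, ?_⟩
  · -- cardinality
    have hcardκ : (Fintype.card κ : ℝ) = (P'.card : ℝ) * (P'.card : ℝ) := by
      have h := Fintype.card_prod {x // x ∈ P'} {x // x ∈ P'}
      rw [Fintype.card_coe] at h
      rw [show Fintype.card κ = Fintype.card ({x // x ∈ P'} × {x // x ∈ P'}) from rfl, h]
      push_cast
      ring
    have h5 : A * Real.sqrt N / C ≥ 0 := by positivity
    have h6 := mul_self_le_mul_self h5 hP'card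
    have h7 : (A * Real.sqrt N / C) * (A * Real.sqrt N / C) = (A/C)^2 * N := by
      have hNs : Real.sqrt N * Real.sqrt N = N := Real.mul_self_sqrt hN0
      field_simp
      ring_nf
      rw [Real.sq_sqrt hN0]
    calc (A/C)^2 * N = (A * Real.sqrt N / C) * (A * Real.sqrt N / C) := h7.symm
      _ ≤ (P'.card : ℝ) * (P'.card : ℝ) := h6
      _ = (Fintype.card κ : ℝ) := hcardκ.symm
  · -- unit norms
    intro i
    rw [hefundef]
    exact norm_snocE_one m _ (by linarith [hvhalf (eqv i)])
  · -- essentially distinct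
    intro i j hij
    simp only [hafundef, hefundef]
    set z := eqv i with hz
    set z' := eqv j with hz'
    have hzz' : z ≠ z' := by
      intro h
      apply hij
      have := (Equiv.injective eqv) (hz ▸ hz' ▸ h)
      exact this
    set p := pa z with hp
    set q := qa z with hq
    set p' := pa z' with hp'
    set q' := qa z' with hq'
    rcases le_or_gt (r/2) ‖(q - p) - (q' - p')‖ with hcase | hcase
    · exact tube_inter_le (m+1) (Nat.succ_pos m) hδ0 hc₀0 _ _ _ _
        (norm_snocE_one m _ (by linarith [hvhalf z]))
        (norm_snocE_one m _ (by linarith [hvhalf z']))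
        (dir_angle m hδ0 hc₀0 hrc₀ _ _ (hvhalf z) (hvhalf z') hcase)
    · have hpp' : p ≠ p' := by
        intro h
        have hqq' : q ≠ q' := by
          intro h2
          exact hzz' (Prod.ext (Subtype.ext h) (Subtype.ext h2))
        have hrq : r ≤ dist q q' :=
          hPsep (hP'sub q (hmemP' z).2) (hP'sub q' (hmemP' z').2) hqq'
        rw [dist_eq_norm] at hrq
        have h3 : (q - p) - (q' - p') = q - q' := by rw [h]; module
        rw [h3] at hcase
        linarith
      have hsep' : r ≤ ‖p - p'‖ := by
        rw [← dist_eq_norm]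
        exact hPsep (hP'sub p (hmemP' z).1) (hP'sub p' (hmemP' z').1) hpp'
      have hd := tube_disjoint m hδ0 hr20 p q p' q' (hvhalf z) (hvhalf z') hsep' hcase.le
      rw [hd]
      simp
  · -- containment in the cylinder
    intro i x hx
    simp only [hafundef, hefundef] at hx
    set z := eqv i with hz
    set p := pa z with hp
    set q := qa z with hq
    set v := q - p with hv
    set s := Real.sqrt (1 - ‖v‖^2) with hs
    set aE := snocE m ((2⁻¹:ℝ) • (p + q)) 1 with haE
    set eE := snocE m v s with heE
    obtain ⟨hx1, hx2⟩ := hx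
    set t : ℝ := (inner ℝ (x - aE) eE : ℝ) with ht
    set w := x - aE - t • eE with hw
    have hxeq : x = aE + t • eE + w := by rw [hw]; module
    have htabs := abs_le.mp hx1
    have hs0 : 0 ≤ s := Real.sqrt_nonneg _
    have hs1 : s ≤ 1 := by
      rw [hs]
      refine le_trans (Real.sqrt_le_sqrt (by nlinarith [norm_nonneg v] : 1 - ‖v‖^2 ≤ 1)) ?_
      rw [Real.sqrt_one]
    constructor
    · -- horizontal
      show horiz m x ∈ E
      have h1 : horiz m x = ((2⁻¹:ℝ) • (p + q) + t • v) + horiz m w := by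
        conv_lhs => rw [hxeq]
        rw [horiz_add, horiz_add, horiz_smul, haE, heE, horiz_snocE, horiz_snocE]
      rw [h1]
      have hkkK : (2⁻¹:ℝ) • (p + q) + t • v ∈ K := by
        have hco : (2⁻¹:ℝ) • (p + q) + t • v = (2⁻¹ - t) • p + (2⁻¹ + t) • q := by
          rw [hv]; module
        rw [hco]
        exact (convex_convexHull ℝ S) (hPK (hP'sub p (hmemP' z).1))
          (hPK (hP'sub q (hmemP' z).2)) (by linarith [htabs.2]) (by linarith [htabs.1])
          (by ring)
      exact hKE _ hkkK (horiz m w) (le_trans (norm_horiz_le m w) (by linarith))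
    · -- vertical
      show x (Fin.last m) ∈ Set.Icc (0:ℝ) 2
      have hxl : x (Fin.last m) = 1 + t * s + w (Fin.last m) := by
        conv_lhs => rw [hxeq]
        rw [show (aE + t • eE + w) (Fin.last m)
            = aE (Fin.last m) + t * eE (Fin.last m) + w (Fin.last m) from rfl]
        rw [show aE (Fin.last m) = 1 from by rw [haE]; simp [snocE],
          show eE (Fin.last m) = s from by rw [heE]; simp [snocE]]
      have hwl : |w (Fin.last m)| ≤ δ/2 := le_trans (abs_coord_le _ w _) hx2
      have hwl2 := abs_le.mp hwl
      have hts : |t * s| ≤ 1/2 := by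
        rw [abs_mul]
        calc |t| * |s| ≤ (1/2) * 1 := by
              refine mul_le_mul hx1 ?_ (abs_nonneg s) (by norm_num)
              rw [abs_of_nonneg hs0]
              exact hs1
          _ = 1/2 := by norm_num
      have hts2 := abs_le.mp hts
      rw [hxl]
      constructor
      · linarith
      · linarith
end
end

section
/- For every c > 0 and every integer n ≥ 1 there exist constants λ > 0 and c′ > 0, depending only on c and n, with the following property. Let (X, 𝓜, μ) be a measure space with 0 < μ(X) < ∞, let S ⊆ ℝⁿ be a Lebesgue-measurable set with 0 < volₙ(S) < ∞, and suppose that for each x ∈ S a measurable set E_x ∈ 𝓜 is given with μ(E_x) ≥ c·μ(X). Then there exist points x₀, x₁, …, x_n ∈ S such that: (a) μ(⋂_{i=0}^{n} E_{x_i}) ≥ c′·μ(X); and (b) the n-simplex with vertices x₀, …, x_n has volume at least λ·volₙ(S), i.e. |det(x₁ − x₀, …, x_n − x₀)| / n! ≥ λ·volₙ(S). -/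
open MeasureTheory ENNReal
open scoped RealInnerProductSpace
set_option linter.unusedSectionVars false
noncomputable section
namespace S8

variable {X : Type*} [MeasurableSpace X]

lemma indicator_one_mul (s t : Set X) (ω : X) :
    s.indicator (1 : X → ℝ≥0∞) ω * t.indicator 1 ω = (s ∩ t).indicator 1 ω := by
  by_cases h1 : ω ∈ s <;> by_cases h2 : ω ∈ t <;>
    simp [Set.indicator_apply, h1, h2, Set.mem_inter_iff]

lemma pair_cs (μ : Measure X) (F : Set X) (hFm : MeasurableSet F)
    (hF0 : μ F ≠ 0) (hFt : μ F ≠ ⊤) (θ : ℝ) (hθ0 : 0 < θ)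
    (M : ℕ) (G : Fin M → Set X) (hGm : ∀ i, MeasurableSet (G i))
    (hGd : ∀ i, ENNReal.ofReal θ * μ F ≤ μ (G i ∩ F))
    (hGp : ∀ i j, i ≠ j → μ (G i ∩ G j ∩ F) ≤ ENNReal.ofReal (θ^2/2) * μ F) :
    (M : ℝ) * θ^2 ≤ 2 := by
  classical
  set f : X → ℝ≥0∞ := fun ω => ∑ i, (G i ∩ F).indicator 1 ω with hf
  have hmi : ∀ i : Fin M, Measurable fun ω => (G i ∩ F).indicator (1 : X → ℝ≥0∞) ω :=
    fun i => (measurable_one.indicator ((hGm i).inter hFm))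
  have hfm : Measurable f := by
    apply Finset.measurable_sum
    intro i _
    exact hmi i
  -- integral of f
  have I1 : ∫⁻ ω, f ω ∂μ = ∑ i, μ (G i ∩ F) := by
    rw [lintegral_finset_sum _ (fun i _ => hmi i)]
    congr 1; ext i
    rw [lintegral_indicator_one ((hGm i).inter hFm)]
  -- integral of f^2
  have I2 : ∫⁻ ω, (f ω)^2 ∂μ = ∑ i, ∑ j, μ (G i ∩ G j ∩ F) := by
    have hpt : ∀ ω, (f ω)^2 = ∑ i, ∑ j, (G i ∩ G j ∩ F).indicator (1 : X → ℝ≥0∞) ω := by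
      intro ω
      rw [hf]; simp only [sq]
      rw [Finset.sum_mul_sum]
      congr 1; ext i; congr 1; ext j
      have : G i ∩ F ∩ (G j ∩ F) = G i ∩ G j ∩ F := by
        ext; simp [Set.mem_inter_iff]; tauto
      rw [indicator_one_mul, this]
    calc ∫⁻ ω, (f ω)^2 ∂μ = ∫⁻ ω, ∑ i, ∑ j, (G i ∩ G j ∩ F).indicator (1 : X → ℝ≥0∞) ω ∂μ := by
            congr 1; ext ω; exact hpt ω
      _ = ∑ i, ∑ j, μ (G i ∩ G j ∩ F) := by
            rw [lintegral_finset_sum]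
            · congr 1; ext i
              rw [lintegral_finset_sum]
              · congr 1; ext j
                rw [lintegral_indicator_one (((hGm i).inter (hGm j)).inter hFm)]
              · exact fun j _ => measurable_one.indicator (((hGm i).inter (hGm j)).inter hFm)
            · intro i _
              exact Finset.measurable_sum _ (fun j _ => measurable_one.indicator (((hGm i).inter (hGm j)).inter hFm))
  -- Cauchy-Schwarz
  have CS : (∫⁻ ω, f ω ∂μ)^2 ≤ (∫⁻ ω, (f ω)^2 ∂μ) * μ F := by
    have hconj : Real.HolderConjugate 2 2 := Real.HolderConjugate.two_two
    have hg : Measurable fun ω => F.indicator (1 : X → ℝ≥0∞) ω := measurable_one.indicator hFm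
    have hfg : ∀ ω, f ω = f ω * F.indicator 1 ω := by
      intro ω
      by_cases h : ω ∈ F
      · simp [Set.indicator_apply, h]
      · have : f ω = 0 := by
          rw [hf]
          apply Finset.sum_eq_zero
          intro i _
          have : ω ∉ G i ∩ F := fun h2 => h h2.2
          simp [Set.indicator_apply, this]
        simp [this]
    have H := ENNReal.lintegral_mul_le_Lp_mul_Lq μ hconj hfm.aemeasurable hg.aemeasurable
    have hgint : ∫⁻ ω, (F.indicator (1 : X → ℝ≥0∞) ω) ^ (2:ℝ) ∂μ = μ F := by
      have he : ∀ ω, (F.indicator (1 : X → ℝ≥0∞) ω) ^ (2:ℝ) = F.indicator 1 ω := by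
        intro ω; by_cases h : ω ∈ F <;> simp [Set.indicator_apply, h]
      calc ∫⁻ ω, (F.indicator (1 : X → ℝ≥0∞) ω) ^ (2:ℝ) ∂μ
          = ∫⁻ ω, F.indicator (1 : X → ℝ≥0∞) ω ∂μ := by congr 1; ext ω; exact he ω
        _ = μ F := lintegral_indicator_one hFm
    have hfint : ∫⁻ ω, (f ω) ^ (2:ℝ) ∂μ = ∫⁻ ω, (f ω)^2 ∂μ := by
      congr 1; ext ω
      rw [← ENNReal.rpow_natCast (f ω) 2]
      norm_num
    have H2 : ∫⁻ ω, f ω ∂μ ≤ (∫⁻ ω, (f ω)^2 ∂μ) ^ (1/2 : ℝ) * (μ F) ^ (1/2 : ℝ) := by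
      calc ∫⁻ ω, f ω ∂μ = ∫⁻ ω, ((f : X → ℝ≥0∞) * fun ω => F.indicator (1 : X → ℝ≥0∞) ω) ω ∂μ := by
              congr 1; ext ω
              show f ω = f ω * F.indicator 1 ω
              exact hfg ω
        _ ≤ (∫⁻ ω, (f ω) ^ (2:ℝ) ∂μ) ^ (1/2 : ℝ) * (∫⁻ ω, (F.indicator (1 : X → ℝ≥0∞) ω) ^ (2:ℝ) ∂μ) ^ (1/2 : ℝ) := H
        _ = (∫⁻ ω, (f ω)^2 ∂μ) ^ (1/2 : ℝ) * (μ F) ^ (1/2 : ℝ) := by rw [hfint, hgint]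
    calc (∫⁻ ω, f ω ∂μ)^2 ≤ ((∫⁻ ω, (f ω)^2 ∂μ) ^ (1/2 : ℝ) * (μ F) ^ (1/2 : ℝ))^2 := by
            exact pow_le_pow_left' H2 2
      _ = (∫⁻ ω, (f ω)^2 ∂μ) * μ F := by
            rw [mul_pow, ← ENNReal.rpow_natCast (_ ^ (1/2:ℝ)) 2, ← ENNReal.rpow_natCast ((μ F) ^ (1/2:ℝ)) 2,
              ← ENNReal.rpow_mul, ← ENNReal.rpow_mul]
            norm_num
  -- lower bound for ∫ f
  have LB : (M : ℝ≥0∞) * (ENNReal.ofReal θ * μ F) ≤ ∫⁻ ω, f ω ∂μ := by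
    rw [I1]
    calc (M : ℝ≥0∞) * (ENNReal.ofReal θ * μ F) = ∑ _i : Fin M, ENNReal.ofReal θ * μ F := by
            simp [Finset.sum_const, nsmul_eq_mul]
      _ ≤ ∑ i, μ (G i ∩ F) := Finset.sum_le_sum (fun i _ => hGd i)
  -- upper bound for ∫ f^2
  have UB : ∫⁻ ω, (f ω)^2 ∂μ ≤ (M : ℝ≥0∞) * μ F + (M : ℝ≥0∞)^2 * (ENNReal.ofReal (θ^2/2) * μ F) := by
    rw [I2]
    have hterm : ∀ i j : Fin M, μ (G i ∩ G j ∩ F) ≤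
        (if i = j then μ F else 0) + ENNReal.ofReal (θ^2/2) * μ F := by
      intro i j
      by_cases h : i = j
      · simp only [h, if_pos rfl]
        exact le_add_right (measure_mono (by intro ω hω; exact hω.2)) -- μ(G j∩G j∩F) ≤ μ F
      · simp only [if_neg h, zero_add]
        exact hGp i j h
    calc ∑ i, ∑ j, μ (G i ∩ G j ∩ F)
        ≤ ∑ i : Fin M, ∑ j : Fin M, ((if i = j then μ F else 0) + ENNReal.ofReal (θ^2/2) * μ F) :=
          Finset.sum_le_sum (fun i _ => Finset.sum_le_sum (fun j _ => hterm i j))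
      _ = (M : ℝ≥0∞) * μ F + (M : ℝ≥0∞)^2 * (ENNReal.ofReal (θ^2/2) * μ F) := by
          simp [Finset.sum_add_distrib, Finset.sum_ite_eq, Finset.sum_const, nsmul_eq_mul, sq]
          try ring
  -- combine
  have KEY : ((M : ℝ≥0∞) * (ENNReal.ofReal θ * μ F))^2 ≤
      ((M : ℝ≥0∞) * μ F + (M : ℝ≥0∞)^2 * (ENNReal.ofReal (θ^2/2) * μ F)) * μ F := by
    calc ((M : ℝ≥0∞) * (ENNReal.ofReal θ * μ F))^2 ≤ (∫⁻ ω, f ω ∂μ)^2 := pow_le_pow_left' LB 2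
      _ ≤ (∫⁻ ω, (f ω)^2 ∂μ) * μ F := CS
      _ ≤ _ := mul_le_mul_left UB _
  -- rearrange to cancel (μ F)^2
  have KEY2 : (M : ℝ≥0∞)^2 * (ENNReal.ofReal θ)^2 * (μ F)^2 ≤
      ((M : ℝ≥0∞) + (M : ℝ≥0∞)^2 * ENNReal.ofReal (θ^2/2)) * (μ F)^2 := by
    calc (M : ℝ≥0∞)^2 * (ENNReal.ofReal θ)^2 * (μ F)^2
        = ((M : ℝ≥0∞) * (ENNReal.ofReal θ * μ F))^2 := by ring
      _ ≤ ((M : ℝ≥0∞) * μ F + (M : ℝ≥0∞)^2 * (ENNReal.ofReal (θ^2/2) * μ F)) * μ F := KEY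
      _ = ((M : ℝ≥0∞) + (M : ℝ≥0∞)^2 * ENNReal.ofReal (θ^2/2)) * (μ F)^2 := by ring
  have hsq0 : (μ F)^2 ≠ 0 := pow_ne_zero _ hF0
  have hsqt : (μ F)^2 ≠ ⊤ := by
    simp only [Ne, ENNReal.pow_eq_top_iff]
    tauto
  have KEY3 : (M : ℝ≥0∞)^2 * (ENNReal.ofReal θ)^2 ≤
      (M : ℝ≥0∞) + (M : ℝ≥0∞)^2 * ENNReal.ofReal (θ^2/2) :=
    (ENNReal.mul_le_mul_iff_left hsq0 hsqt).1 KEY2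
  -- to reals
  have hfin : ((M : ℝ≥0∞) + (M : ℝ≥0∞)^2 * ENNReal.ofReal (θ^2/2)) ≠ ⊤ := by
    apply ENNReal.add_ne_top.2
    constructor
    · exact ENNReal.natCast_ne_top M
    · exact ENNReal.mul_ne_top (by simp [ENNReal.pow_eq_top_iff]) ENNReal.ofReal_ne_top
  have R1 : (M:ℝ)^2 * θ^2 ≤ (M:ℝ) + (M:ℝ)^2 * (θ^2/2) := by
    have := ENNReal.toReal_mono hfin KEY3
    have h1 : ((M : ℝ≥0∞)^2 * (ENNReal.ofReal θ)^2).toReal = (M:ℝ)^2 * θ^2 := by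
      rw [ENNReal.toReal_mul]
      simp [ENNReal.toReal_pow, ENNReal.toReal_ofReal hθ0.le]
    have h2 : ((M : ℝ≥0∞) + (M : ℝ≥0∞)^2 * ENNReal.ofReal (θ^2/2)).toReal
        = (M:ℝ) + (M:ℝ)^2 * (θ^2/2) := by
      rw [ENNReal.toReal_add (ENNReal.natCast_ne_top M)
        (ENNReal.mul_ne_top (by simp [ENNReal.pow_eq_top_iff]) ENNReal.ofReal_ne_top),
        ENNReal.toReal_mul]
      have : (0:ℝ) ≤ θ^2/2 := by positivity
      simp [ENNReal.toReal_pow, ENNReal.toReal_ofReal this]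
    rw [h1, h2] at this
    exact this
  -- final real arithmetic
  rcases Nat.eq_zero_or_pos M with hM | hM
  · simp [hM]
  · have hMpos : (0:ℝ) < M := by exact_mod_cast hM
    nlinarith [sq_nonneg ((M:ℝ) * θ)]


variable {α : Type*} [MeasurableSpace α]

lemma far_pick (ν : Measure α) (C P : Set α) (hPC : P ⊆ C) (hP0 : ν P ≠ 0) (hCt : ν C ≠ ⊤)
    (Q : α → ℝ) (hQm : Measurable Q) (hQ0 : ν {y | Q y ≤ 0} = 0)
    (e : ℝ≥0∞) (he : e ≠ 0) :
    ∃ p ∈ P, 0 < Q p ∧ ν (P ∩ {y | 2 * Q p < Q y}) ≤ e := by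
  by_contra hcon
  push_neg at hcon
  -- capture radius
  set T := toMeasurable ν P with hT
  have hTmeas : MeasurableSet T := measurableSet_toMeasurable ν P
  have hTfin : ν T ≠ ⊤ := by
    rw [measure_toMeasurable]
    exact fun h => hCt (top_le_iff.1 (h ▸ measure_mono hPC))
  have htend : Filter.Tendsto (fun j : ℕ => ν (T ∩ {y | (j:ℝ) < Q y})) Filter.atTop (nhds 0) := by
    have h0 : ⋂ j : ℕ, (T ∩ {y | (j:ℝ) < Q y}) = ∅ := by
      ext y
      simp only [Set.mem_iInter, Set.mem_inter_iff, Set.mem_setOf_eq, Set.mem_empty_iff_false,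
        iff_false, not_forall]
      obtain ⟨j, hj⟩ := exists_nat_gt (Q y)
      exact ⟨j, fun h => absurd h.2 (not_lt.2 hj.le)⟩
    have := MeasureTheory.tendsto_measure_iInter_atTop
      (μ := ν) (s := fun j : ℕ => T ∩ {y | (j:ℝ) < Q y})
      (fun j => ((hTmeas.inter (measurableSet_lt measurable_const hQm))).nullMeasurableSet)
      (fun i j hij => Set.inter_subset_inter_right _
        (fun y hy => lt_of_le_of_lt (by exact_mod_cast hij : (i:ℝ) ≤ (j:ℝ)) hy))
      ⟨0, (lt_of_le_of_lt (measure_mono Set.inter_subset_left) (lt_top_iff_ne_top.2 hTfin)).ne⟩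
    rw [h0] at this
    simpa [Function.comp_def] using this
  have hev : ∃ j : ℕ, ν (T ∩ {y | (j:ℝ) < Q y}) < e := by
    have := htend.eventually_lt_const (pos_iff_ne_zero.2 he)
    exact this.exists
  obtain ⟨R, hR⟩ := hev
  -- all positive pickable points have Q < R
  have hbound : ∀ p ∈ P, 0 < Q p → Q p < R := by
    intro p hp hQp
    by_contra hge
    push_neg at hge
    have hsub : P ∩ {y | 2 * Q p < Q y} ⊆ T ∩ {y | (R:ℝ) < Q y} := by
      intro y hy
      refine ⟨subset_toMeasurable ν P hy.1, ?_⟩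
      have : (R:ℝ) ≤ 2 * Q p := le_trans hge (by linarith)
      exact lt_of_le_of_lt this hy.2
    exact absurd (lt_of_le_of_lt (measure_mono hsub) hR) (not_lt.2 (hcon p hp hQp).le)
  -- sup
  have hne : ∃ x ∈ P, 0 < Q x := by
    by_contra hno
    push_neg at hno
    have : P ⊆ {y | Q y ≤ 0} := fun y hy => hno y hy
    exact hP0 (le_antisymm (hQ0 ▸ measure_mono this) zero_le)
  obtain ⟨x₀, hx₀P, hx₀⟩ := hne
  have hbdd : BddAbove (Q '' P) := by
    refine ⟨max R 0, ?_⟩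
    rintro v ⟨p, hp, rfl⟩
    rcases le_or_gt (Q p) 0 with h | h
    · exact le_trans h (le_max_right _ _)
    · exact le_trans (hbound p hp h).le (le_max_left _ _)
  set σ := sSup (Q '' P) with hσ
  have hσpos : 0 < σ := lt_of_lt_of_le hx₀ (le_csSup hbdd ⟨x₀, hx₀P, rfl⟩)
  have : ∃ v ∈ Q '' P, σ/2 < v :=
    exists_lt_of_lt_csSup ⟨Q x₀, x₀, hx₀P, rfl⟩ (by linarith)
  obtain ⟨v, ⟨p, hpP, rfl⟩, hv⟩ := this
  have hQp : 0 < Q p := by linarith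
  have hempty : P ∩ {y | 2 * Q p < Q y} = ∅ := by
    ext y
    simp only [Set.mem_inter_iff, Set.mem_setOf_eq, Set.mem_empty_iff_false, iff_false, not_and]
    intro hyP hlt
    have : Q y ≤ σ := le_csSup hbdd ⟨y, hyP, rfl⟩
    linarith
  have h2 := hcon p hpP hQp
  rw [hempty] at h2
  simp only [measure_empty] at h2
  exact absurd h2 (by simp)


variable {X : Type*} [MeasurableSpace X]




/-- The key stage lemma: inside any positive-outer-measure candidate set `C`, all of whose
points have `E`-density `θ` inside `F`, one can pick a point `p` which is geometrically "far"
(relative to the potential `Q`) and a large sub-candidate-set `C'` of points pair-correlated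
with `p`, confined to `{Q ≤ 2 Q p}`. -/
lemma stage_pick {α : Type*} [MeasurableSpace α] (ν : Measure α) (μ : Measure X)
    (E : α → Set X) (F : Set X) (hFm : MeasurableSet F) (hF0 : μ F ≠ 0) (hFt : μ F ≠ ⊤)
    (C : Set α) (hEm : ∀ x ∈ C, MeasurableSet (E x))
    (hC0 : ν C ≠ 0) (hCt : ν C ≠ ⊤)
    (θ : ℝ) (hθ0 : 0 < θ)
    (hdens : ∀ x ∈ C, ENNReal.ofReal θ * μ F ≤ μ (E x ∩ F))
    (Q : α → ℝ) (hQm : Measurable Q) (hQ0 : ν {y | Q y ≤ 0} = 0) :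
    ∃ p ∈ C, ∃ C', C' ⊆ C ∧ 0 < Q p ∧
      (∀ y ∈ C', Q y ≤ 2 * Q p) ∧
      (∀ y ∈ C', ENNReal.ofReal (θ^2/2) * μ F ≤ μ (E y ∩ E p ∩ F)) ∧
      ENNReal.ofReal (1/(16 * ((⌊2/θ^2⌋₊ : ℝ) + 1))) * ν C ≤ ν C' := by
  classical
  set m : ℕ := ⌊2/θ^2⌋₊ + 1 with hm
  have hmpos : 0 < m := Nat.succ_pos _
  have hmR : (0:ℝ) < m := by exact_mod_cast hmpos
  set t : ℝ := 1/(8*m) with ht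
  have ht0 : 0 < t := by positivity
  set τ : ℝ≥0∞ := ν C with hτ
  have hτ0 : τ ≠ 0 := hC0
  have hτt : τ ≠ ⊤ := hCt
  set b : ℝ≥0∞ := ENNReal.ofReal t * τ with hb
  have hb0 : b ≠ 0 := by
    simp only [hb, mul_ne_zero_iff]
    exact ⟨by simp [ENNReal.ofReal_eq_zero, not_le, ht0], hτ0⟩
  have hbt : b ≠ ⊤ := ENNReal.mul_ne_top ENNReal.ofReal_ne_top hτt
  -- The pair-correlation set
  set Y : α → Set α := fun x => {y | y ∈ C ∧ ENNReal.ofReal (θ^2/2) * μ F ≤ μ (E y ∩ E x ∩ F)}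
    with hY
  have hYC : ∀ x, Y x ⊆ C := fun x y hy => hy.1
  -- the hierarchy of hulls of bad sets
  set G : ℕ → Set α := fun k =>
    Nat.rec (∅ : Set α)
      (fun _ Gk => Gk ∪ toMeasurable ν ({x | x ∈ C ∧ ν (Y x \ Gk) < b} \ Gk)) k with hG
  set Bad : ℕ → Set α := fun k => {x | x ∈ C ∧ ν (Y x \ G k) < b} with hBad
  have hG0 : G 0 = ∅ := rfl
  have hGsucc : ∀ k, G (k+1) = G k ∪ toMeasurable ν (Bad k \ G k) := fun k => rfl
  have hGmeas : ∀ k, MeasurableSet (G k) := by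
    intro k
    induction k with
    | zero => exact MeasurableSet.empty
    | succ k ih => rw [hGsucc]; exact ih.union (measurableSet_toMeasurable _ _)
  have hGmono : ∀ k l, k ≤ l → G k ⊆ G l := by
    intro k l hkl
    induction l with
    | zero => simp at hkl; simp [hkl]
    | succ l ih =>
      rcases Nat.lt_or_ge k (l+1) with h | h
      · exact (ih (Nat.lt_succ_iff.1 h)).trans (by rw [hGsucc]; exact Set.subset_union_left)
      · have : k = l + 1 := le_antisymm hkl h
        simp [this]
  -- families
  set EXCL : ∀ ℓ : ℕ, (Fin ℓ → α) → (Fin ℓ → ℕ) → Set α :=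
    fun ℓ w ki => ⋃ i, (Y (w i) \ G (ki i)) with hEXCL
  set Fam : ℕ → ∀ ℓ : ℕ, (Fin ℓ → α) → (Fin ℓ → ℕ) → Prop :=
    fun K ℓ w ki => (∀ i, w i ∈ Bad (ki i) \ G (ki i)) ∧ (∀ i, ki i ≤ K) ∧
      (∀ i j, i < j → w j ∉ Y (w i)) with hFam
  -- any family has size < m
  have famsize : ∀ K ℓ w ki, Fam K ℓ w ki → ℓ < m := by
    intro K ℓ w ki hfam
    have hwC : ∀ i, w i ∈ C := fun i => (hfam.1 i).1.1
    have key : (ℓ : ℝ) * θ^2 ≤ 2 := by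
      apply pair_cs μ F hFm hF0 hFt θ hθ0 ℓ (fun i => E (w i))
        (fun i => hEm _ (hwC i)) (fun i => hdens _ (hwC i))
      intro i j hij
      have main : ∀ i j : Fin ℓ, i < j → μ (E (w i) ∩ E (w j) ∩ F) ≤ ENNReal.ofReal (θ^2/2) * μ F := by
        intro i j hlt
        have hnot : w j ∉ Y (w i) := hfam.2.2 i j hlt
        rw [hY] at hnot
        simp only [Set.mem_setOf_eq, not_and] at hnot
        have := hnot (hwC j)
        rw [not_le] at this
        have hcomm : E (w i) ∩ E (w j) ∩ F = E (w j) ∩ E (w i) ∩ F := by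
          rw [Set.inter_comm (E (w i))]
        rw [hcomm]
        exact this.le
      rcases lt_or_gt_of_ne hij with h | h
      · exact main i j h
      · have := main j i h
        rwa [Set.inter_comm (E (w j))] at this
    by_contra hge
    push_neg at hge
    have h1 : (2:ℝ)/θ^2 < m := by
      rw [hm]; push_cast; exact Nat.lt_floor_add_one _
    have h2 : (m:ℝ) ≤ ℓ := by exact_mod_cast hge
    have hθ2 : (0:ℝ) < θ^2 := by positivity
    have : (2:ℝ) < ℓ * θ^2 := by
      calc (2:ℝ) = (2/θ^2) * θ^2 := by field_simp
        _ < m * θ^2 := by exact mul_lt_mul_of_pos_right h1 hθ2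
        _ ≤ ℓ * θ^2 := by exact mul_le_mul_of_nonneg_right h2 hθ2.le
    linarith
  -- drain: extend a family to cover level K
  have drain : ∀ d K ℓ w ki, Fam K ℓ w ki → m ≤ ℓ + d →
      ∃ ℓ' w' ki', Fam K ℓ' w' ki' ∧ EXCL ℓ w ki ⊆ EXCL ℓ' w' ki' ∧
        ν ((Bad K \ G K) \ EXCL ℓ' w' ki') = 0 := by
    intro d
    induction d with
    | zero =>
      intro K ℓ w ki hfam hle
      exact absurd (famsize K ℓ w ki hfam) (by omega)
    | succ d ih =>
      intro K ℓ w ki hfam hle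
      by_cases hcov : ν ((Bad K \ G K) \ EXCL ℓ w ki) = 0
      · exact ⟨ℓ, w, ki, hfam, subset_rfl, hcov⟩
      · obtain ⟨x, hx⟩ := nonempty_of_measure_ne_zero hcov
        set w' : Fin (ℓ+1) → α := Fin.snoc w x with hw'
        set ki' : Fin (ℓ+1) → ℕ := Fin.snoc ki K with hki'
        have hfam' : Fam K (ℓ+1) w' ki' := by
          refine ⟨?_, ?_, ?_⟩
          · intro i
            refine Fin.lastCases ?_ ?_ i
            · simp only [hw', hki', Fin.snoc_last]
              exact hx.1
            · intro i
              simp only [hw', hki', Fin.snoc_castSucc]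
              exact hfam.1 i
          · intro i
            refine Fin.lastCases ?_ ?_ i
            · simp only [hki', Fin.snoc_last]; exact le_refl K
            · intro i
              simp only [hki', Fin.snoc_castSucc]
              exact hfam.2.1 i
          · intro i j
            refine Fin.lastCases ?_ ?_ j
            · intro hij'
              -- j = last; w' j = x
              have hicast : ∃ i' : Fin ℓ, i'.castSucc = i :=
                Fin.exists_castSucc_eq.mpr (Fin.ne_last_of_lt hij')
              obtain ⟨i', rfl⟩ := hicast
              simp only [hw', Fin.snoc_last, Fin.snoc_castSucc]
              intro hxY
              have hxE : x ∉ EXCL ℓ w ki := hx.2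
              rw [hEXCL] at hxE
              simp only [Set.mem_iUnion, not_exists] at hxE
              have h3 := hxE i'
              simp only [Set.mem_diff, not_and, not_not] at h3
              have hxG : x ∈ G (ki i') := h3 hxY
              have : x ∈ G K := hGmono _ _ (hfam.2.1 i') hxG
              exact hx.1.2 this
            · intro j' hij'
              have hicast : ∃ i' : Fin ℓ, i'.castSucc = i := by
                apply Fin.exists_castSucc_eq.mpr
                intro hEq
                rw [hEq] at hij'
                exact absurd (lt_of_le_of_lt (Fin.le_last _) hij') (lt_irrefl _)
              obtain ⟨i', rfl⟩ := hicast
              simp only [hw', Fin.snoc_castSucc]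
              exact hfam.2.2 i' j' (by exact_mod_cast hij')
        obtain ⟨ℓ'', w'', ki'', hfam'', hsub'', hcov''⟩ := ih K (ℓ+1) w' ki' hfam' (by omega)
        refine ⟨ℓ'', w'', ki'', hfam'', ?_, hcov''⟩
        refine subset_trans ?_ hsub''
        rw [hEXCL]
        intro y hy
        simp only [Set.mem_iUnion] at hy ⊢
        obtain ⟨i, hi⟩ := hy
        refine ⟨i.castSucc, ?_⟩
        simp only [hw', hki', Fin.snoc_castSucc]
        exact hi
  -- covering families at every level
  have covering : ∀ K, ∃ ℓ w ki, Fam K ℓ w ki ∧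
      ∀ k ≤ K, ν ((Bad k \ G k) \ EXCL ℓ w ki) = 0 := by
    intro K
    induction K with
    | zero =>
      obtain ⟨ℓ', w', ki', hfam', _, hcov'⟩ :=
        drain m 0 0 (fun i => i.elim0) (fun i => i.elim0)
          ⟨fun i => i.elim0, fun i => i.elim0, fun i _ _ => i.elim0⟩ (by omega)
      exact ⟨ℓ', w', ki', hfam', fun k hk => by rw [Nat.le_zero.1 hk]; exact hcov'⟩
    | succ K ih =>
      obtain ⟨ℓ, w, ki, hfam, hcov⟩ := ih
      have hfam' : Fam (K+1) ℓ w ki :=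
        ⟨hfam.1, fun i => (hfam.2.1 i).trans (Nat.le_succ K), hfam.2.2⟩
      obtain ⟨ℓ', w', ki', hfam'', hsub, hcov'⟩ := drain m (K+1) ℓ w ki hfam' (by omega)
      refine ⟨ℓ', w', ki', hfam'', ?_⟩
      intro k hk
      rcases Nat.lt_or_ge k (K+1) with h | h
      · have h0 := hcov k (Nat.lt_succ_iff.1 h)
        have hss : (Bad k \ G k) \ EXCL ℓ' w' ki' ⊆ (Bad k \ G k) \ EXCL ℓ w ki :=
          Set.diff_subset_diff_right hsub
        exact le_antisymm (h0 ▸ measure_mono hss) zero_le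
      · have hkeq : k = K + 1 := le_antisymm hk h
        rw [hkeq]; exact hcov'
  -- volume of the exceptional set of a family
  have hEXCLb : ∀ K ℓ w ki, Fam K ℓ w ki → ν (EXCL ℓ w ki) ≤ (m : ℝ≥0∞) * b := by
    intro K ℓ w ki hfam
    have hℓ : (ℓ : ℝ≥0∞) ≤ (m : ℝ≥0∞) := by
      exact_mod_cast (famsize K ℓ w ki hfam).le
    calc ν (EXCL ℓ w ki) ≤ ∑ i, ν (Y (w i) \ G (ki i)) := measure_iUnion_fintype_le _ _
      _ ≤ ∑ _i : Fin ℓ, b := Finset.sum_le_sum (fun i _ => ((hfam.1 i).1.2).le)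
      _ = (ℓ : ℝ≥0∞) * b := by simp [Finset.sum_const, nsmul_eq_mul]
      _ ≤ (m : ℝ≥0∞) * b := mul_le_mul_left hℓ b
  -- total volume bound on the hulls
  have hGbound : ∀ K, ν (G K) ≤ (m : ℝ≥0∞) * b := by
    intro K
    obtain ⟨ℓ, w, ki, hfam, hcov⟩ := covering K
    set EX := EXCL ℓ w ki with hEX
    have key : ∀ k, k ≤ K → ν (G k) ≤ ν (EX ∩ G k) := by
      intro k
      induction k with
      | zero => simp [hG0]
      | succ k ihk =>
        intro hk
        have hkK : k ≤ K := (Nat.le_succ k).trans hk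
        have h1 : ν (G (k+1)) ≤ ν (G k) + ν (Bad k \ G k) := by
          rw [hGsucc k]
          exact (measure_union_le _ _).trans (by rw [measure_toMeasurable])
        have h2 : ν (Bad k \ G k) ≤ ν ((Bad k \ G k) ∩ EX) := by
          calc ν (Bad k \ G k) ≤ ν ((Bad k \ G k) ∩ EX) + ν ((Bad k \ G k) \ EX) :=
                measure_le_inter_add_diff _ _ _
            _ = ν ((Bad k \ G k) ∩ EX) := by rw [hcov k hkK, add_zero]
        have h3 : ν (EX ∩ G k) + ν ((Bad k \ G k) ∩ EX) ≤ ν (EX ∩ G (k+1)) := by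
          have hid : ν (EX ∩ G (k+1)) =
              ν ((EX ∩ G (k+1)) ∩ G k) + ν ((EX ∩ G (k+1)) \ G k) :=
            (measure_inter_add_diff _ (hGmeas k)).symm
          have he1 : (EX ∩ G (k+1)) ∩ G k = EX ∩ G k := by
            rw [Set.inter_assoc]
            congr 1
            exact Set.inter_eq_right.2 (hGmono k (k+1) (Nat.le_succ k))
          have he2 : (Bad k \ G k) ∩ EX ⊆ (EX ∩ G (k+1)) \ G k := by
            intro y hy
            have hyG : y ∈ G (k+1) := by
              rw [hGsucc k]
              exact Set.mem_union_right _ (subset_toMeasurable _ _ hy.1)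
            exact ⟨⟨hy.2, hyG⟩, hy.1.2⟩
          rw [hid, he1]
          exact add_le_add_right (measure_mono he2) _
        calc ν (G (k+1)) ≤ ν (G k) + ν (Bad k \ G k) := h1
          _ ≤ ν (EX ∩ G k) + ν ((Bad k \ G k) ∩ EX) := add_le_add (ihk hkK) h2
          _ ≤ ν (EX ∩ G (k+1)) := h3
    calc ν (G K) ≤ ν (EX ∩ G K) := key K (le_refl K)
      _ ≤ ν EX := measure_mono Set.inter_subset_left
      _ ≤ (m : ℝ≥0∞) * b := hEXCLb K ℓ w ki hfam
  -- a stationary level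
  set b4 : ℝ≥0∞ := ENNReal.ofReal (t/4) * τ with hb4def
  have hb40 : b4 ≠ 0 := by
    rw [hb4def]
    simp only [ne_eq, mul_eq_zero, not_or]
    exact ⟨by simp [ENNReal.ofReal_eq_zero, not_le]; positivity, hτ0⟩
  have hb4t : b4 ≠ ⊤ := ENNReal.mul_ne_top ENNReal.ofReal_ne_top hτt
  have hb44 : b4 + b4 + b4 + b4 = b := by
    rw [hb4def, hb]
    rw [← add_mul, ← add_mul, ← add_mul, ← ENNReal.ofReal_add (by positivity) (by positivity),
      ← ENNReal.ofReal_add (by positivity) (by positivity),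
      ← ENNReal.ofReal_add (by positivity) (by positivity)]
    congr 1
    ring
  have hb4le : b4 ≤ b := by
    rw [hb4def, hb]
    exact mul_le_mul_left (ENNReal.ofReal_le_ofReal (by linarith)) τ
  have hstat : ∃ k, ν (G (k+1)) ≤ ν (G k) + b4 := by
    by_contra hcon
    push_neg at hcon
    have grow : ∀ k : ℕ, (k : ℝ≥0∞) * b4 ≤ ν (G k) := by
      intro k
      induction k with
      | zero => simp
      | succ k ihk =>
        calc ((k+1 : ℕ) : ℝ≥0∞) * b4 = (k : ℝ≥0∞) * b4 + b4 := by push_cast; ring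
          _ ≤ ν (G k) + b4 := add_le_add_left ihk _
          _ ≤ ν (G (k+1)) := (hcon k).le
    have h1 := grow (4*m+1)
    have h2 := hGbound (4*m+1)
    have hmb : (m : ℝ≥0∞) * b = ((4*m : ℕ) : ℝ≥0∞) * b4 := by
      rw [hb4def, hb, ← mul_assoc, ← mul_assoc,
        ← ENNReal.ofReal_natCast m, ← ENNReal.ofReal_natCast (4*m),
        ← ENNReal.ofReal_mul (by positivity), ← ENNReal.ofReal_mul (by positivity)]
      congr 2
      push_cast
      ring
    have h3 : ((4*m+1 : ℕ) : ℝ≥0∞) * b4 ≤ ((4*m : ℕ) : ℝ≥0∞) * b4 :=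
      le_trans h1 (le_trans h2 hmb.le)
    have h4 : ((4*m+1 : ℕ) : ℝ≥0∞) ≤ ((4*m : ℕ) : ℝ≥0∞) :=
      (ENNReal.mul_le_mul_iff_left hb40 hb4t).1 h3
    have h5 : (4*m+1 : ℕ) ≤ (4*m : ℕ) := by exact_mod_cast h4
    omega
  obtain ⟨ks, hks⟩ := hstat
  set Bex : Set α := Bad ks \ G ks with hBexdef
  have hGfin : ν (G ks) ≠ ⊤ :=
    (lt_of_le_of_lt (hGbound ks) (lt_top_iff_ne_top.2 (ENNReal.mul_ne_top
      (ENNReal.natCast_ne_top m) hbt))).ne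
  have hBex : ν Bex ≤ b4 := by
    have hsub : Bex ⊆ G (ks+1) \ G ks := by
      intro y hy
      exact ⟨by rw [hGsucc ks]; exact Set.mem_union_right _ (subset_toMeasurable _ _ hy), hy.2⟩
    have hdiff : ν (G (ks+1) \ G ks) ≤ b4 := by
      rw [measure_diff (hGmono ks (ks+1) (Nat.le_succ ks)) (hGmeas ks).nullMeasurableSet hGfin]
      exact tsub_le_iff_left.2 (by rw [add_comm] at hks ⊢; exact hks)
    exact le_trans (measure_mono hsub) hdiff
  -- the pickable set
  set PICK : Set α := C \ (G ks ∪ Bad ks) with hPICKdef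
  have hPICKsub : PICK ⊆ C := Set.diff_subset
  have hmb18 : (m : ℝ≥0∞) * b ≤ ENNReal.ofReal (1/8) * τ := by
    have heq : (m : ℝ≥0∞) * b = ENNReal.ofReal ((m : ℝ) * t) * τ := by
      rw [hb, ← mul_assoc, ← ENNReal.ofReal_natCast m, ← ENNReal.ofReal_mul (by positivity)]
    rw [heq]
    apply mul_le_mul_left
    apply ENNReal.ofReal_le_ofReal
    rw [ht]
    rw [mul_one_div]
    rw [div_le_div_iff₀ (by positivity) (by norm_num)]
    ring_nf
    nlinarith [hmR]
  have hb4_18 : b4 ≤ ENNReal.ofReal (1/8) * τ := le_trans hb4le (by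
    rw [hb]
    apply mul_le_mul_left
    apply ENNReal.ofReal_le_ofReal
    rw [ht]
    have hm1 : (1:ℝ) ≤ m := by exact_mod_cast hmpos
    rw [div_le_div_iff₀ (by positivity) (by norm_num)]
    nlinarith)
  have hPICK : ENNReal.ofReal (1/2) * τ ≤ ν PICK := by
    have hcover : C ⊆ PICK ∪ G ks ∪ Bex := by
      intro y hy
      by_cases h1 : y ∈ G ks
      · exact Set.mem_union_left _ (Set.mem_union_right _ h1)
      · by_cases h2 : y ∈ Bad ks
        · exact Set.mem_union_right _ ⟨h2, h1⟩
        · refine Set.mem_union_left _ (Set.mem_union_left _ ⟨hy, ?_⟩)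
          intro hmem
          rcases hmem with h | h
          · exact h1 h
          · exact h2 h
    have hup : τ ≤ ν PICK + ENNReal.ofReal (1/2) * τ := by
      calc τ ≤ ν (PICK ∪ G ks ∪ Bex) := measure_mono hcover
        _ ≤ ν PICK + ν (G ks) + ν Bex := le_trans (measure_union_le _ _)
            (add_le_add_left (measure_union_le _ _) _)
        _ ≤ ν PICK + ENNReal.ofReal (1/8) * τ + ENNReal.ofReal (1/8) * τ :=
            add_le_add (add_le_add_right (le_trans (hGbound ks) hmb18) _)
              (le_trans hBex hb4_18)
        _ ≤ ν PICK + ENNReal.ofReal (1/2) * τ := by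
            rw [add_assoc]
            apply add_le_add_right
            rw [← add_mul, ← ENNReal.ofReal_add (by norm_num) (by norm_num)]
            apply mul_le_mul_left
            apply ENNReal.ofReal_le_ofReal
            norm_num
    have hhalf : ENNReal.ofReal (1/2) * τ + ENNReal.ofReal (1/2) * τ = τ := by
      rw [← add_mul, ← ENNReal.ofReal_add (by norm_num) (by norm_num)]
      norm_num
    have hfin2 : ENNReal.ofReal (1/2) * τ ≠ ⊤ := ENNReal.mul_ne_top ENNReal.ofReal_ne_top hτt
    conv at hup => lhs; rw [← hhalf]
    exact (ENNReal.add_le_add_iff_right hfin2).1 hup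
  have hPICK0 : ν PICK ≠ 0 := by
    intro h
    rw [h] at hPICK
    have h0 : ENNReal.ofReal (1/2) * τ = 0 := le_antisymm hPICK zero_le
    rw [mul_eq_zero] at h0
    rcases h0 with h' | h'
    · rw [ENNReal.ofReal_eq_zero] at h'; linarith
    · exact hτ0 h'
  -- pick the far point
  obtain ⟨p, hpPICK, hQp, hsmall⟩ :=
    far_pick ν C PICK hPICKsub hPICK0 hτt Q hQm hQ0 b4 hb40
  have hpC : p ∈ C := hPICKsub hpPICK
  have hpnotBad : b ≤ ν (Y p \ G ks) := by
    have hnot : p ∉ Bad ks := fun h => hpPICK.2 (Set.mem_union_right _ h)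
    rw [hBad] at hnot
    simp only [Set.mem_setOf_eq, not_and, not_lt] at hnot
    exact hnot hpC
  -- the new candidate set
  refine ⟨p, hpC, (Y p \ G ks) ∩ {y | Q y ≤ 2 * Q p}, ?_, hQp, ?_, ?_, ?_⟩
  · exact fun y hy => (hYC p) hy.1.1
  · exact fun y hy => hy.2
  · intro y hy
    exact hy.1.1.2
  · -- volume bound
    have hsplit : (Y p \ G ks) ⊆
        ((Y p \ G ks) ∩ {y | Q y ≤ 2 * Q p}) ∪ (PICK ∩ {y | 2 * Q p < Q y}) ∪ Bex := by
      intro y hy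
      by_cases hq : Q y ≤ 2 * Q p
      · exact Set.mem_union_left _ (Set.mem_union_left _ ⟨hy, hq⟩)
      · push_neg at hq
        by_cases hbad : y ∈ Bad ks
        · exact Set.mem_union_right _ ⟨hbad, hy.2⟩
        · refine Set.mem_union_left _ (Set.mem_union_right _ ⟨⟨hYC p hy.1, ?_⟩, hq⟩)
          intro hmem
          rcases hmem with h | h
          · exact hy.2 h
          · exact hbad h
    have hup : b4 + b4 + (b4 + b4) ≤
        ν ((Y p \ G ks) ∩ {y | Q y ≤ 2 * Q p}) + (b4 + b4) := by
      calc b4 + b4 + (b4 + b4) = b := by rw [← hb44]; ring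
        _ ≤ ν (Y p \ G ks) := hpnotBad
        _ ≤ ν (((Y p \ G ks) ∩ {y | Q y ≤ 2 * Q p}) ∪ (PICK ∩ {y | 2 * Q p < Q y}) ∪ Bex) :=
            measure_mono hsplit
        _ ≤ ν ((Y p \ G ks) ∩ {y | Q y ≤ 2 * Q p}) + ν (PICK ∩ {y | 2 * Q p < Q y}) + ν Bex :=
            le_trans (measure_union_le _ _) (add_le_add_left (measure_union_le _ _) _)
        _ ≤ ν ((Y p \ G ks) ∩ {y | Q y ≤ 2 * Q p}) + b4 + b4 :=
            add_le_add (add_le_add_right hsmall _) hBex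
        _ = ν ((Y p \ G ks) ∩ {y | Q y ≤ 2 * Q p}) + (b4 + b4) := by ring
    have hfinb2 : b4 + b4 ≠ ⊤ := ENNReal.add_ne_top.2 ⟨hb4t, hb4t⟩
    have hres : b4 + b4 ≤ ν ((Y p \ G ks) ∩ {y | Q y ≤ 2 * Q p}) :=
      (ENNReal.add_le_add_iff_right hfinb2).1 hup
    refine le_trans ?_ hres
    have heq : ENNReal.ofReal (1/(16 * ((⌊2/θ^2⌋₊ : ℝ) + 1))) * τ = b4 + b4 := by
      rw [hb4def, ← add_mul, ← ENNReal.ofReal_add (by positivity) (by positivity)]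
      congr 1
      rw [ht]
      have : ((⌊2/θ^2⌋₊ : ℝ) + 1) = (m : ℝ) := by rw [hm]; push_cast; ring
      rw [this]
      field_simp
      ring
    rw [heq]


variable {n : ℕ}

local notation "V" => EuclideanSpace ℝ (Fin n)

/-- The residual vector of `y` relative to `p0` and the vectors `u 1, ..., u k`. -/
def resid (p0 : V) (u : ℕ → V) (k : ℕ) (y : V) : V :=
  y - p0 - ∑ l ∈ Finset.Icc 1 k, ⟪y - p0, u l⟫ • u l

lemma resid_cont (p0 : V) (u : ℕ → V) (k : ℕ) :
    Continuous fun y => ‖resid p0 u k y‖ := by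
  apply Continuous.norm
  unfold resid
  apply Continuous.sub
  · exact continuous_id.sub continuous_const
  · apply continuous_finset_sum
    intro l _
    exact by fun_prop

lemma resid_meas (p0 : V) (u : ℕ → V) (k : ℕ) :
    Measurable fun y => ‖resid p0 u k y‖ := (resid_cont p0 u k).measurable

lemma span_ne_top (u : ℕ → V) (k : ℕ) (hk : k < n) :
    Submodule.span ℝ (u '' Set.Icc 1 k) ≠ ⊤ := by
  classical
  intro htop
  have h1 : u '' Set.Icc 1 k = (((Finset.Icc 1 k).image u : Finset V) : Set V) := by
    rw [Finset.coe_image, Finset.coe_Icc]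
  have h2 : Module.finrank ℝ (Submodule.span ℝ (u '' Set.Icc 1 k)) ≤ k := by
    rw [h1]
    refine le_trans (finrank_span_finset_le_card _) ?_
    exact le_trans Finset.card_image_le (by simp)
  rw [htop] at h2
  have h3 : Module.finrank ℝ (⊤ : Submodule ℝ V) = n := by
    rw [finrank_top]
    exact finrank_euclideanSpace_fin
  omega

lemma resid_null (p0 : V) (u : ℕ → V) (k : ℕ) (hk : k < n) :
    volume {y : V | ‖resid p0 u k y‖ ≤ 0} = 0 := by
  set W := Submodule.span ℝ (u '' Set.Icc 1 k) with hW
  have hsub : {y : V | ‖resid p0 u k y‖ ≤ 0} ⊆ {y : V | y - p0 ∈ W} := by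
    intro y hy
    have h0 : resid p0 u k y = 0 := by
      have := le_antisymm hy (norm_nonneg _)
      exact norm_eq_zero.1 this
    unfold resid at h0
    have hyd : y - p0 = ∑ l ∈ Finset.Icc 1 k, ⟪y - p0, u l⟫ • u l := sub_eq_zero.1 h0
    rw [Set.mem_setOf_eq, hyd]
    apply Submodule.sum_mem
    intro l hl
    apply Submodule.smul_mem
    apply Submodule.subset_span
    exact ⟨l, by simpa using hl, rfl⟩
  refine le_antisymm (le_trans (measure_mono hsub) ?_) zero_le
  have heq : {y : V | y - p0 ∈ W} = (fun y : V => y + (-p0)) ⁻¹' W := by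
    ext y; simp [sub_eq_add_neg]
  rw [heq, measure_preimage_add_right]
  exact le_of_eq (Measure.addHaar_submodule _ W (span_ne_top u k hk))


-- linear map from matrix rows of inner products
def innermap (u : ℕ → V) : V →ₗ[ℝ] V where
  toFun := fun y => WithLp.toLp 2 (fun j : Fin n => ⟪u (j.val+1), y⟫ : Fin n → ℝ)
  map_add' := by
    intro x y
    ext j
    simp [inner_add_right]
  map_smul' := by
    intro c x
    ext j
    simp [inner_smul_right]

example (u : ℕ → V) (y : V) (j : Fin n) : innermap u y j = ⟪u (j.val+1), y⟫ := rfl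

-- matrix of innermap
lemma innermap_toMatrix (u : ℕ → V) :
    LinearMap.toMatrix (EuclideanSpace.basisFun (Fin n) ℝ).toBasis
      (EuclideanSpace.basisFun (Fin n) ℝ).toBasis (innermap u)
    = Matrix.of (fun i j : Fin n => u (i.val+1) j) := by
  ext i j
  rw [LinearMap.toMatrix_apply]
  simp only [OrthonormalBasis.coe_toBasis, OrthonormalBasis.coe_toBasis_repr_apply]
  rw [EuclideanSpace.basisFun_apply]
  show ⟪u (i.val+1), EuclideanSpace.single j 1⟫ = _
  rw [EuclideanSpace.inner_single_right]
  simp [Matrix.of_apply]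



lemma inner_eq_sum (x y : V) : ⟪x, y⟫ = ∑ j, x j * y j := by
  rw [PiLp.inner_apply]; simp [RCLike.inner_apply]
  exact Finset.sum_congr rfl fun _ _ => mul_comm _ _


lemma huo' (u : ℕ → V) (huo : ∀ i j, 1 ≤ i → i < j → j ≤ n → ⟪u i, u j⟫ = 0) :
    ∀ i j, 1 ≤ i → 1 ≤ j → i ≤ n → j ≤ n → i ≠ j → ⟪u i, u j⟫ = 0 := by
  intro i j h1 h2 h3 h4 h5
  rcases lt_or_gt_of_ne h5 with h | h
  · exact huo i j h1 h h4
  · rw [real_inner_comm]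
    exact huo j i h2 h h3

lemma A_mul_At (u : ℕ → V) (hu1 : ∀ i, 1 ≤ i → i ≤ n → ‖u i‖ = 1)
    (huo : ∀ i j, 1 ≤ i → i < j → j ≤ n → ⟪u i, u j⟫ = 0) :
    (Matrix.of (fun i j : Fin n => u (i.val+1) j)) * (Matrix.of (fun i j : Fin n => u (i.val+1) j)).transpose
      = 1 := by
  ext i k
  rw [Matrix.mul_apply, Matrix.one_apply]
  have hs : ∑ j, (Matrix.of (fun i j : Fin n => u (i.val+1) j)) i j *
      (Matrix.of (fun i j : Fin n => u (i.val+1) j)).transpose j k = ⟪u (i.val+1), u (k.val+1)⟫ := by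
    rw [inner_eq_sum]
    congr 1
  rw [hs]
  by_cases h : i = k
  · subst h
    simp only [if_pos rfl]
    rw [real_inner_self_eq_norm_sq, hu1 (i.val+1) (by omega) (by omega : i.val+1 ≤ n)]
    norm_num
  · rw [if_neg h]
    have hne : i.val + 1 ≠ k.val + 1 := by
      intro hc
      exact h (Fin.ext (by omega))
    exact huo' u huo (i.val+1) (k.val+1) (by omega) (by omega) (by omega) (by omega) hne

lemma abs_detA (u : ℕ → V) (hu1 : ∀ i, 1 ≤ i → i ≤ n → ‖u i‖ = 1)
    (huo : ∀ i j, 1 ≤ i → i < j → j ≤ n → ⟪u i, u j⟫ = 0) :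
    |(Matrix.of (fun i j : Fin n => u (i.val+1) j)).det| = 1 := by
  have h := congrArg Matrix.det (A_mul_At u hu1 huo)
  rw [Matrix.det_mul, Matrix.det_transpose, Matrix.det_one] at h
  rcases mul_self_eq_one_iff.1 h with h' | h' <;> rw [h'] <;> norm_num

lemma innermap_det (u : ℕ → V) (hu1 : ∀ i, 1 ≤ i → i ≤ n → ‖u i‖ = 1)
    (huo : ∀ i j, 1 ≤ i → i < j → j ≤ n → ⟪u i, u j⟫ = 0) :
    |LinearMap.det (innermap u)| = 1 := by
  rw [← LinearMap.det_toMatrix (EuclideanSpace.basisFun (Fin n) ℝ).toBasis, innermap_toMatrix]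
  exact abs_detA u hu1 huo

lemma innermap_preimage (u : ℕ → V) (hu1 : ∀ i, 1 ≤ i → i ≤ n → ‖u i‖ = 1)
    (huo : ∀ i j, 1 ≤ i → i < j → j ≤ n → ⟪u i, u j⟫ = 0) (s : Set V) :
    volume (innermap u ⁻¹' s) = volume s := by
  have hdet : LinearMap.det (innermap u) ≠ 0 := by
    intro h
    have h2 := innermap_det u hu1 huo
    rw [h] at h2
    norm_num at h2
  rw [Measure.addHaar_preimage_linearMap volume hdet]
  have h3 : |(LinearMap.det (innermap u))⁻¹| = 1 := by
    rw [abs_inv, innermap_det u hu1 huo]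
    norm_num
  rw [h3]
  simp


lemma box_vol (p0 : V) (u : ℕ → V) (hu1 : ∀ i, 1 ≤ i → i ≤ n → ‖u i‖ = 1)
    (huo : ∀ i j, 1 ≤ i → i < j → j ≤ n → ⟪u i, u j⟫ = 0) (r : ℕ → ℝ) :
    volume {y : V | ∀ i, 1 ≤ i → i ≤ n → |⟪y - p0, u i⟫| ≤ r i}
      = ∏ i ∈ Finset.Icc 1 n, ENNReal.ofReal (2 * r i) := by
  set Bx : Set V := {z : V | ∀ j : Fin n, |z j| ≤ r (j.val+1)} with hBx
  have hset : {y : V | ∀ i, 1 ≤ i → i ≤ n → |⟪y - p0, u i⟫| ≤ r i}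
      = (fun y : V => y + (-p0)) ⁻¹' (innermap u ⁻¹' Bx) := by
    ext y
    simp only [Set.mem_setOf_eq, Set.mem_preimage]
    constructor
    · intro h j
      show |innermap u (y + -p0) j| ≤ _
      have h1 : innermap u (y + -p0) j = ⟪u (j.val+1), y - p0⟫ := by
        rw [sub_eq_add_neg]
        rfl
      rw [h1, real_inner_comm]
      exact h (j.val+1) (by omega) (by omega)
    · intro h i h1 h2
      have hj : i - 1 < n := by omega
      have h3 := h ⟨i-1, hj⟩
      have hval : (⟨i-1, hj⟩ : Fin n).val + 1 = i := by
        simp only []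
        omega
      have h4 : innermap u (y + -p0) (⟨i-1, hj⟩ : Fin n) = ⟪u i, y - p0⟫ := by
        show ⟪u ((⟨i-1, hj⟩ : Fin n).val + 1), y + -p0⟫ = _
        rw [hval, sub_eq_add_neg]
      have h5 : |(innermap u (y + -p0)) (⟨i-1, hj⟩ : Fin n)| ≤ r ((⟨i-1, hj⟩ : Fin n).val + 1) := h3
      rw [h4, hval] at h5
      rw [real_inner_comm] at h5
      exact h5
  rw [hset, measure_preimage_add_right, innermap_preimage u hu1 huo]
  have hBxeq : Bx = (MeasurableEquiv.toLp 2 (Fin n → ℝ)).symm ⁻¹'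
      (Set.univ.pi fun j : Fin n => Set.Icc (-(r (j.val+1))) (r (j.val+1))) := by
    ext z
    simp only [hBx, Set.mem_setOf_eq, Set.mem_preimage, Set.mem_pi, Set.mem_univ,
      forall_true_left, Set.mem_Icc]
    have hz : ∀ j : Fin n, ((MeasurableEquiv.toLp 2 (Fin n → ℝ)).symm z) j = z j := fun _ => rfl
    simp only [hz]
    constructor
    · intro h j
      have := h j
      rw [abs_le] at this
      exact ⟨by linarith [this.1], this.2⟩
    · intro h j
      rw [abs_le]
      have := h j
      exact ⟨by linarith [this.1], this.2⟩
  rw [hBxeq, (EuclideanSpace.volume_preserving_symm_measurableEquiv_toLp (Fin n)).measure_preimage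
    ((MeasurableSet.univ_pi (fun j => measurableSet_Icc)).nullMeasurableSet)]
  rw [volume_pi_pi]
  have hIcc : ∀ j : Fin n, volume (Set.Icc (-(r (j.val+1))) (r (j.val+1)))
      = ENNReal.ofReal (2 * r (j.val+1)) := by
    intro j
    rw [Real.volume_Icc]
    congr 1
    ring
  rw [Finset.prod_congr rfl (fun j _ => hIcc j)]
  have hmap : Finset.Icc 1 n = Finset.map ⟨fun i => i+1, fun a b h => by simpa using h⟩ (Finset.range n) := by
    ext x
    simp only [Finset.mem_Icc, Finset.mem_map, Finset.mem_range, Function.Embedding.coeFn_mk]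
    constructor
    · intro h
      exact ⟨x - 1, by omega, by show x - 1 + 1 = x; omega⟩
    · rintro ⟨a, ha, rfl⟩
      show 1 ≤ a + 1 ∧ a + 1 ≤ n; omega
  rw [hmap, Finset.prod_map]
  rw [Fin.prod_univ_eq_prod_range (fun i => ENNReal.ofReal (2 * r (i+1))) n]
  rfl

lemma orth_of_span (u : ℕ → V) (huo : ∀ i j, 1 ≤ i → i < j → j ≤ n → ⟪u i, u j⟫ = 0)
    (a b : ℕ) (hbn : b ≤ n) (hab : a < b) (x : V)
    (hx : x ∈ Submodule.span ℝ (u '' Set.Icc 1 a)) : ⟪x, u b⟫ = 0 := by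
  induction hx using Submodule.span_induction with
  | mem y hy =>
    obtain ⟨l, hl, rfl⟩ := hy
    rw [Set.mem_Icc] at hl
    exact huo l b hl.1 (by omega) hbn
  | zero => simp
  | add x y hx hy ihx ihy => rw [inner_add_left, ihx, ihy]; ring
  | smul c x hx ihx => rw [real_inner_smul_left, ihx]; ring

lemma det_eq_prod (p : ℕ → V) (u : ℕ → V) (hu1 : ∀ i, 1 ≤ i → i ≤ n → ‖u i‖ = 1)
    (huo : ∀ i j, 1 ≤ i → i < j → j ≤ n → ⟪u i, u j⟫ = 0)
    (hspan : ∀ i, 1 ≤ i → i ≤ n → p i - p 0 ∈ Submodule.span ℝ (u '' Set.Icc 1 i)) :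
    |(Matrix.of fun i j : Fin n => (p (i.val+1) - p 0) j).det|
      = ∏ i ∈ Finset.Icc 1 n, |⟪p i - p 0, u i⟫| := by
  classical
  set M := Matrix.of fun i j : Fin n => (p (i.val+1) - p 0) j with hM
  set A := Matrix.of (fun i j : Fin n => u (i.val+1) j) with hA
  have hBij : ∀ i l : Fin n, (M * A.transpose) i l = ⟪p (i.val+1) - p 0, u (l.val+1)⟫ := by
    intro i l
    rw [Matrix.mul_apply, inner_eq_sum]
    congr 1
  have htri : (M * A.transpose).BlockTriangular OrderDual.toDual := by
    intro i l h
    have hil : (i : ℕ) < (l : ℕ) := h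
    rw [hBij]
    exact orth_of_span u huo (i.val+1) (l.val+1) (by omega) (by omega) _
      (hspan (i.val+1) (by omega) (by omega))
  have hdetB : (M * A.transpose).det = ∏ i, (M * A.transpose) i i :=
    Matrix.det_of_lowerTriangular _ htri
  have habs : |M.det| = |(M * A.transpose).det| := by
    rw [Matrix.det_mul, Matrix.det_transpose, abs_mul, abs_detA u hu1 huo, mul_one]
  rw [habs, hdetB, Finset.abs_prod]
  have hdg : ∀ i : Fin n, |(M * A.transpose) i i| = |⟪p (i.val+1) - p 0, u (i.val+1)⟫| := by
    intro i
    rw [hBij]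
  rw [Finset.prod_congr rfl (fun i _ => hdg i)]
  have hmap : Finset.Icc 1 n = Finset.map ⟨fun i => i+1, fun a b h => by simpa using h⟩ (Finset.range n) := by
    ext x
    simp only [Finset.mem_Icc, Finset.mem_map, Finset.mem_range, Function.Embedding.coeFn_mk]
    constructor
    · intro h
      exact ⟨x - 1, by omega, by show x - 1 + 1 = x; omega⟩
    · rintro ⟨a, ha, rfl⟩
      show 1 ≤ a + 1 ∧ a + 1 ≤ n; omega
  rw [hmap, Finset.prod_map]
  rw [Fin.prod_univ_eq_prod_range (fun i => |⟪p (i+1) - p 0, u (i+1)⟫|) n]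
  rfl



/-- stage constant -/
def stagec (θ : ℝ) : ℝ := 1/(16 * ((⌊2/θ^2⌋₊ : ℝ) + 1))

lemma stagec_pos (θ : ℝ) : 0 < stagec θ := by
  unfold stagec
  have : (0:ℝ) ≤ (⌊2/θ^2⌋₊ : ℝ) := Nat.cast_nonneg _
  positivity

def thet (c : ℝ) : ℕ → ℝ
  | 0 => c
  | (j+1) => (thet c j)^2/2

def kap (c : ℝ) : ℕ → ℝ
  | 0 => 1
  | (j+1) => stagec (thet c j) * kap c j

def bet (c : ℝ) : ℕ → ℝ
  | 0 => 1
  | (j+1) => thet c j * bet c j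

lemma thet_pos {c : ℝ} (hc : 0 < c) : ∀ j, 0 < thet c j := by
  intro j
  induction j with
  | zero => exact hc
  | succ j ih => unfold thet; positivity

lemma kap_pos {c : ℝ} (hc : 0 < c) : ∀ j, 0 < kap c j := by
  intro j
  induction j with
  | zero => norm_num [kap]
  | succ j ih =>
    unfold kap
    exact mul_pos (stagec_pos _) ih

lemma bet_pos {c : ℝ} (hc : 0 < c) : ∀ j, 0 < bet c j := by
  intro j
  induction j with
  | zero => norm_num [bet]
  | succ j ih =>
    unfold bet
    exact mul_pos (thet_pos hc j) ih

structure St {X : Type*} [MeasurableSpace X] (μ : Measure X) {n : ℕ}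
    (S : Set (EuclideanSpace ℝ (Fin n))) (Ex : EuclideanSpace ℝ (Fin n) → Set X)
    (c : ℝ) (k : ℕ) where
  C : Set (EuclideanSpace ℝ (Fin n))
  F : Set X
  p : ℕ → EuclideanSpace ℝ (Fin n)
  u : ℕ → EuclideanSpace ℝ (Fin n)
  hFm : MeasurableSet F
  hFβ : ENNReal.ofReal (bet c k) * μ Set.univ ≤ μ F
  hFle : μ F ≤ μ Set.univ
  hCS : C ⊆ S
  hCκ : ENNReal.ofReal (kap c k) * volume S ≤ volume C
  hdens : ∀ x ∈ C, ENNReal.ofReal (thet c k) * μ F ≤ μ (Ex x ∩ F)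
  hpS : ∀ i, i < k → p i ∈ S
  hFE : ∀ i, i < k → F ⊆ Ex (p i)
  hu1 : ∀ i, 1 ≤ i → i < k → ‖u i‖ = 1
  huo : ∀ i j, 1 ≤ i → i < j → j < k → ⟪u i, u j⟫ = 0
  hd : ∀ i, 1 ≤ i → i < k → 0 < ⟪p i - p 0, u i⟫
  hspan : ∀ i, 1 ≤ i → i < k → p i - p 0 ∈ Submodule.span ℝ (u '' Set.Icc 1 i)
  htube : ∀ i, 1 ≤ i → i < k → ∀ y ∈ C, |⟪y - p 0, u i⟫| ≤ 2 * ⟪p i - p 0, u i⟫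

lemma st_base {X : Type*} [MeasurableSpace X] (μ : Measure X) {n : ℕ}
    (S : Set (EuclideanSpace ℝ (Fin n))) (Ex : EuclideanSpace ℝ (Fin n) → Set X)
    (c : ℝ) (hEd : ∀ x ∈ S, ENNReal.ofReal c * μ Set.univ ≤ μ (Ex x)) :
    Nonempty (St μ S Ex c 0) := by
  refine ⟨⟨S, Set.univ, fun _ => 0, fun _ => 0, MeasurableSet.univ, ?_, le_refl _,
    subset_rfl, ?_, ?_, ?_, ?_, ?_, ?_, ?_, ?_, ?_⟩⟩
  · simp [bet]
  · simp [kap]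
  · intro x hx
    rw [Set.inter_univ]
    exact hEd x hx
  all_goals intro i <;> omega





lemma st_step {X : Type*} [MeasurableSpace X] (μ : Measure X) {n : ℕ} (hn : 0 < n)
    (S : Set (EuclideanSpace ℝ (Fin n))) (Ex : EuclideanSpace ℝ (Fin n) → Set X)
    (c : ℝ) (hc : 0 < c)
    (hμ0 : μ Set.univ ≠ 0) (hμt : μ Set.univ ≠ ⊤)
    (hS0 : volume S ≠ 0) (hSt : volume S ≠ ⊤)
    (hEx : ∀ x ∈ S, MeasurableSet (Ex x))
    (k : ℕ) (hk : k ≤ n) (st : St μ S Ex c k) : Nonempty (St μ S Ex c (k+1)) := by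
  classical
  obtain ⟨C, F, p, u, hFm, hFβ, hFle, hCS, hCκ, hdens, hpS, hFE, hu1, huo, hd, hspan, htube⟩ := st
  set θ := thet c k with hθ
  have hθ0 : 0 < θ := thet_pos hc k
  set Q : EuclideanSpace ℝ (Fin n) → ℝ := fun y => ‖resid (p 0) u (k-1) y‖ with hQdef
  have hk1n : k - 1 < n := by omega
  have hF0 : μ F ≠ 0 := by
    intro h
    rw [h] at hFβ
    have h2 : ENNReal.ofReal (bet c k) * μ Set.univ = 0 := le_antisymm hFβ zero_le
    rcases mul_eq_zero.1 h2 with h' | h'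
    · rw [ENNReal.ofReal_eq_zero] at h'
      exact absurd h' (not_le.2 (bet_pos hc k))
    · exact hμ0 h'
  have hFt : μ F ≠ ⊤ := (lt_of_le_of_lt hFle (lt_top_iff_ne_top.2 hμt)).ne
  have hC0 : volume C ≠ 0 := by
    intro h
    rw [h] at hCκ
    have h2 : ENNReal.ofReal (kap c k) * volume S = 0 := le_antisymm hCκ zero_le
    rcases mul_eq_zero.1 h2 with h' | h'
    · rw [ENNReal.ofReal_eq_zero] at h'
      exact absurd h' (not_le.2 (kap_pos hc k))
    · exact hS0 h'
  have hCt : volume C ≠ ⊤ := (lt_of_le_of_lt (measure_mono hCS) (lt_top_iff_ne_top.2 hSt)).ne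
  obtain ⟨pk, hpkC, C', hC'sub, hQpk, htubeC', hpair, hvol⟩ :=
    stage_pick volume μ Ex F hFm hF0 hFt C (fun x hx => hEx x (hCS hx)) hC0 hCt θ hθ0
      hdens Q (resid_meas _ _ _) (resid_null _ _ _ hk1n)
  set R := resid (p 0) u (k-1) pk with hR
  set d : ℝ := Q pk with hdd
  have hd0 : 0 < d := hQpk
  have hdR : ‖R‖ = d := rfl
  set uk := d⁻¹ • R with huk
  set pnew := Function.update p k pk with hpnew
  set unew := Function.update u k uk with hunew
  -- update facts
  have hpold : ∀ i, i ≠ k → pnew i = p i := by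
    intro i hi
    rw [hpnew, Function.update_apply, if_neg hi]
  have huold : ∀ i, i ≠ k → unew i = u i := by
    intro i hi
    rw [hunew, Function.update_apply, if_neg hi]
  have hpk_eq : pnew k = pk := by rw [hpnew]; simp
  have huk_eq : unew k = uk := by rw [hunew]; simp
  -- both-order orthonormality of the old u's
  have huo2 : ∀ i j, 1 ≤ i → 1 ≤ j → i < k → j < k → i ≠ j → ⟪u i, u j⟫ = 0 := by
    intro i j h1 h2 h3 h4 h5
    rcases lt_or_gt_of_ne h5 with h | h
    · exact huo i j h1 h h4
    · rw [real_inner_comm]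
      exact huo j i h2 h h3
  -- decomposition of y - p 0
  have hdec : ∀ y, y - p 0 = resid (p 0) u (k-1) y + ∑ l ∈ Finset.Icc 1 (k-1), ⟪y - p 0, u l⟫ • u l := by
    intro y
    unfold resid
    rw [sub_add_cancel]
  -- old u's are orthogonal to residuals
  have hRorth : ∀ y, ∀ i, 1 ≤ i → i ≤ k - 1 → ⟪u i, resid (p 0) u (k-1) y⟫ = 0 := by
    intro y i h1 h2
    unfold resid
    rw [inner_sub_right, inner_sum]
    have hsum : ∑ l ∈ Finset.Icc 1 (k-1), ⟪u i, ⟪y - p 0, u l⟫ • u l⟫ = ⟪y - p 0, u i⟫ := by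
      rw [Finset.sum_eq_single i]
      · rw [real_inner_smul_right, real_inner_self_eq_norm_sq,
          hu1 i h1 (by omega), one_pow, mul_one]
      · intro l hl hli
        rw [Finset.mem_Icc] at hl
        rw [real_inner_smul_right, huo2 i l h1 hl.1 (by omega) (by omega) (Ne.symm hli), mul_zero]
      · intro hni
        exact absurd (Finset.mem_Icc.2 ⟨h1, h2⟩) hni
    rw [hsum, real_inner_comm, sub_self]
  -- facts about the new vector uk
  have hukn : ‖uk‖ = 1 := by
    rw [huk, norm_smul, hdR, Real.norm_eq_abs, abs_inv, abs_of_pos hd0, inv_mul_cancel₀ hd0.ne']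
  have hiuk : ∀ i, 1 ≤ i → i < k → ⟪u i, uk⟫ = 0 := by
    intro i h1 h2
    rw [huk, real_inner_smul_right, hRorth pk i h1 (by omega), mul_zero]
  have hsumuk : ∀ y, ⟪∑ l ∈ Finset.Icc 1 (k-1), ⟪y - p 0, u l⟫ • u l, uk⟫ = 0 := by
    intro y
    rw [sum_inner]
    apply Finset.sum_eq_zero
    intro l hl
    rw [Finset.mem_Icc] at hl
    rw [real_inner_smul_left, hiuk l hl.1 (by omega), mul_zero]
  have hinneruk : ∀ y, ⟪y - p 0, uk⟫ = ⟪resid (p 0) u (k-1) y, uk⟫ := by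
    intro y
    conv_lhs => rw [hdec y]
    rw [inner_add_left, hsumuk y, add_zero]
  have hdk : ⟪pk - p 0, uk⟫ = d := by
    rw [hinneruk pk, ← hR, huk, real_inner_smul_right, real_inner_self_eq_norm_sq, hdR]
    field_simp [hd0.ne']
  have htubek : ∀ y ∈ C', |⟪y - p 0, uk⟫| ≤ 2 * d := by
    intro y hy
    rw [hinneruk y]
    calc |⟪resid (p 0) u (k-1) y, uk⟫| ≤ ‖resid (p 0) u (k-1) y‖ * ‖uk‖ :=
          abs_real_inner_le_norm _ _
      _ = Q y := by rw [hukn, mul_one]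
      _ ≤ 2 * Q pk := htubeC' y hy
      _ = 2 * d := rfl
  -- assemble the new state
  refine ⟨⟨C', Ex pk ∩ F, pnew, unew, (hEx pk (hCS hpkC)).inter hFm, ?_, ?_,
    fun y hy => hCS (hC'sub hy), ?_, ?_, ?_, ?_, ?_, ?_, ?_, ?_, ?_⟩⟩
  · -- hFβ
    calc ENNReal.ofReal (bet c (k+1)) * μ Set.univ
        = ENNReal.ofReal θ * (ENNReal.ofReal (bet c k) * μ Set.univ) := by
          rw [← mul_assoc, ← ENNReal.ofReal_mul hθ0.le]
          rfl
      _ ≤ ENNReal.ofReal θ * μ F := mul_le_mul_right hFβ _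
      _ ≤ μ (Ex pk ∩ F) := hdens pk hpkC
  · -- hFle
    exact le_trans (measure_mono Set.inter_subset_right) hFle
  · -- hCκ
    calc ENNReal.ofReal (kap c (k+1)) * volume S
        = ENNReal.ofReal (stagec θ) * (ENNReal.ofReal (kap c k) * volume S) := by
          rw [← mul_assoc, ← ENNReal.ofReal_mul (stagec_pos θ).le]
          rfl
      _ ≤ ENNReal.ofReal (stagec θ) * volume C := mul_le_mul_right hCκ _
      _ = ENNReal.ofReal (1/(16 * ((⌊2/θ^2⌋₊ : ℝ) + 1))) * volume C := rfl
      _ ≤ volume C' := hvol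
  · -- hdens
    intro y hy
    have h1 : Ex y ∩ (Ex pk ∩ F) = Ex y ∩ Ex pk ∩ F := by rw [Set.inter_assoc]
    rw [h1]
    calc ENNReal.ofReal (thet c (k+1)) * μ (Ex pk ∩ F)
        = ENNReal.ofReal (θ^2/2) * μ (Ex pk ∩ F) := rfl
      _ ≤ ENNReal.ofReal (θ^2/2) * μ F := mul_le_mul_right (measure_mono Set.inter_subset_right) _
      _ ≤ μ (Ex y ∩ Ex pk ∩ F) := hpair y hy
  · -- hpS
    intro i hi
    rcases Nat.lt_or_ge i k with h | h
    · rw [hpold i h.ne]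
      exact hpS i h
    · have : i = k := by omega
      rw [this, hpk_eq]
      exact hCS hpkC
  · -- hFE
    intro i hi
    rcases Nat.lt_or_ge i k with h | h
    · rw [hpold i h.ne]
      exact le_trans Set.inter_subset_right (hFE i h)
    · have : i = k := by omega
      rw [this, hpk_eq]
      exact Set.inter_subset_left
  · -- hu1
    intro i h1 h2
    rcases Nat.lt_or_ge i k with h | h
    · rw [huold i h.ne]
      exact hu1 i h1 h
    · have : i = k := by omega
      rw [this, huk_eq]
      exact hukn
  · -- huo
    intro i j h1 h2 h3
    rcases Nat.lt_or_ge j k with h | h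
    · rw [huold i (by omega), huold j h.ne]
      exact huo i j h1 h2 h
    · have hj : j = k := by omega
      rw [hj, huk_eq, huold i (by omega)]
      exact hiuk i h1 (by omega)
  · -- hd
    intro i h1 h2
    have h0k : (0:ℕ) ≠ k := by omega
    rcases Nat.lt_or_ge i k with h | h
    · rw [hpold i h.ne, hpold 0 h0k, huold i h.ne]
      exact hd i h1 h
    · have : i = k := by omega
      rw [this, hpk_eq, huk_eq, hpold 0 h0k, hdk]
      exact hd0
  · -- hspan
    intro i h1 h2
    have h0k : (0:ℕ) ≠ k := by omega
    rcases Nat.lt_or_ge i k with h | h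
    · rw [hpold i h.ne, hpold 0 h0k]
      have himg : unew '' Set.Icc 1 i = u '' Set.Icc 1 i := by
        apply Set.image_congr
        intro l hl
        rw [Set.mem_Icc] at hl
        exact huold l (by omega)
      rw [himg]
      exact hspan i h1 h
    · have hik : i = k := by omega
      rw [hik, hpk_eq, hpold 0 h0k]
      have hdecpk := hdec pk
      rw [hdecpk, ← hR]
      apply Submodule.add_mem
      · have : R = d • uk := by
          rw [huk, smul_smul, mul_inv_cancel₀ hd0.ne', one_smul]
        rw [this]
        apply Submodule.smul_mem
        apply Submodule.subset_span
        exact ⟨k, Set.mem_Icc.2 ⟨by omega, le_refl k⟩, huk_eq⟩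
      · apply Submodule.sum_mem
        intro l hl
        rw [Finset.mem_Icc] at hl
        apply Submodule.smul_mem
        apply Submodule.subset_span
        refine ⟨l, Set.mem_Icc.2 ⟨hl.1, by omega⟩, ?_⟩
        exact huold l (by omega)
  · -- htube
    intro i h1 h2 y hy
    have h0k : (0:ℕ) ≠ k := by omega
    rcases Nat.lt_or_ge i k with h | h
    · rw [hpold i h.ne, hpold 0 h0k, huold i h.ne]
      exact htube i h1 h y (hC'sub hy)
    · have hik : i = k := by omega
      rw [hik, hpk_eq, hpold 0 h0k, huk_eq, hdk]
      exact htubek y hy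


lemma st_all {X : Type*} [MeasurableSpace X] (μ : Measure X) {n : ℕ} (hn : 0 < n)
    (S : Set (EuclideanSpace ℝ (Fin n))) (Ex : EuclideanSpace ℝ (Fin n) → Set X)
    (c : ℝ) (hc : 0 < c)
    (hμ0 : μ Set.univ ≠ 0) (hμt : μ Set.univ ≠ ⊤)
    (hS0 : volume S ≠ 0) (hSt : volume S ≠ ⊤)
    (hEx : ∀ x ∈ S, MeasurableSet (Ex x))
    (hEd : ∀ x ∈ S, ENNReal.ofReal c * μ Set.univ ≤ μ (Ex x)) :
    ∀ k, k ≤ n + 1 → Nonempty (St μ S Ex c k) := by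
  intro k
  induction k with
  | zero => exact fun _ => st_base μ S Ex c hEd
  | succ k ih =>
    intro hk
    obtain ⟨st⟩ := ih (by omega)
    exact st_step μ hn S Ex c hc hμ0 hμt hS0 hSt hEx k (by omega) st

end S8

open MeasureTheory

/-- simplex-selection lemma. -/
theorem statement8 (c : ℝ) (hc : 0 < c) (n : ℕ) (hn : 1 ≤ n) :
    ∃ lam c' : ℝ, 0 < lam ∧ 0 < c' ∧
      ∀ (X : Type*) [MeasurableSpace X] (μ : Measure X),
        0 < μ Set.univ → μ Set.univ < ⊤ →
      ∀ S : Set (EuclideanSpace ℝ (Fin n)), MeasurableSet S →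
        0 < volume S → volume S < ⊤ →
      ∀ Ex : EuclideanSpace ℝ (Fin n) → Set X,
        (∀ x ∈ S, MeasurableSet (Ex x) ∧ ENNReal.ofReal c * μ Set.univ ≤ μ (Ex x)) →
        ∃ x : Fin (n + 1) → EuclideanSpace ℝ (Fin n),
          (∀ i, x i ∈ S) ∧
          ENNReal.ofReal c' * μ Set.univ ≤ μ (⋂ i, Ex (x i)) ∧
          lam * (volume S).toReal ≤
            |(Matrix.of fun i j : Fin n => (x i.succ - x 0) j).det| / (n.factorial : ℝ) := by
  classical
  have hkpos := S8.kap_pos hc (n+1)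
  have hbpos := S8.bet_pos hc (n+1)
  refine ⟨S8.kap c (n+1) / (4^n * n.factorial), S8.bet c (n+1), by positivity, hbpos, ?_⟩
  intro X _inst μ hμ0 hμt S hSmeas hS0 hSt Ex hExh
  have hEx : ∀ x ∈ S, MeasurableSet (Ex x) := fun x hx => (hExh x hx).1
  have hEd : ∀ x ∈ S, ENNReal.ofReal c * μ Set.univ ≤ μ (Ex x) := fun x hx => (hExh x hx).2
  obtain ⟨st⟩ := S8.st_all μ (by omega) S Ex c hc hμ0.ne' hμt.ne hS0.ne' hSt.ne hEx hEd
    (n+1) (le_refl _)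
  refine ⟨fun i => st.p i.val, fun i => st.hpS i.val i.isLt, ?_, ?_⟩
  · -- measure part
    have hsub : st.F ⊆ ⋂ i : Fin (n+1), Ex (st.p i.val) :=
      Set.subset_iInter (fun i => st.hFE i.val i.isLt)
    exact le_trans st.hFβ (measure_mono hsub)
  · -- geometry part
    set d : ℕ → ℝ := fun i => ⟪st.p i - st.p 0, st.u i⟫ with hddef
    have hdpos : ∀ i, 1 ≤ i → i ≤ n → 0 < d i := fun i h1 h2 => st.hd i h1 (by omega)
    have hu1 : ∀ i, 1 ≤ i → i ≤ n → ‖st.u i‖ = 1 := fun i h1 h2 => st.hu1 i h1 (by omega)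
    have huo : ∀ i j, 1 ≤ i → i < j → j ≤ n → ⟪st.u i, st.u j⟫ = 0 :=
      fun i j h1 h2 h3 => st.huo i j h1 h2 (by omega)
    have hbox : st.C ⊆ {y | ∀ i, 1 ≤ i → i ≤ n → |⟪y - st.p 0, st.u i⟫| ≤ 2 * d i} := by
      intro y hy
      intro i h1 h2
      exact st.htube i h1 (by omega) y hy
    have hvol1 : ENNReal.ofReal (S8.kap c (n+1)) * volume S ≤
        ∏ i ∈ Finset.Icc 1 n, ENNReal.ofReal (2 * (2 * d i)) := by
      calc ENNReal.ofReal (S8.kap c (n+1)) * volume S ≤ volume st.C := st.hCκ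
        _ ≤ volume {y | ∀ i, 1 ≤ i → i ≤ n → |⟪y - st.p 0, st.u i⟫| ≤ 2 * d i} :=
            measure_mono hbox
        _ = ∏ i ∈ Finset.Icc 1 n, ENNReal.ofReal (2 * (2 * d i)) :=
            S8.box_vol (st.p 0) st.u hu1 huo (fun i => 2 * d i)
    have hpnn : ∀ i ∈ Finset.Icc 1 n, (0:ℝ) ≤ 2 * (2 * d i) := by
      intro i hi
      rw [Finset.mem_Icc] at hi
      have := hdpos i hi.1 hi.2
      positivity
    have hprod_nn : (0:ℝ) ≤ ∏ i ∈ Finset.Icc 1 n, 2 * (2 * d i) :=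
      Finset.prod_nonneg hpnn
    have hreal : S8.kap c (n+1) * (volume S).toReal ≤ ∏ i ∈ Finset.Icc 1 n, (2*(2*d i)) := by
      rw [← ENNReal.ofReal_prod_of_nonneg hpnn] at hvol1
      have h2 := ENNReal.toReal_mono ENNReal.ofReal_ne_top hvol1
      rw [ENNReal.toReal_mul, ENNReal.toReal_ofReal hkpos.le,
        ENNReal.toReal_ofReal hprod_nn] at h2
      exact h2
    have hdet : |(Matrix.of fun i j : Fin n =>
        ((fun i : Fin (n+1) => st.p i.val) i.succ - (fun i : Fin (n+1) => st.p i.val) 0) j).det|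
        = ∏ i ∈ Finset.Icc 1 n, |d i| := by
      have hMeq : (Matrix.of fun i j : Fin n =>
          ((fun i : Fin (n+1) => st.p i.val) i.succ - (fun i : Fin (n+1) => st.p i.val) 0) j)
          = (Matrix.of fun i j : Fin n => (st.p (i.val+1) - st.p 0) j) := by
        ext i j
        simp only [Matrix.of_apply, Fin.val_succ, Fin.val_zero]
      rw [hMeq]
      exact S8.det_eq_prod st.p st.u hu1 huo (fun i h1 h2 => st.hspan i h1 (by omega))
    have habs : ∏ i ∈ Finset.Icc 1 n, |d i| = ∏ i ∈ Finset.Icc 1 n, d i := by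
      apply Finset.prod_congr rfl
      intro i hi
      rw [Finset.mem_Icc] at hi
      exact abs_of_pos (hdpos i hi.1 hi.2)
    have hsplit : ∏ i ∈ Finset.Icc 1 n, (2*(2*d i)) = 4^n * ∏ i ∈ Finset.Icc 1 n, d i := by
      have h1 : ∀ i ∈ Finset.Icc 1 n, 2*(2*d i) = 4 * d i := by intro i _; ring
      rw [Finset.prod_congr rfl h1, Finset.prod_mul_distrib, Finset.prod_const,
        Nat.card_Icc]
      norm_num
    rw [hdet, habs]
    have hfac : (0:ℝ) < (n.factorial : ℝ) := by
      exact_mod_cast Nat.factorial_pos n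
    have h4n : (0:ℝ) < 4^n := by positivity
    rw [hsplit] at hreal
    rw [div_mul_eq_mul_div, div_le_div_iff₀ (by positivity) hfac]
    -- goal: kap * sR * n! ≤ (∏ d) * (4^n * n!)
    calc S8.kap c (n+1) * (volume S).toReal * (n.factorial : ℝ)
        ≤ (4^n * ∏ i ∈ Finset.Icc 1 n, d i) * (n.factorial : ℝ) := by
          exact mul_le_mul_of_nonneg_right hreal hfac.le
      _ = (∏ i ∈ Finset.Icc 1 n, d i) * (4^n * (n.factorial : ℝ)) := by ring
end
end
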